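/- arXiv:1606.04642 — 9 statements merged into one kernel-verified Lean document; each statement's English description precedes it below -/
import Mathlib

section
/- Let m : ℕ → ℕ with m 0 = 0 and let a : Fin n → ℕ (indexed 1..n) satisfy ∑ i, i * a i = n. Then the number of M-assemblies of size n with type a (i.e., a i components of size i, each component of size i decorated in one of m i ways) is N(n,a) = n! * ∏ i, m(i)^(a i) / (a i ! * (i!)^(a i)). In particular, for set partitions (m i = 1 for all i ≥ 1), the number of set partitions of [n] with a i blocks of size i equals n! / ∏ i (a i ! * (i!)^(a i)). -/
open Finset
open scoped Nat

namespace Stmt0Aux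

variable {α : Type*} [DecidableEq α]

lemma parts_avoid_of_mem {s t : Finset α} (P : Finpartition s) (ht : t ∈ P.parts) :
    (P.avoid t).parts = P.parts.erase t := by
  ext c
  rw [Finpartition.mem_avoid, mem_erase]
  constructor
  · rintro ⟨d, hd, hdt, rfl⟩
    have hne : d ≠ t := fun h => hdt (h ▸ le_refl t)
    have hdisj : Disjoint d t := P.disjoint hd ht hne
    rw [Finset.sdiff_eq_self_of_disjoint hdisj]
    exact ⟨hne, hd⟩
  · rintro ⟨hne, hc⟩
    have hdisj : Disjoint c t := P.disjoint hc ht hne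
    refine ⟨c, hc, fun hle => ?_, Finset.sdiff_eq_self_of_disjoint hdisj⟩
    exact P.ne_bot hc (le_bot_iff.mp (hdisj le_rfl hle))

/-- Step equivalence: partitions of `s` whose part containing `x` is `t`,
versus partitions of `s \ t`. -/
noncomputable def stepEquiv {s t : Finset α} {x : α} (hx : x ∈ t) (hts : t ⊆ s)
    (q : Finset (Finset α) → Prop) :
    {P : Finpartition s // q P.parts ∧ P.part x = t} ≃
      {Q : Finpartition (s \ t) // q (insert t Q.parts)} where
  toFun P := ⟨P.1.avoid t, by
    have htm : t ∈ P.1.parts := by have h := P.1.part_mem.mpr (hts hx); rwa [P.2.2] at h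
    rw [parts_avoid_of_mem P.1 htm, insert_erase htm]
    exact P.2.1⟩
  invFun Q := by
    refine ⟨Q.1.extend (b := t) ?_ ?_ ?_, ?_, ?_⟩
    · exact (Finset.nonempty_iff_ne_empty.mp ⟨x, hx⟩)
    · exact sdiff_disjoint
    · exact sdiff_sup_cancel hts
    · rw [Finpartition.extend_parts]; exact Q.2
    · exact Finpartition.part_eq_of_mem _ (mem_insert_self t _) hx
  left_inv P := by
    have htm : t ∈ P.1.parts := by have h := P.1.part_mem.mpr (hts hx); rwa [P.2.2] at h
    apply Subtype.ext
    apply Finpartition.ext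
    rw [Finpartition.extend_parts, parts_avoid_of_mem P.1 htm, insert_erase htm]
  right_inv Q := by
    have htm : t ∉ Q.1.parts := by
      intro h
      have := Q.1.le h
      exact (mem_sdiff.mp (this hx)).2 hx
    apply Subtype.ext
    apply Finpartition.ext
    show (Finpartition.avoid _ t).parts = Q.1.parts
    rw [parts_avoid_of_mem _ (by rw [Finpartition.extend_parts]; exact mem_insert_self t _),
      Finpartition.extend_parts, erase_insert htm]


def cond (a : ℕ → ℕ) {s : Finset α} (P : Finpartition s) : Prop :=
  ∀ j, 1 ≤ j → (P.parts.filter fun b => b.card = j).card = a j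

/-- decrement `a` at `i` -/
def upd (i : ℕ) (a : ℕ → ℕ) : ℕ → ℕ := fun j => if j = i then a i - 1 else a j

lemma count_insert {t : Finset α} {u : Finset (Finset α)} (htm : t ∉ u) (j : ℕ) :
    ((insert t u).filter (fun b => b.card = j)).card
      = (u.filter (fun b => b.card = j)).card + (if t.card = j then 1 else 0) := by
  classical
  rw [filter_insert]
  split_ifs with h
  · rw [card_insert_of_notMem (fun hm => htm (mem_filter.mp hm).1)]
  · rfl

lemma condInsert_iff {t : Finset α} {u : Finset (Finset α)} (htm : t ∉ u)
    (hi : 1 ≤ t.card) (a : ℕ → ℕ) :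
    (∀ j, 1 ≤ j → ((insert t u).filter (fun b => b.card = j)).card = a j)
      ↔ (1 ≤ a t.card ∧
        ∀ j, 1 ≤ j → (u.filter (fun b => b.card = j)).card = upd t.card a j) := by
  constructor
  · intro h
    have hti := h t.card hi
    rw [count_insert htm, if_pos rfl] at hti
    constructor
    · omega
    · intro j hj
      have := h j hj
      rw [count_insert htm] at this
      unfold upd
      split_ifs with he
      · subst he; omega
      · rw [if_neg (fun hc => he hc.symm)] at this; omega
  · rintro ⟨h1, h⟩ j hj
    have := h j hj
    rw [count_insert htm]
    unfold upd at this
    split_ifs at this with he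
    · subst he; rw [if_pos rfl]; omega
    · rw [if_neg (fun hc => he hc.symm)]; omega

lemma card_subsets_mem {s : Finset α} {x : α} (hx : x ∈ s) {i : ℕ} (hi : 1 ≤ i) :
    (((s.powerset.filter (fun t => x ∈ t)).filter (fun t => t.card = i))).card
      = (s.card - 1).choose (i - 1) := by
  classical
  rw [← card_erase_of_mem hx, ← Finset.card_powersetCard]
  refine Finset.card_nbij' (fun t => t.erase x) (fun u => insert x u) ?_ ?_ ?_ ?_
  · intro t ht
    simp only [mem_coe, mem_filter, mem_powerset] at ht
    obtain ⟨⟨hts, hxt⟩, hcard⟩ := ht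
    rw [mem_coe, Finset.mem_powersetCard]
    refine ⟨fun y hy => mem_erase.mpr ⟨(mem_erase.mp hy).1, hts (mem_erase.mp hy).2⟩, ?_⟩
    rw [card_erase_of_mem hxt, hcard]
  · intro u hu
    rw [mem_coe, Finset.mem_powersetCard] at hu
    obtain ⟨hus, hucard⟩ := hu
    have hxu : x ∉ u := fun h => (mem_erase.mp (hus h)).1 rfl
    simp only [mem_coe, mem_filter, mem_powerset]
    refine ⟨⟨?_, mem_insert_self x u⟩, ?_⟩
    · intro y hy
      rcases mem_insert.mp hy with rfl | hyu
      · exact hx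
      · exact (erase_subset x s) (hus hyu)
    · rw [card_insert_of_notMem hxu, hucard]; omega
  · intro t ht
    simp only [mem_coe, mem_filter, mem_powerset] at ht
    exact insert_erase ht.1.2
  · intro u hu
    rw [mem_coe, Finset.mem_powersetCard] at hu
    have hxu : x ∉ u := fun h => (mem_erase.mp (hu.1 h)).1 rfl
    exact erase_insert hxu

end Stmt0Aux

namespace Stmt0Aux2
open Stmt0Aux

variable {α : Type*} [DecidableEq α]

def Gfun (n : ℕ) (a : ℕ → ℕ) (i : ℕ) : ℚ :=
  if a i = 0 then 0 else ((n - i)! : ℚ) /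
    ∏ j ∈ Icc 1 (n - i), (((upd i a j)! : ℚ) * ((j ! : ℚ)) ^ (upd i a j))

theorem main_count : ∀ (n : ℕ) (s : Finset α), s.card = n → ∀ a : ℕ → ℕ,
    (∑ j ∈ Icc 1 n, j * a j = n) → (∀ j, n < j → a j = 0) →
    (Nat.card {P : Finpartition s // cond a P} : ℚ)
      * ∏ j ∈ Icc 1 n, (((a j)! : ℚ) * ((j ! : ℚ)) ^ (a j)) = (n ! : ℚ) := by
  intro n
  induction n using Nat.strong_induction_on with
  | _ n IH =>
  intro s hs a ha h0
  rcases Nat.eq_zero_or_pos n with rfl | hn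
  · -- base case
    rw [Finset.card_eq_zero] at hs
    subst hs
    have hsub : Subsingleton (Finpartition (∅ : Finset α)) := by
      constructor
      intro P Q
      apply Finpartition.ext
      rw [Finpartition.parts_eq_empty_iff.mpr rfl, Finpartition.parts_eq_empty_iff.mpr rfl]
    have hcond : cond a (⊥ : Finpartition (∅ : Finset α)) := by
      intro j hj
      have : (⊥ : Finpartition (∅ : Finset α)).parts = ∅ :=
        Finpartition.parts_eq_empty_iff.mpr rfl
      rw [this, Finset.filter_empty, Finset.card_empty, h0 j hj]
    have : Nat.card {P : Finpartition (∅ : Finset α) // cond a P} = 1 := by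
      rw [Nat.card_eq_one_iff_unique]
      exact ⟨⟨fun P Q => Subtype.ext (hsub.allEq P.1 Q.1)⟩, ⟨⟨⊥, hcond⟩⟩⟩
    simp [this]
  · -- induction step
    classical
    obtain ⟨x, hxs⟩ : s.Nonempty := card_pos.mp (hs ▸ hn)
    have hgap : ∀ i, 1 ≤ i → i ≤ n → 1 ≤ a i → ∀ j, n - i < j → upd i a j = 0 := by
      intro i hi1 hin hai j hj
      unfold upd
      split_ifs with he
      · -- j = i : show a i - 1 = 0
        subst he
        by_contra hne
        have h2 : 2 ≤ a j := by omega
        have hle : j * a j ≤ n := by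
          calc j * a j ≤ ∑ k ∈ Icc 1 n, k * a k :=
                Finset.single_le_sum (f := fun k => k * a k) (fun k _ => Nat.zero_le _) (mem_Icc.mpr ⟨hi1, hin⟩)
            _ = n := ha
        have h3 : j * 2 ≤ n := le_trans (Nat.mul_le_mul_left j h2) hle
        omega
      · -- j ≠ i : show a j = 0
        by_contra hne
        have haj : 1 ≤ a j := by omega
        by_cases hjn : j ≤ n
        · have hj1 : 1 ≤ j := by omega
          have hsub : ({i, j} : Finset ℕ) ⊆ Icc 1 n := by
            intro k hk
            rw [Finset.mem_insert, Finset.mem_singleton] at hk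
            rw [mem_Icc]
            rcases hk with rfl | rfl <;> omega
          have hpair : i * a i + j * a j ≤ n := by
            calc i * a i + j * a j = ∑ k ∈ ({i, j} : Finset ℕ), k * a k :=
                  (Finset.sum_pair (f := fun k => k * a k) (fun h => he h.symm)).symm
              _ ≤ ∑ k ∈ Icc 1 n, k * a k := Finset.sum_le_sum_of_subset hsub
              _ = n := ha
          have hA : i ≤ i * a i := Nat.le_mul_of_pos_right i (by omega)
          have hB : j ≤ j * a j := Nat.le_mul_of_pos_right j (by omega)
          have h4 : i + j ≤ n := le_trans (add_le_add hA hB) hpair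
          omega
        · exact hne (h0 j (by omega))
    -- Step 1: fiber decomposition over the part containing x
    have step1 : Nat.card {P : Finpartition s // cond a P}
        = ∑ t ∈ s.powerset.filter (fun t => x ∈ t),
            Nat.card {Q : Finpartition (s \ t) // 1 ≤ a t.card ∧ cond (upd t.card a) Q} := by
      rw [Nat.card_eq_fintype_card, Fintype.card_subtype]
      rw [Finset.card_eq_sum_card_fiberwise (f := fun P : Finpartition s => P.part x)
        (t := s.powerset.filter (fun t => x ∈ t))
        (fun P hP => by
          rw [mem_coe, mem_filter, mem_powerset]
          exact ⟨P.le (P.part_mem.mpr hxs), P.mem_part_self.mpr hxs⟩)]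
      refine Finset.sum_congr rfl (fun t htT => ?_)
      rw [filter_filter, ← Fintype.card_subtype, ← Nat.card_eq_fintype_card]
      rw [mem_filter, mem_powerset] at htT
      obtain ⟨hts, hxt⟩ := htT
      apply Nat.card_congr
      refine (stepEquiv hxt hts
        (fun ps => ∀ j, 1 ≤ j → (ps.filter fun b => b.card = j).card = a j)).trans
        (Equiv.subtypeEquivRight ?_)
      intro Q
      have htm : t ∉ Q.parts := by
        intro h
        exact (mem_sdiff.mp ((Q.le h) hxt)).2 hxt
      exact condInsert_iff htm (card_pos.mpr ⟨x, hxt⟩) a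
    -- Step 2: value of each fiber via the IH
    have key : ∀ t ∈ s.powerset.filter (fun t => x ∈ t),
        (Nat.card {Q : Finpartition (s \ t) // 1 ≤ a t.card ∧ cond (upd t.card a) Q} : ℚ)
          = Gfun n a t.card := by
      intro t htT
      rw [mem_filter, mem_powerset] at htT
      obtain ⟨hts, hxt⟩ := htT
      have hi1 : 1 ≤ t.card := card_pos.mpr ⟨x, hxt⟩
      have hin : t.card ≤ n := hs ▸ card_le_card hts
      by_cases hai : a t.card = 0
      · rw [Gfun, if_pos hai]
        have : IsEmpty {Q : Finpartition (s \ t) // 1 ≤ a t.card ∧ cond (upd t.card a) Q} :=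
          ⟨fun Q => absurd Q.2.1 (by omega)⟩
        rw [Nat.card_of_isEmpty]
        norm_num
      · rw [Gfun, if_neg hai]
        have hgapt := hgap t.card hi1 hin (by omega)
        have hcards : (s \ t).card = n - t.card := by rw [card_sdiff_of_subset hts, hs]
        have hsum' : ∑ j ∈ Icc 1 (n - t.card), j * upd t.card a j = n - t.card := by
          have hmem : t.card ∈ Icc 1 n := mem_Icc.mpr ⟨hi1, hin⟩
          have hdecomp : t.card * a t.card + ∑ j ∈ (Icc 1 n).erase t.card, j * a j = n := by
            rw [Finset.add_sum_erase _ (fun j => j * a j) hmem]; exact ha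
          have hdecomp' : ∑ j ∈ Icc 1 n, j * upd t.card a j
              = t.card * (a t.card - 1) + ∑ j ∈ (Icc 1 n).erase t.card, j * a j := by
            rw [← Finset.add_sum_erase _ (fun j => j * upd t.card a j) hmem]
            congr 1
            · unfold upd; rw [if_pos rfl]
            · exact Finset.sum_congr rfl (fun j hj => by
                unfold upd; rw [if_neg (Finset.ne_of_mem_erase hj)])
          have hmul : t.card * (a t.card - 1) + t.card = t.card * a t.card := by
            rw [← Nat.mul_succ]
            congr 1
            omega
          have hrestrict : ∑ j ∈ Icc 1 (n - t.card), j * upd t.card a j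
              = ∑ j ∈ Icc 1 n, j * upd t.card a j := by
            apply Finset.sum_subset (Finset.Icc_subset_Icc_right (by omega))
            intro j hj hnj
            rw [mem_Icc] at hj hnj
            rw [hgapt j (by omega)]
            ring
          omega
        have IH' := IH (n - t.card) (by omega) (s \ t) hcards (upd t.card a) hsum'
          (fun j hj => hgapt j hj)
        have h1 : Nat.card {Q : Finpartition (s \ t) // 1 ≤ a t.card ∧ cond (upd t.card a) Q}
            = Nat.card {Q : Finpartition (s \ t) // cond (upd t.card a) Q} :=
          Nat.card_congr (Equiv.subtypeEquivRight (fun Q => by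
            constructor
            · exact fun h => h.2
            · exact fun h => ⟨by omega, h⟩))
        have hD' : (∏ j ∈ Icc 1 (n - t.card),
            (((upd t.card a j)! : ℚ) * ((j ! : ℚ)) ^ (upd t.card a j))) ≠ 0 := by
          apply Finset.prod_ne_zero_iff.mpr
          intro j _
          positivity
        rw [h1, eq_div_iff hD']
        exact IH'
    -- Step 3: group by size
    have main2 : (Nat.card {P : Finpartition s // cond a P} : ℚ)
        = ∑ i ∈ Icc 1 n, ((n - 1).choose (i - 1) : ℚ) * Gfun n a i := by
      have e1 : (Nat.card {P : Finpartition s // cond a P} : ℚ)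
          = ∑ t ∈ s.powerset.filter (fun t => x ∈ t), Gfun n a t.card := by
        rw [step1]
        push_cast
        exact Finset.sum_congr rfl key
      rw [e1]
      rw [← Finset.sum_fiberwise_of_maps_to (g := fun t : Finset α => t.card)
        (t := Icc 1 n)
        (fun t ht => by
          rw [mem_filter, mem_powerset] at ht
          exact mem_Icc.mpr ⟨card_pos.mpr ⟨x, ht.2⟩, hs ▸ card_le_card ht.1⟩)
        (fun t => Gfun n a t.card)]
      refine Finset.sum_congr rfl (fun i hi => ?_)
      have e2 : ∀ t ∈ (s.powerset.filter (fun t => x ∈ t)).filter (fun t => t.card = i),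
          Gfun n a t.card = Gfun n a i := fun t ht => by rw [(mem_filter.mp ht).2]
      rw [Finset.sum_congr rfl e2, Finset.sum_const, nsmul_eq_mul,
        card_subsets_mem hxs (mem_Icc.mp hi).1, hs]
    -- Step 4: pointwise algebra
    have point : ∀ i ∈ Icc 1 n, ((n - 1).choose (i - 1) : ℚ) * Gfun n a i
          * ∏ j ∈ Icc 1 n, (((a j)! : ℚ) * ((j ! : ℚ)) ^ (a j))
        = ((i : ℚ) * (a i : ℚ)) * ((n - 1)! : ℚ) := by
      intro i hio
      obtain ⟨hi1, hin⟩ := mem_Icc.mp hio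
      by_cases hai : a i = 0
      · rw [Gfun, if_pos hai, hai]
        norm_num
      · rw [Gfun, if_neg hai]
        have hgapt := hgap i hi1 hin (by omega)
        have hD' : (∏ j ∈ Icc 1 (n - i),
            (((upd i a j)! : ℚ) * ((j ! : ℚ)) ^ (upd i a j))) ≠ 0 := by
          apply Finset.prod_ne_zero_iff.mpr; intro j _; positivity
        have hmem : i ∈ Icc 1 n := hio
        have efac : ∏ j ∈ Icc 1 n, (((a j)! : ℚ) * ((j ! : ℚ)) ^ (a j))
            = (∏ j ∈ Icc 1 (n - i), (((upd i a j)! : ℚ) * ((j ! : ℚ)) ^ (upd i a j)))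
              * ((a i : ℚ) * (i ! : ℚ)) := by
          have e2 : ∏ j ∈ Icc 1 (n - i), (((upd i a j)! : ℚ) * ((j ! : ℚ)) ^ (upd i a j))
              = ∏ j ∈ Icc 1 n, (((upd i a j)! : ℚ) * ((j ! : ℚ)) ^ (upd i a j)) := by
            apply Finset.prod_subset (Finset.Icc_subset_Icc_right (by omega))
            intro j hj hnj
            rw [mem_Icc] at hj hnj
            rw [hgapt j (by omega)]
            norm_num
          rw [e2]
          rw [← Finset.mul_prod_erase _ (fun j => ((a j)! : ℚ) * ((j ! : ℚ)) ^ (a j)) hmem,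
            ← Finset.mul_prod_erase _
              (fun j => ((upd i a j)! : ℚ) * ((j ! : ℚ)) ^ (upd i a j)) hmem]
          have e3 : ∏ j ∈ (Icc 1 n).erase i, (((upd i a j)! : ℚ) * ((j ! : ℚ)) ^ (upd i a j))
              = ∏ j ∈ (Icc 1 n).erase i, (((a j)! : ℚ) * ((j ! : ℚ)) ^ (a j)) :=
            Finset.prod_congr rfl (fun j hj => by
              unfold upd; rw [if_neg (Finset.ne_of_mem_erase hj)])
          rw [e3]
          have e4 : ((a i)! : ℚ) = (a i : ℚ) * (((a i - 1))! : ℚ) := by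
            rw [← Nat.cast_mul]
            norm_cast
            exact (Nat.mul_factorial_pred (by omega)).symm
          have e5 : ((i ! : ℚ)) ^ (a i) = ((i ! : ℚ)) ^ (a i - 1) * (i ! : ℚ) := by
            rw [← pow_succ]
            congr 1
            omega
          have e6 : upd i a i = a i - 1 := by unfold upd; rw [if_pos rfl]
          rw [e6, e4, e5]
          ring
        rw [efac]
        have hc1 : ((n - 1).choose (i - 1) : ℚ) * ((i - 1)! : ℚ) * ((n - i)! : ℚ)
            = ((n - 1)! : ℚ) := by
          have hnat := Nat.add_choose_mul_factorial_mul_factorial (i - 1) (n - i)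
          have heq : (i - 1) + (n - i) = n - 1 := by omega
          rw [heq] at hnat
          have hsymm : (n - 1).choose (n - i) = (n - 1).choose (i - 1) := by
            rw [show n - i = (n - 1) - (i - 1) by omega]
            exact Nat.choose_symm (by omega)
          rw [hsymm] at hnat
          exact_mod_cast hnat
        have hc2 : (i ! : ℚ) = (i : ℚ) * ((i - 1)! : ℚ) := by
          rw [← Nat.cast_mul]
          norm_cast
          exact (Nat.mul_factorial_pred (by omega)).symm
        rw [hc2]
        field_simp
        linear_combination hc1
    rw [main2, Finset.sum_mul, Finset.sum_congr rfl point, ← Finset.sum_mul]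
    have hsum : ∑ i ∈ Icc 1 n, ((i : ℚ) * (a i : ℚ)) = (n : ℚ) := by
      exact_mod_cast congrArg (fun k : ℕ => (k : ℚ)) ha
    rw [hsum]
    rw [show ((n - 1)! : ℚ) = (((n-1)! : ℕ) : ℚ) from rfl, ← Nat.cast_mul]
    norm_cast
    exact Nat.mul_factorial_pred hn.ne'

end Stmt0Aux2


open Stmt0Aux Stmt0Aux2

/-- The number of M-assemblies of size n with type `a`
(an assembly = a set partition of [n] together with a decoration of each block
of size i by one of `m i` choices) equals n! ∏ m(i)^(a i)/(a i! (i!)^(a i)),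
and in particular for set partitions (m i = 1 for i ≥ 1) the number of set
partitions of [n] with `a i` blocks of size i equals n!/∏ (a i! (i!)^(a i)). -/
theorem stmt_0 (n : ℕ) (m : ℕ → ℕ) (hm0 : m 0 = 0) (a : ℕ → ℕ)
    (ha : ∑ i ∈ Finset.Icc 1 n, i * a i = n) :
    (Nat.card ((P : {P : Finpartition (Finset.univ : Finset (Fin n)) //
          ∀ i ∈ Finset.Icc 1 n, (P.parts.filter (fun b => b.card = i)).card = a i}) ×
        ((b : {s // s ∈ P.1.parts}) → Fin (m b.1.card))) : ℚ) =
      (n ! : ℚ) * ∏ i ∈ Finset.Icc 1 n,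
        (m i : ℚ) ^ a i / (((a i)! : ℚ) * ((i ! : ℚ)) ^ a i) ∧
    ((∀ i, 1 ≤ i → m i = 1) →
      (Nat.card {P : Finpartition (Finset.univ : Finset (Fin n)) //
          ∀ i ∈ Finset.Icc 1 n, (P.parts.filter (fun b => b.card = i)).card = a i} : ℚ) =
        (n ! : ℚ) / ∏ i ∈ Finset.Icc 1 n, (((a i)! : ℚ) * ((i ! : ℚ)) ^ a i)) := by
  classical
  set a0 : ℕ → ℕ := fun j => if j ≤ n then a j else 0 with ha0
  have hcardle : ∀ (P : Finpartition (Finset.univ : Finset (Fin n))) (b : Finset (Fin n)),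
      b ∈ P.parts → b.card ≤ n := by
    intro P b hb
    have := card_le_card (P.le hb)
    simpa using this
  have hiff : ∀ P : Finpartition (Finset.univ : Finset (Fin n)),
      (∀ i ∈ Finset.Icc 1 n, (P.parts.filter (fun b => b.card = i)).card = a i) ↔ cond a0 P := by
    intro P
    constructor
    · intro h j hj
      by_cases hjn : j ≤ n
      · rw [ha0]
        simp only [if_pos hjn]
        exact h j (mem_Icc.mpr ⟨hj, hjn⟩)
      · rw [ha0]
        simp only [if_neg hjn]
        rw [Finset.filter_eq_empty_iff.mpr, Finset.card_empty]
        intro b hb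
        have := hcardle P b hb
        omega
    · intro h i hi
      rw [mem_Icc] at hi
      have := h i hi.1
      rw [ha0] at this
      simpa [if_pos hi.2] using this
  have hsum0 : ∑ j ∈ Finset.Icc 1 n, j * a0 j = n := by
    have he : ∑ j ∈ Finset.Icc 1 n, j * a0 j = ∑ j ∈ Finset.Icc 1 n, j * a j :=
      Finset.sum_congr rfl (fun j hj => by rw [mem_Icc] at hj; rw [ha0]; simp [if_pos hj.2])
    rw [he, ha]
  have h00 : ∀ j, n < j → a0 j = 0 := fun j hj => by rw [ha0]; simp [Nat.not_le.mpr hj]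
  have hDprod : ∏ j ∈ Finset.Icc 1 n, (((a0 j)! : ℚ) * ((j ! : ℚ)) ^ (a0 j))
      = ∏ j ∈ Finset.Icc 1 n, (((a j)! : ℚ) * ((j ! : ℚ)) ^ (a j)) := by
    refine Finset.prod_congr rfl (fun j hj => ?_)
    rw [mem_Icc] at hj
    rw [ha0]
    simp [if_pos hj.2]
  have hmain := main_count n (Finset.univ : Finset (Fin n)) (by simp) a0 hsum0 h00
  rw [hDprod] at hmain
  have hcongr : Nat.card {P : Finpartition (Finset.univ : Finset (Fin n)) //
        ∀ i ∈ Finset.Icc 1 n, (P.parts.filter (fun b => b.card = i)).card = a i}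
      = Nat.card {P : Finpartition (Finset.univ : Finset (Fin n)) // cond a0 P} :=
    Nat.card_congr (Equiv.subtypeEquivRight hiff)
  have hD : (∏ j ∈ Finset.Icc 1 n, (((a j)! : ℚ) * ((j ! : ℚ)) ^ (a j))) ≠ 0 := by
    apply Finset.prod_ne_zero_iff.mpr; intro j _; positivity
  have hcardP : (Nat.card {P : Finpartition (Finset.univ : Finset (Fin n)) //
        ∀ i ∈ Finset.Icc 1 n, (P.parts.filter (fun b => b.card = i)).card = a i} : ℚ)
      = (n ! : ℚ) / ∏ j ∈ Finset.Icc 1 n, (((a j)! : ℚ) * ((j ! : ℚ)) ^ (a j)) := by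
    rw [hcongr, eq_div_iff hD]
    exact hmain
  constructor
  · -- count the decorated assemblies
    have hsigma : (Nat.card ((P : {P : Finpartition (Finset.univ : Finset (Fin n)) //
            ∀ i ∈ Finset.Icc 1 n, (P.parts.filter (fun b => b.card = i)).card = a i}) ×
          ((b : {s // s ∈ P.1.parts}) → Fin (m b.1.card))))
        = Nat.card {P : Finpartition (Finset.univ : Finset (Fin n)) //
            ∀ i ∈ Finset.Icc 1 n, (P.parts.filter (fun b => b.card = i)).card = a i}
          * ∏ i ∈ Finset.Icc 1 n, (m i) ^ (a i) := by
      rw [Nat.card_eq_fintype_card, Nat.card_eq_fintype_card, Fintype.card_sigma]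
      have hper : ∀ P : {P : Finpartition (Finset.univ : Finset (Fin n)) //
            ∀ i ∈ Finset.Icc 1 n, (P.parts.filter (fun b => b.card = i)).card = a i},
          Fintype.card ((b : {s // s ∈ P.1.parts}) → Fin (m b.1.card))
            = ∏ i ∈ Finset.Icc 1 n, (m i) ^ (a i) := by
        intro P
        rw [Fintype.card_pi]
        simp only [Fintype.card_fin]
        rw [Finset.prod_coe_sort P.1.parts (fun t => m t.card)]
        rw [← Finset.prod_fiberwise_of_maps_to (g := fun t : Finset (Fin n) => t.card)
          (t := Finset.Icc 1 n)
          (fun b hb => mem_Icc.mpr ⟨card_pos.mpr (P.1.nonempty_of_mem_parts hb),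
            hcardle P.1 b hb⟩) (fun t => m t.card)]
        refine Finset.prod_congr rfl (fun i hi => ?_)
        have : ∀ b ∈ P.1.parts.filter (fun b => b.card = i), m b.card = m i :=
          fun b hb => by rw [(mem_filter.mp hb).2]
        rw [Finset.prod_congr rfl this, Finset.prod_const, P.2 i hi]
      rw [Finset.sum_congr rfl (fun P _ => hper P), Finset.sum_const, smul_eq_mul,
        Finset.card_univ]
    rw [hsigma]
    push_cast
    rw [hcardP]
    rw [Finset.prod_div_distrib]
    push_cast
    field_simp
  · intro _
    exact hcardP
end

section
/- Let n, r be integers with 0 < r < n/2, let m_1, m_2, m_3 > 0, and let y = (2 m_1 m_3 / (3 m_2²)) · r² / (n - 2r). For any r with 0 < r < n/2 and any 0 ≤ j ≤ r/2, setting a_j = (n-2r+j, r-2j, j, 0, ..., 0), we have N(a_j, n)/N(a_0, n) ≤ y^j / j!, where N(a, n) = n! ∏_i m_i^{a_i}/(a_i! (i!)^{a_i}). Consequently, ∑_{1 ≤ j ≤ r/2} N(a_j, n)/N(a_0, n) ≤ e^y - 1. -/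
open Finset
open scoped Nat

/-- N(a_j, n) for the type a_j = (n-2r+j, r-2j, j, 0, ..., 0):
N = n! m1^{n-2r+j} m2^{r-2j} m3^j / ((n-2r+j)! (r-2j)! j! · 2^{r-2j} · 6^j). -/
noncomputable def Naj (m1 m2 m3 : ℝ) (n r j : ℕ) : ℝ :=
  (n ! : ℝ) * m1 ^ (n - 2 * r + j) * m2 ^ (r - 2 * j) * m3 ^ j /
    (((n - 2 * r + j)! : ℝ) * ((r - 2 * j)! : ℝ) * (j ! : ℝ) *
      2 ^ (r - 2 * j) * 6 ^ j)


-- nat lemma: r! ≤ (r-k)! * r^k for k ≤ r  (stated as  (b+k)! ≤ b! * (b+k)^k)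
lemma fact_le_aux (b k : ℕ) : (b + k)! ≤ b ! * (b + k) ^ k := by
  induction k with
  | zero => simp
  | succ k ih =>
    have h1 : (b + (k+1))! = (b + k + 1) * (b + k)! := by
      rw [show b + (k+1) = (b+k)+1 by ring, Nat.factorial_succ]
    rw [h1]
    calc (b + k + 1) * (b + k)! ≤ (b + k + 1) * (b ! * (b + k) ^ k) :=
          Nat.mul_le_mul_left _ ih
      _ ≤ (b + (k+1)) * (b ! * (b + (k+1)) ^ k) :=
          Nat.mul_le_mul (by omega) (Nat.mul_le_mul_left _ (Nat.pow_le_pow_left (by omega) k))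
      _ = b ! * (b + (k+1)) ^ (k+1) := by ring

-- key: s! * s^j * (b+2j)! ≤ (b+2j)^(2j) * b! * (s+j)!
lemma key_nat (s b j : ℕ) : s ! * s ^ j * (b + 2*j)! ≤ (b + 2*j) ^ (2*j) * b ! * (s + j)! := by
  have h1 : s ! * s ^ j ≤ (s + j)! := by
    calc s ! * s ^ j ≤ s ! * (s+1) ^ j :=
          Nat.mul_le_mul_left _ (Nat.pow_le_pow_left (by omega) j)
      _ ≤ (s + j)! := Nat.factorial_mul_pow_le_factorial
  have h2 : (b + 2*j)! ≤ b ! * (b + 2*j) ^ (2*j) := fact_le_aux b (2*j)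
  calc s ! * s ^ j * (b + 2*j)! ≤ (s + j)! * (b ! * (b + 2*j) ^ (2*j)) :=
        Nat.mul_le_mul h1 h2
    _ = (b + 2*j) ^ (2*j) * b ! * (s + j)! := by ring

lemma ratio_le (m1 m2 m3 : ℝ) (h1 : 0 < m1) (h2 : 0 < m2) (h3 : 0 < m3)
    (s b j : ℕ) (hs : 0 < s) :
    Naj m1 m2 m3 (s + 2*(b+2*j)) (b+2*j) j / Naj m1 m2 m3 (s + 2*(b+2*j)) (b+2*j) 0 ≤
      (2 * m1 * m3 / (3 * m2 ^ 2) * ((b+2*j : ℕ) : ℝ) ^ 2 / (s : ℝ)) ^ j / (j ! : ℝ) := by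
  unfold Naj
  have e1 : s + 2*(b+2*j) - 2*(b+2*j) + j = s + j := by omega
  have e2 : b + 2*j - 2*j = b := by omega
  have e3 : s + 2*(b+2*j) - 2*(b+2*j) + 0 = s := by omega
  have e4 : b + 2*j - 2*0 = b + 2*j := by omega
  rw [e1, e2, e3, e4]
  have hs' : (0:ℝ) < s := by exact_mod_cast hs
  have heq : ((s + 2*(b+2*j))! : ℝ) * m1 ^ (s+j) * m2 ^ b * m3 ^ j /
      (((s+j)! : ℝ) * (b ! : ℝ) * (j ! : ℝ) * 2 ^ b * 6 ^ j) /
      (((s + 2*(b+2*j))! : ℝ) * m1 ^ s * m2 ^ (b+2*j) * m3 ^ 0 /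
      ((s ! : ℝ) * ((b+2*j)! : ℝ) * (0! : ℝ) * 2 ^ (b+2*j) * 6 ^ 0)) =
      (2 * m1 * m3 / (3 * m2 ^ 2)) ^ j / (j ! : ℝ) *
        (((b+2*j)! : ℝ) * (s ! : ℝ) / ((b ! : ℝ) * ((s+j)! : ℝ))) := by
    have h6 : (6:ℝ) ^ j = 2 ^ j * 3 ^ j := by rw [← mul_pow]; norm_num
    simp only [pow_zero, Nat.factorial_zero, Nat.cast_one, mul_one, h6, pow_add, mul_pow, div_pow]
    have hn : ((s + 2*(b+2*j))! : ℝ) ≠ 0 := by positivity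
    field_simp
    ring
  rw [heq]
  have hF : (((b+2*j)! : ℝ) * (s ! : ℝ) / ((b ! : ℝ) * ((s+j)! : ℝ))) ≤
      ((b+2*j : ℕ) : ℝ) ^ (2*j) / (s:ℝ) ^ j := by
    rw [div_le_div_iff₀ (by positivity) (by positivity)]
    calc (((b+2*j)! : ℝ) * (s ! : ℝ)) * (s:ℝ) ^ j
        = ((s ! * s ^ j * (b+2*j)! : ℕ) : ℝ) := by push_cast; ring
      _ ≤ (((b+2*j) ^ (2*j) * b ! * (s+j)! : ℕ) : ℝ) := by exact_mod_cast key_nat s b j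
      _ = ((b+2*j : ℕ) : ℝ) ^ (2*j) * ((b ! : ℝ) * ((s+j)! : ℝ)) := by push_cast; ring
  have hc : (0:ℝ) ≤ (2 * m1 * m3 / (3 * m2 ^ 2)) ^ j / (j ! : ℝ) := by positivity
  calc (2 * m1 * m3 / (3 * m2 ^ 2)) ^ j / (j ! : ℝ) *
        (((b+2*j)! : ℝ) * (s ! : ℝ) / ((b ! : ℝ) * ((s+j)! : ℝ)))
      ≤ (2 * m1 * m3 / (3 * m2 ^ 2)) ^ j / (j ! : ℝ) * (((b+2*j : ℕ) : ℝ) ^ (2*j) / (s:ℝ) ^ j) :=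
        mul_le_mul_of_nonneg_left hF hc
    _ = (2 * m1 * m3 / (3 * m2 ^ 2) * ((b+2*j : ℕ) : ℝ) ^ 2 / (s : ℝ)) ^ j / (j ! : ℝ) := by
        rw [pow_mul]
        simp only [div_pow, mul_pow]
        ring

/-- with 0 < r < n/2 and y = (2 m1 m3/(3 m2²)) r²/(n-2r),
for all 0 ≤ j ≤ r/2 we have N(a_j,n)/N(a_0,n) ≤ y^j/j!, and consequently
∑_{1 ≤ j ≤ r/2} N(a_j,n)/N(a_0,n) ≤ e^y - 1. -/
theorem stmt_7 (m1 m2 m3 : ℝ) (h1 : 0 < m1) (h2 : 0 < m2) (h3 : 0 < m3)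
    (n r : ℕ) (hr : 0 < r) (hrn : 2 * r < n) :
    (∀ j : ℕ, 2 * j ≤ r →
      Naj m1 m2 m3 n r j / Naj m1 m2 m3 n r 0 ≤
        (2 * m1 * m3 / (3 * m2 ^ 2) * (r : ℝ) ^ 2 / ((n : ℝ) - 2 * r)) ^ j / (j ! : ℝ)) ∧
    ∑ j ∈ Finset.Icc 1 (r / 2), Naj m1 m2 m3 n r j / Naj m1 m2 m3 n r 0 ≤
      Real.exp (2 * m1 * m3 / (3 * m2 ^ 2) * (r : ℝ) ^ 2 / ((n : ℝ) - 2 * r)) - 1 := by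
  have hns : (0:ℝ) < (n : ℝ) - 2 * r := by
    have : (2 * r : ℕ) < n := hrn
    have := Nat.cast_lt (α := ℝ) |>.2 this
    push_cast at this
    linarith
  have hy : 0 ≤ 2 * m1 * m3 / (3 * m2 ^ 2) * (r : ℝ) ^ 2 / ((n : ℝ) - 2 * r) := by positivity
  have main : ∀ j : ℕ, 2 * j ≤ r →
      Naj m1 m2 m3 n r j / Naj m1 m2 m3 n r 0 ≤
        (2 * m1 * m3 / (3 * m2 ^ 2) * (r : ℝ) ^ 2 / ((n : ℝ) - 2 * r)) ^ j / (j ! : ℝ) := by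
    intro j hj
    obtain ⟨b, hb⟩ : ∃ b, r = b + 2 * j := ⟨r - 2 * j, by omega⟩
    subst hb
    obtain ⟨s, hsn⟩ : ∃ s, n = s + 2 * (b + 2 * j) := ⟨n - 2 * (b + 2 * j), by omega⟩
    subst hsn
    have hs : 0 < s := by omega
    have e : ((s + 2 * (b + 2 * j) : ℕ) : ℝ) - 2 * ((b + 2 * j : ℕ) : ℝ) = (s : ℝ) := by
      push_cast; ring
    rw [e]
    exact ratio_le m1 m2 m3 h1 h2 h3 s b j hs
  refine ⟨main, ?_⟩
  set y := 2 * m1 * m3 / (3 * m2 ^ 2) * (r : ℝ) ^ 2 / ((n : ℝ) - 2 * r) with hy_def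
  calc ∑ j ∈ Finset.Icc 1 (r / 2), Naj m1 m2 m3 n r j / Naj m1 m2 m3 n r 0
      ≤ ∑ j ∈ Finset.Icc 1 (r / 2), y ^ j / (j ! : ℝ) := by
        apply Finset.sum_le_sum
        intro j hj
        simp only [Finset.mem_Icc] at hj
        exact main j (by omega)
    _ ≤ Real.exp y - 1 := by
        have hsum := Real.sum_le_exp_of_nonneg hy (r / 2 + 1)
        have hsplit : ∑ i ∈ Finset.range (r / 2 + 1), y ^ i / (i ! : ℝ) =
            1 + ∑ j ∈ Finset.Icc 1 (r / 2), y ^ j / (j ! : ℝ) := by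
          rw [Finset.range_eq_Ico, Finset.sum_eq_sum_Ico_succ_bot (by omega)]
          rw [Finset.Ico_add_one_right_eq_Icc]
          simp
        rw [hsplit] at hsum
        linarith
end

section
/- Picking uniformly at random from the M-assemblies of size n of rank r (i.e., with exactly n - r components), where m_1, m_2, m_3 > 0 and 0 < r < n/2, the probability that the largest component has size exactly 3 satisfies P(L_1 = 3) ≤ e^y - 1, where y = (2 m_1 m_3 / (3 m_2²)) r² / (n - 2r). -/
open Finset
open scoped Nat

/-- p(n,k): the number of M-assemblies of size n with exactly k components. -/
noncomputable def assemblyCount (m : ℕ → ℝ) (n k : ℕ) : ℝ :=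
  ∑ a ∈ Finset.univ.filter (fun a : Fin (n + 1) → Fin (n + 1) =>
      (∑ i : Fin (n + 1), i.1 * (a i).1) = n ∧ (∑ i : Fin (n + 1), (a i).1) = k ∧
        (a 0).1 = 0),
    (n ! : ℝ) * ∏ i : Fin (n + 1),
      m i.1 ^ (a i).1 / (((a i).1 ! : ℝ) * ((i.1 ! : ℝ)) ^ (a i).1)

/-- The number of M-assemblies of size n with exactly k components whose largest
component has size exactly 3 (types with no part of size ≥ 4 and at least one
part of size 3). -/
noncomputable def assemblyCountL1eq3 (m : ℕ → ℝ) (n k : ℕ) : ℝ :=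
  ∑ a ∈ Finset.univ.filter (fun a : Fin (n + 1) → Fin (n + 1) =>
      (∑ i : Fin (n + 1), i.1 * (a i).1) = n ∧ (∑ i : Fin (n + 1), (a i).1) = k ∧
        (a 0).1 = 0 ∧ (∀ i : Fin (n + 1), 4 ≤ i.1 → (a i).1 = 0) ∧
        (∃ i : Fin (n + 1), i.1 = 3 ∧ (a i).1 ≠ 0)),
    (n ! : ℝ) * ∏ i : Fin (n + 1),
      m i.1 ^ (a i).1 / (((a i).1 ! : ℝ) * ((i.1 ! : ℝ)) ^ (a i).1)

namespace Stmt8Aux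

noncomputable def W (m : ℕ → ℝ) (n r j : ℕ) : ℝ :=
  (n ! : ℝ) * (m 1 ^ (n - 2*r + j) / ((n - 2*r + j)! : ℝ)) *
    (m 2 ^ (r - 2*j) / (((r - 2*j)! : ℝ) * 2 ^ (r - 2*j))) *
    (m 3 ^ j / ((j ! : ℝ) * 6 ^ j))

def cv (n r j : ℕ) : Fin (n+1) → Fin (n+1) := fun i =>
  if i.1 = 1 then Fin.ofNat (n+1) (n - 2*r + j)
  else if i.1 = 2 then Fin.ofNat (n+1) (r - 2*j)
  else if i.1 = 3 then Fin.ofNat (n+1) j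
  else 0

lemma prod_three {M : Type*} [CommMonoid M] {n : ℕ} (hn : 3 ≤ n) (f : Fin (n+1) → M)
    (hf : ∀ i : Fin (n+1), i.1 ≠ 1 → i.1 ≠ 2 → i.1 ≠ 3 → f i = 1) :
    ∏ i : Fin (n+1), f i = f ⟨1, by omega⟩ * f ⟨2, by omega⟩ * f ⟨3, by omega⟩ := by
  classical
  rw [← Finset.prod_subset
    (Finset.subset_univ ({⟨1, by omega⟩, ⟨2, by omega⟩, ⟨3, by omega⟩} : Finset (Fin (n+1))))]
  · rw [Finset.prod_insert (by simp [Fin.ext_iff]), Finset.prod_insert (by simp [Fin.ext_iff]),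
      Finset.prod_singleton, mul_assoc]
  · intro x _ hx
    simp only [Finset.mem_insert, Finset.mem_singleton, Fin.ext_iff] at hx
    push_neg at hx
    exact hf x hx.1 hx.2.1 hx.2.2

lemma sum_three {M : Type*} [AddCommMonoid M] {n : ℕ} (hn : 3 ≤ n) (f : Fin (n+1) → M)
    (hf : ∀ i : Fin (n+1), i.1 ≠ 1 → i.1 ≠ 2 → i.1 ≠ 3 → f i = 0) :
    ∑ i : Fin (n+1), f i = f ⟨1, by omega⟩ + f ⟨2, by omega⟩ + f ⟨3, by omega⟩ := by
  classical
  rw [← Finset.sum_subset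
    (Finset.subset_univ ({⟨1, by omega⟩, ⟨2, by omega⟩, ⟨3, by omega⟩} : Finset (Fin (n+1))))]
  · rw [Finset.sum_insert (by simp [Fin.ext_iff]), Finset.sum_insert (by simp [Fin.ext_iff]),
      Finset.sum_singleton, add_assoc]
  · intro x _ hx
    simp only [Finset.mem_insert, Finset.mem_singleton, Fin.ext_iff] at hx
    push_neg at hx
    exact hf x hx.1 hx.2.1 hx.2.2

lemma cv_val (n r j : ℕ) (hrn : 2*r < n) (hj : 2*j ≤ r) (i : Fin (n+1)) :
    (cv n r j i).1 = if i.1 = 1 then n - 2*r + j else if i.1 = 2 then r - 2*j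
      else if i.1 = 3 then j else 0 := by
  unfold cv
  split_ifs with h1 h2 h3
  · exact Nat.mod_eq_of_lt (by omega)
  · exact Nat.mod_eq_of_lt (by omega)
  · exact Nat.mod_eq_of_lt (by omega)
  · rfl

lemma term_eq (m : ℕ → ℝ) (n r j : ℕ) (hr : 0 < r) (hrn : 2*r < n) (hj : 2*j ≤ r) :
    (n ! : ℝ) * ∏ i : Fin (n+1),
      m i.1 ^ (cv n r j i).1 / (((cv n r j i).1 ! : ℝ) * ((i.1 ! : ℝ)) ^ (cv n r j i).1)
      = W m n r j := by
  have hn : 3 ≤ n := by omega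
  rw [prod_three hn _ (by
    intro i h1 h2 h3
    rw [cv_val n r j hrn hj i]
    simp [h1, h2, h3])]
  rw [cv_val n r j hrn hj ⟨1, by omega⟩, cv_val n r j hrn hj ⟨2, by omega⟩,
    cv_val n r j hrn hj ⟨3, by omega⟩]
  norm_num [W, Nat.factorial]
  ring_nf

/-- basic sums of the count vector -/
lemma cv_sums (n r j : ℕ) (hr : 0 < r) (hrn : 2*r < n) (hj : 2*j ≤ r) :
    (∑ i : Fin (n + 1), i.1 * (cv n r j i).1) = n ∧
      (∑ i : Fin (n + 1), (cv n r j i).1) = n - r ∧ (cv n r j 0).1 = 0 ∧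
      (∀ i : Fin (n + 1), 4 ≤ i.1 → (cv n r j i).1 = 0) := by
  have hn : 3 ≤ n := by omega
  refine ⟨?_, ?_, ?_, ?_⟩
  · rw [sum_three hn _ (by
      intro i h1 h2 h3
      rw [cv_val n r j hrn hj i]
      simp [h1, h2, h3])]
    rw [cv_val n r j hrn hj ⟨1, by omega⟩, cv_val n r j hrn hj ⟨2, by omega⟩,
      cv_val n r j hrn hj ⟨3, by omega⟩]
    simp only []
    norm_num
    omega
  · rw [sum_three hn _ (by
      intro i h1 h2 h3
      rw [cv_val n r j hrn hj i]
      simp [h1, h2, h3])]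
    rw [cv_val n r j hrn hj ⟨1, by omega⟩, cv_val n r j hrn hj ⟨2, by omega⟩,
      cv_val n r j hrn hj ⟨3, by omega⟩]
    norm_num
    omega
  · rw [cv_val n r j hrn hj 0]
    norm_num
  · intro i hi
    rw [cv_val n r j hrn hj i]
    have h1 : i.1 ≠ 1 := by omega
    have h2 : i.1 ≠ 2 := by omega
    have h3 : i.1 ≠ 3 := by omega
    simp [h1, h2, h3]

/-- the converse: any admissible count vector is some `cv n r j`. -/
lemma eq_cv (n r : ℕ) (hr : 0 < r) (hrn : 2*r < n) (a : Fin (n+1) → Fin (n+1))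
    (hs1 : (∑ i : Fin (n + 1), i.1 * (a i).1) = n)
    (hs2 : (∑ i : Fin (n + 1), (a i).1) = n - r)
    (h0 : (a 0).1 = 0) (h4 : ∀ i : Fin (n + 1), 4 ≤ i.1 → (a i).1 = 0)
    (h3' : ∃ i : Fin (n + 1), i.1 = 3 ∧ (a i).1 ≠ 0) :
    1 ≤ (a ⟨3, by omega⟩).1 ∧ 2 * (a ⟨3, by omega⟩).1 ≤ r ∧
      a = cv n r (a ⟨3, by omega⟩).1 := by
  have hn : 3 ≤ n := by omega
  have hvan : ∀ i : Fin (n+1), i.1 ≠ 1 → i.1 ≠ 2 → i.1 ≠ 3 → (a i).1 = 0 := by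
    intro i h1 h2 h3
    rcases Nat.lt_or_ge i.1 4 with h | h
    · have h0' : i = 0 := Fin.ext (by simp only [Fin.val_zero]; omega)
      rw [h0']; exact h0
    · exact h4 i h
  set a1 := (a ⟨1, by omega⟩).1 with ha1
  set a2 := (a ⟨2, by omega⟩).1 with ha2
  set a3 := (a ⟨3, by omega⟩).1 with ha3
  rw [sum_three hn _ (by intro i h1 h2 h3; rw [hvan i h1 h2 h3]; ring)] at hs1
  rw [sum_three hn _ hvan] at hs2
  simp only [] at hs1 hs2
  have e1 : 1 * a1 + 2 * a2 + 3 * a3 = n := hs1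
  have e2 : a1 + a2 + a3 = n - r := hs2
  have ha3pos : 1 ≤ a3 := by
    obtain ⟨i, hi3, hne⟩ := h3'
    have : i = ⟨3, by omega⟩ := Fin.ext hi3
    rw [this] at hne
    omega
  have hkey : a1 = n - 2*r + a3 ∧ a2 = r - 2*a3 ∧ 2*a3 ≤ r := by omega
  refine ⟨ha3pos, hkey.2.2, ?_⟩
  funext i
  apply Fin.ext
  rw [cv_val n r a3 hrn hkey.2.2 i]
  rcases (by omega : i.1 = 0 ∨ i.1 = 1 ∨ i.1 = 2 ∨ i.1 = 3 ∨ 4 ≤ i.1) with h|h|h|h|h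
  · have hi : i = 0 := Fin.ext (by simp only [Fin.val_zero]; omega)
    simp only [h]
    norm_num
    rw [hi]; simpa using h0
  · have hi : i = ⟨1, by omega⟩ := Fin.ext h
    simp only [h]
    norm_num
    rw [hi, ← ha1]; exact hkey.1
  · have hi : i = ⟨2, by omega⟩ := Fin.ext h
    simp only [h]
    norm_num
    rw [hi, ← ha2]; exact hkey.2.1
  · have hi : i = ⟨3, by omega⟩ := Fin.ext h
    simp only [h]
    norm_num
    rw [hi, ← ha3]
  · have h1 : i.1 ≠ 1 := by omega
    have h2 : i.1 ≠ 2 := by omega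
    have h3 : i.1 ≠ 3 := by omega
    simp only [if_neg h1, if_neg h2, if_neg h3]
    exact h4 i h

/-- Lemma A: the L1 = 3 count as a sum over j. -/
lemma sumL1 (m : ℕ → ℝ) (n r : ℕ) (hr : 0 < r) (hrn : 2*r < n) :
    assemblyCountL1eq3 m n (n - r) = ∑ j ∈ Finset.Icc 1 (r/2), W m n r j := by
  have hn : 3 ≤ n := by omega
  unfold assemblyCountL1eq3
  refine Finset.sum_nbij' (fun a => (a ⟨3, by omega⟩).1) (fun j => cv n r j)
    ?_ ?_ ?_ ?_ ?_
  · intro a ha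
    simp only [Finset.mem_filter, Finset.mem_univ, true_and] at ha
    obtain ⟨hs1, hs2, h0, h4, h3'⟩ := ha
    obtain ⟨p1, p2, _⟩ := eq_cv n r hr hrn a hs1 hs2 h0 h4 h3'
    simp only [Finset.mem_Icc]
    omega
  · intro j hj
    simp only [Finset.mem_Icc] at hj
    have hj2 : 2*j ≤ r := by omega
    obtain ⟨q1, q2, q3, q4⟩ := cv_sums n r j hr hrn hj2
    simp only [Finset.mem_filter, Finset.mem_univ, true_and]
    refine ⟨q1, q2, q3, q4, ⟨⟨3, by omega⟩, rfl, ?_⟩⟩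
    rw [cv_val n r j hrn hj2]
    simp
    omega
  · intro a ha
    simp only [Finset.mem_filter, Finset.mem_univ, true_and] at ha
    obtain ⟨hs1, hs2, h0, h4, h3'⟩ := ha
    exact (eq_cv n r hr hrn a hs1 hs2 h0 h4 h3').2.2.symm
  · intro j hj
    simp only [Finset.mem_Icc] at hj
    have hj2 : 2*j ≤ r := by omega
    show (cv n r j ⟨3, by omega⟩).1 = j
    rw [cv_val n r j hrn hj2]
    simp
  · intro a ha
    simp only [Finset.mem_filter, Finset.mem_univ, true_and] at ha
    obtain ⟨hs1, hs2, h0, h4, h3'⟩ := ha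
    obtain ⟨p1, p2, p3⟩ := eq_cv n r hr hrn a hs1 hs2 h0 h4 h3'
    conv_lhs => rw [p3]
    exact term_eq m n r _ hr hrn p2

lemma W_pos (m : ℕ → ℝ) (h1 : 0 < m 1) (h2 : 0 < m 2) (h3 : 0 < m 3) (n r j : ℕ) :
    0 < W m n r j := by
  unfold W
  have hn := Nat.factorial_pos n
  positivity

lemma W_succ (m : ℕ → ℝ) (n r k : ℕ) (hrn : 2*r < n) (hk : 2*(k+1) ≤ r) (hm2 : m 2 ≠ 0) :
    W m n r (k+1) = W m n r k *
      (2 * m 1 * m 3 * (((r - 2*k : ℕ) : ℝ) * ((r - 2*k - 1 : ℕ) : ℝ)) /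
        (3 * m 2 ^ 2 * (((n - 2*r + k : ℕ) : ℝ) + 1) * ((k : ℝ) + 1))) := by
  obtain ⟨c, hc⟩ : ∃ c, r - 2*k = c + 2 := ⟨r - 2*k - 2, by omega⟩
  have h2' : r - 2*k - 1 = c + 1 := by omega
  have h1' : r - 2*(k+1) = c := by omega
  have h3' : n - 2*r + (k+1) = (n - 2*r + k) + 1 := by omega
  obtain ⟨A, hA⟩ : ∃ A, n - 2*r + k = A := ⟨_, rfl⟩
  unfold W
  rw [h1', h2', h3', hc, hA]
  have fc : ((c+2)! : ℝ) = ((c:ℝ)+2) * (((c:ℝ)+1) * (c ! : ℝ)) := by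
    show (((c+1)+1)! : ℝ) = _
    rw [Nat.factorial_succ, Nat.factorial_succ]
    push_cast; ring
  have fA' : ((A+1)! : ℝ) = ((A:ℝ)+1) * ((A !) : ℝ) := by
    rw [Nat.factorial_succ]; push_cast; ring
  have fk : ((k+1)! : ℝ) = ((k:ℝ)+1) * ((k !) : ℝ) := by
    rw [Nat.factorial_succ]; push_cast; ring
  rw [fc, fA', fk, pow_add, pow_add, pow_add, pow_add, pow_add]
  have d1 : ((A !) : ℝ) ≠ 0 := Nat.cast_ne_zero.2 (Nat.factorial_ne_zero _)
  have d2 : ((c !) : ℝ) ≠ 0 := Nat.cast_ne_zero.2 (Nat.factorial_ne_zero _)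
  have d3 : ((k !) : ℝ) ≠ 0 := Nat.cast_ne_zero.2 (Nat.factorial_ne_zero _)
  have d4 : ((A:ℝ)+1) ≠ 0 := by positivity
  have d5 : ((c:ℝ)+2) ≠ 0 := by positivity
  have d6 : ((c:ℝ)+1) ≠ 0 := by positivity
  have d7 : ((k:ℝ)+1) ≠ 0 := by positivity
  have d8 : (2:ℝ)^c ≠ 0 := by positivity
  have d9 : (6:ℝ)^k ≠ 0 := by positivity
  push_cast
  field_simp
  ring

lemma W_step (m : ℕ → ℝ) (h1 : 0 < m 1) (h2 : 0 < m 2) (h3 : 0 < m 3)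
    (n r k : ℕ) (hr : 0 < r) (hrn : 2*r < n) (hk : 2*(k+1) ≤ r) :
    W m n r (k+1) ≤ W m n r k *
      ((2 * m 1 * m 3 / (3 * (m 2) ^ 2) * (r : ℝ) ^ 2 / ((n : ℝ) - 2 * r)) / ((k:ℝ)+1)) := by
  have hn2r : (0:ℝ) < (n:ℝ) - 2*r := by
    have : ((2*r : ℕ) : ℝ) < (n : ℕ) := Nat.cast_lt.2 hrn
    push_cast at this; linarith
  rw [W_succ m n r k hrn hk h2.ne']
  have hY : (2 * m 1 * m 3 / (3 * (m 2) ^ 2) * (r : ℝ) ^ 2 / ((n : ℝ) - 2 * r)) / ((k:ℝ)+1)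
      = (2 * m 1 * m 3 * (r:ℝ)^2) / (3 * m 2 ^ 2 * ((n:ℝ) - 2*r) * ((k:ℝ)+1)) := by
    field_simp
  rw [hY]
  apply mul_le_mul_of_nonneg_left ?_ (le_of_lt (W_pos m h1 h2 h3 n r k))
  apply div_le_div₀ (by positivity) ?_ (by positivity) ?_
  · have hb1 : ((r - 2*k : ℕ) : ℝ) ≤ (r : ℝ) := Nat.cast_le.2 (by omega)
    have hb2 : ((r - 2*k - 1 : ℕ) : ℝ) ≤ (r : ℝ) := Nat.cast_le.2 (by omega)
    have hb3 : (0:ℝ) ≤ ((r - 2*k : ℕ) : ℝ) := Nat.cast_nonneg _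
    have hb4 : (0:ℝ) ≤ ((r - 2*k - 1 : ℕ) : ℝ) := Nat.cast_nonneg _
    have hr0 : (0:ℝ) ≤ (r:ℝ) := Nat.cast_nonneg _
    have key : ((r - 2*k : ℕ) : ℝ) * ((r - 2*k - 1 : ℕ) : ℝ) ≤ (r:ℝ)^2 := by
      calc ((r - 2*k : ℕ) : ℝ) * ((r - 2*k - 1 : ℕ) : ℝ) ≤ (r:ℝ) * (r:ℝ) :=
            mul_le_mul hb1 hb2 hb4 hr0
        _ = (r:ℝ)^2 := (sq (r:ℝ)).symm
    exact mul_le_mul_of_nonneg_left key (by positivity)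
  · have hle : (n:ℝ) - 2*r ≤ ((n - 2*r + k : ℕ) : ℝ) + 1 := by
      have hh : ((n - 2*r : ℕ) : ℝ) ≤ ((n - 2*r + k : ℕ) : ℝ) := Nat.cast_le.2 (by omega)
      have e : ((n - 2*r : ℕ) : ℝ) = (n:ℝ) - 2*r := by
        push_cast [Nat.cast_sub (by omega : 2*r ≤ n)]; ring
      linarith
    have hm2sq : (0:ℝ) ≤ 3 * m 2 ^ 2 := by positivity
    have hk1 : (0:ℝ) ≤ (k:ℝ) + 1 := by positivity
    exact mul_le_mul_of_nonneg_right (mul_le_mul_of_nonneg_left hle hm2sq) hk1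

lemma W_le_W0 (m : ℕ → ℝ) (h1 : 0 < m 1) (h2 : 0 < m 2) (h3 : 0 < m 3)
    (n r : ℕ) (hr : 0 < r) (hrn : 2*r < n) (j : ℕ) (hj : 2*j ≤ r) :
    W m n r j ≤ W m n r 0 *
      ((2 * m 1 * m 3 / (3 * (m 2) ^ 2) * (r : ℝ) ^ 2 / ((n : ℝ) - 2 * r)) ^ j / (j ! : ℝ)) := by
  have hn2r : (0:ℝ) < (n:ℝ) - 2*r := by
    have : ((2*r : ℕ) : ℝ) < (n : ℕ) := Nat.cast_lt.2 hrn
    push_cast at this; linarith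
  have hy : 0 ≤ 2 * m 1 * m 3 / (3 * (m 2) ^ 2) * (r : ℝ) ^ 2 / ((n : ℝ) - 2 * r) := by
    apply div_nonneg ?_ hn2r.le
    positivity
  set y := 2 * m 1 * m 3 / (3 * (m 2) ^ 2) * (r : ℝ) ^ 2 / ((n : ℝ) - 2 * r) with hydef
  induction j with
  | zero => simp
  | succ k ih =>
    have hk : 2*k ≤ r := by omega
    calc W m n r (k+1) ≤ W m n r k * (y/((k:ℝ)+1)) := W_step m h1 h2 h3 n r k hr hrn hj
      _ ≤ (W m n r 0 * (y^k/((k !) : ℝ))) * (y/((k:ℝ)+1)) := by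
          apply mul_le_mul_of_nonneg_right (ih hk) (by positivity)
      _ = W m n r 0 * (y^(k+1)/(((k+1)! : ℕ) : ℝ)) := by
          rw [Nat.factorial_succ]
          have d3 : ((k !) : ℝ) ≠ 0 := Nat.cast_ne_zero.2 (Nat.factorial_ne_zero _)
          push_cast
          field_simp
          ring

lemma expsum (y : ℝ) (hy : 0 ≤ y) (N : ℕ) :
    ∑ j ∈ Finset.Icc 1 N, y^j/((j ! : ℕ) : ℝ) ≤ Real.exp y - 1 := by
  have h := Real.sum_le_exp_of_nonneg hy (N+1)
  rw [Finset.sum_range_succ'] at h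
  norm_num at h
  have e : ∑ j ∈ Finset.Icc 1 N, y^j/((j ! : ℕ) : ℝ)
      = ∑ i ∈ Finset.range N, y^(i+1)/(((i+1)! : ℕ) : ℝ) := by
    rw [← Finset.Ico_add_one_right_eq_Icc, Finset.sum_Ico_eq_sum_range]
    refine Finset.sum_congr (by norm_num) (fun i _ => by rw [add_comm 1 i])
  rw [e]; linarith

lemma W0_le (m : ℕ → ℝ) (hm : ∀ i, 0 ≤ m i) (n r : ℕ) (hr : 0 < r) (hrn : 2*r < n) :
    W m n r 0 ≤ assemblyCount m n (n - r) := by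
  unfold assemblyCount
  rw [← term_eq m n r 0 hr hrn (by omega)]
  apply Finset.single_le_sum
    (f := fun a : Fin (n+1) → Fin (n+1) => (n ! : ℝ) * ∏ i : Fin (n + 1),
      m i.1 ^ (a i).1 / (((a i).1 ! : ℝ) * ((i.1 ! : ℝ)) ^ (a i).1))
  · intro a _
    apply mul_nonneg (Nat.cast_nonneg _)
    apply Finset.prod_nonneg
    intro i _
    apply div_nonneg (pow_nonneg (hm _) _)
    positivity
  · obtain ⟨q1, q2, q3, _⟩ := cv_sums n r 0 hr hrn (by omega)
    simp only [Finset.mem_filter, Finset.mem_univ, true_and]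
    exact ⟨q1, q2, q3⟩

end Stmt8Aux

/-- picking uniformly among the M-assemblies of size n of rank r
(k = n - r components), where m1, m2, m3 > 0 and 0 < r < n/2, the probability
that the largest component has size exactly 3 is at most e^y - 1 with
y = (2 m1 m3/(3 m2²)) r²/(n - 2r); equivalently (multiplying through by p(n,n-r)):
#(assemblies with L₁ = 3) ≤ (e^y - 1) · p(n, n-r). -/
theorem stmt_8 (m : ℕ → ℝ) (hm : ∀ i, 0 ≤ m i)
    (h1 : 0 < m 1) (h2 : 0 < m 2) (h3 : 0 < m 3)
    (n r : ℕ) (hr : 0 < r) (hrn : 2 * r < n) :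
    assemblyCountL1eq3 m n (n - r) ≤
      (Real.exp (2 * m 1 * m 3 / (3 * (m 2) ^ 2) * (r : ℝ) ^ 2 / ((n : ℝ) - 2 * r)) - 1) *
        assemblyCount m n (n - r) := by
  open Stmt8Aux in
  have hn2r : (0:ℝ) < (n:ℝ) - 2*r := by
    have : ((2*r : ℕ) : ℝ) < (n : ℕ) := Nat.cast_lt.2 hrn
    push_cast at this; linarith
  set y := 2 * m 1 * m 3 / (3 * (m 2) ^ 2) * (r : ℝ) ^ 2 / ((n : ℝ) - 2 * r) with hydef
  have hy : 0 ≤ y := by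
    apply div_nonneg ?_ hn2r.le
    positivity
  have hW0 : 0 < W m n r 0 := W_pos m h1 h2 h3 n r 0
  calc assemblyCountL1eq3 m n (n - r) = ∑ j ∈ Finset.Icc 1 (r/2), W m n r j :=
        sumL1 m n r hr hrn
    _ ≤ ∑ j ∈ Finset.Icc 1 (r/2), W m n r 0 * (y^j/((j ! : ℕ) : ℝ)) := by
        apply Finset.sum_le_sum
        intro j hj
        simp only [Finset.mem_Icc] at hj
        exact W_le_W0 m h1 h2 h3 n r hr hrn j (by omega)
    _ = W m n r 0 * ∑ j ∈ Finset.Icc 1 (r/2), y^j/((j ! : ℕ) : ℝ) := by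
        rw [Finset.mul_sum]
    _ ≤ W m n r 0 * (Real.exp y - 1) := by
        apply mul_le_mul_of_nonneg_left (expsum y hy (r/2)) hW0.le
    _ ≤ assemblyCount m n (n - r) * (Real.exp y - 1) := by
        apply mul_le_mul_of_nonneg_right (W0_le m hm n r hr hrn)
        have := Real.one_le_exp hy
        linarith
    _ = (Real.exp y - 1) * assemblyCount m n (n - r) := mul_comm _ _
end

section
/- Let m_i ≥ 0 with m_1 > 0, ρ := sup_{i ≥ 3} (m_i/i!)^{1/i} < ∞, and x > 0 with x ρ ≤ 1/2. Then ∑_{i ≥ 3} m_i x^i / i! ≤ 2 ρ³ x³, and if X has distribution P(X = i) = (m_{i+1} x^{i+1}/(i+1)!)/M(x) for i ≥ 0, then P(X ≥ 2) ≤ 2 ρ³ x² / m_1 and P(X ≥ 3) ≤ 2 ρ⁴ x³ / m_1. -/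
open scoped Nat

/-- with m_i ≥ 0, m_1 > 0, ρ an upper bound for (m_i/i!)^{1/i} over
i ≥ 3 (i.e. m_i/i! ≤ ρ^i for i ≥ 3), and 0 < x with xρ ≤ 1/2:
∑_{i≥3} m_i x^i/i! ≤ 2ρ³x³; and for X with P(X = i) = (m_{i+1}x^{i+1}/(i+1)!)/M(x),
P(X ≥ 2) ≤ 2ρ³x²/m_1 and P(X ≥ 3) ≤ 2ρ⁴x³/m_1. -/
theorem stmt_9 (m : ℕ → ℝ) (hm : ∀ i, 0 ≤ m i) (hm1 : 0 < m 1)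
    (ρ x : ℝ) (hρ0 : 0 ≤ ρ)
    (hρ : ∀ i, 3 ≤ i → m i / (i ! : ℝ) ≤ ρ ^ i)
    (hx : 0 < x) (hxρ : x * ρ ≤ 1 / 2) :
    (∑' i : ℕ, m (i + 3) * x ^ (i + 3) / ((i + 3)! : ℝ)) ≤ 2 * ρ ^ 3 * x ^ 3 ∧
    (∑' i : ℕ, m (i + 3) * x ^ (i + 3) / ((i + 3)! : ℝ)) /
        (∑' i : ℕ, m (i + 1) * x ^ (i + 1) / ((i + 1)! : ℝ)) ≤ 2 * ρ ^ 3 * x ^ 2 / m 1 ∧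
    (∑' i : ℕ, m (i + 4) * x ^ (i + 4) / ((i + 4)! : ℝ)) /
        (∑' i : ℕ, m (i + 1) * x ^ (i + 1) / ((i + 1)! : ℝ)) ≤ 2 * ρ ^ 4 * x ^ 3 / m 1 := by
  set r := x * ρ with hrdef
  have hr0 : 0 ≤ r := mul_nonneg hx.le hρ0
  have hr1 : r < 1 := lt_of_le_of_lt hxρ (by norm_num)
  have hnn : ∀ n : ℕ, 0 ≤ m n * x ^ n / (n ! : ℝ) := fun n =>
    div_nonneg (mul_nonneg (hm n) (pow_nonneg hx.le n)) (Nat.cast_nonneg _)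
  have hterm : ∀ n : ℕ, 3 ≤ n → m n * x ^ n / (n ! : ℝ) ≤ r ^ n := by
    intro n hn
    have h1 : m n / (n ! : ℝ) ≤ ρ ^ n := hρ n hn
    have h2 : m n * x ^ n / (n ! : ℝ) = (m n / (n ! : ℝ)) * x ^ n := by ring
    rw [h2, hrdef, mul_pow]
    calc m n / (n ! : ℝ) * x ^ n ≤ ρ ^ n * x ^ n :=
          mul_le_mul_of_nonneg_right h1 (pow_nonneg hx.le n)
      _ = x ^ n * ρ ^ n := mul_comm _ _
  have hgeo : Summable (fun i : ℕ => r ^ i) := summable_geometric_of_lt_one hr0 hr1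
  have hinv : (1 - r)⁻¹ ≤ 2 := by
    rw [inv_le_comm₀ (by linarith) (by norm_num)]
    linarith
  -- general tail bound
  have tail : ∀ k : ℕ, 3 ≤ k →
      Summable (fun i : ℕ => m (i + k) * x ^ (i + k) / ((i + k)! : ℝ)) ∧
      (∑' i : ℕ, m (i + k) * x ^ (i + k) / ((i + k)! : ℝ)) ≤ 2 * r ^ k := by
    intro k hk
    have hgk : Summable (fun i : ℕ => r ^ k * r ^ i) := hgeo.mul_left _
    have hgk' : Summable (fun i : ℕ => r ^ (i + k)) := by
      refine hgk.congr fun i => ?_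
      rw [pow_add, mul_comm]
    have hs : Summable (fun i : ℕ => m (i + k) * x ^ (i + k) / ((i + k)! : ℝ)) :=
      Summable.of_nonneg_of_le (fun i => hnn _) (fun i => hterm (i + k) (by omega)) hgk'
    refine ⟨hs, ?_⟩
    calc (∑' i : ℕ, m (i + k) * x ^ (i + k) / ((i + k)! : ℝ))
        ≤ ∑' i : ℕ, r ^ (i + k) :=
          Summable.tsum_le_tsum (fun i => hterm (i + k) (by omega)) hs hgk'
      _ = ∑' i : ℕ, r ^ k * r ^ i := by
          refine tsum_congr fun i => ?_
          rw [pow_add, mul_comm]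
      _ = r ^ k * (1 - r)⁻¹ := by
          rw [tsum_mul_left, tsum_geometric_of_lt_one hr0 hr1]
      _ ≤ r ^ k * 2 := mul_le_mul_of_nonneg_left hinv (pow_nonneg hr0 k)
      _ = 2 * r ^ k := mul_comm _ _
  obtain ⟨hs3, ht3⟩ := tail 3 (by norm_num)
  obtain ⟨hs4, ht4⟩ := tail 4 (by norm_num)
  have hr3 : 2 * r ^ 3 = 2 * ρ ^ 3 * x ^ 3 := by rw [hrdef]; ring
  have hr4 : 2 * r ^ 4 = 2 * ρ ^ 4 * x ^ 4 := by rw [hrdef]; ring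
  -- denominator
  have hsden : Summable (fun i : ℕ => m (i + 1) * x ^ (i + 1) / ((i + 1)! : ℝ)) := by
    rw [← summable_nat_add_iff 2]
    exact hs3.congr fun i => by norm_num [add_comm, add_assoc, add_left_comm]
  have hden : m 1 * x ≤ ∑' i : ℕ, m (i + 1) * x ^ (i + 1) / ((i + 1)! : ℝ) := by
    have := Summable.le_tsum hsden 0 (fun j _ => hnn (j + 1))
    simpa using this
  have hdenpos : 0 < m 1 * x := mul_pos hm1 hx
  refine ⟨by rw [← hr3]; exact ht3, ?_, ?_⟩
  · calc (∑' i : ℕ, m (i + 3) * x ^ (i + 3) / ((i + 3)! : ℝ)) /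
          (∑' i : ℕ, m (i + 1) * x ^ (i + 1) / ((i + 1)! : ℝ))
        ≤ (2 * r ^ 3) / (m 1 * x) :=
          div_le_div₀ (by positivity) ht3 hdenpos hden
      _ = 2 * ρ ^ 3 * x ^ 2 / m 1 := by
          rw [hrdef]; field_simp
  · calc (∑' i : ℕ, m (i + 4) * x ^ (i + 4) / ((i + 4)! : ℝ)) /
          (∑' i : ℕ, m (i + 1) * x ^ (i + 1) / ((i + 1)! : ℝ))
        ≤ (2 * r ^ 4) / (m 1 * x) :=
          div_le_div₀ (by positivity) ht4 hdenpos hden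
      _ = 2 * ρ ^ 4 * x ^ 3 / m 1 := by
          rw [hrdef]; field_simp
end

section
/- Let X_1,...,X_k be i.i.d. nonnegative-integer random variables with P(X = i) = (m_{i+1} x^{i+1}/(i+1)!)/M(x), where m_1, m_2 > 0, ρ := sup_{i≥3}(m_i/i!)^{1/i} < ∞, x = 2 m_1 r / (m_2 (n - 2r)), k = n - r, 0 < r < n/2, and assume xρ ≤ 1/2 and 2 k ρ³ x² / m_1 ≤ 1/2. Then P(X_1 + ... + X_k = r) ≥ 1/(2 c_0 √(2π r)) with c_0 = e/√(2π). -/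
open MeasureTheory ProbabilityTheory Finset
open scoped Nat ENNReal

section auxx
open scoped Nat

lemma aux_one_add (d : ℕ) : ((d : ℝ) + 1) ^ d ≤ Real.exp 1 * (d : ℝ) ^ d := by
  rcases Nat.eq_zero_or_pos d with hd | hd
  · subst hd; simp
  · have hd0 : (0:ℝ) < d := by exact_mod_cast hd
    have h1 : ((d : ℝ) + 1) = (1 + 1 / d) * d := by field_simp
    have h2 : (1 + 1 / (d:ℝ)) ≤ Real.exp (1 / d) := by
      have := Real.add_one_le_exp (1 / (d:ℝ)); linarith
    calc ((d : ℝ) + 1) ^ d = (1 + 1 / (d:ℝ)) ^ d * (d:ℝ) ^ d := by rw [h1, mul_pow]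
      _ ≤ Real.exp (1 / d) ^ d * (d:ℝ) ^ d := by
          gcongr
      _ = Real.exp 1 * (d:ℝ) ^ d := by
          rw [← Real.exp_nat_mul]
          congr 2
          field_simp

lemma aux_desc : ∀ (r d : ℕ),
    ((r + d : ℕ) : ℝ) ^ (r + d) ≤
      Real.exp 1 ^ r * (d : ℝ) ^ d * (((r + d).descFactorial r : ℕ) : ℝ) := by
  intro r
  induction r with
  | zero => intro d; simp
  | succ r ih =>
    intro d
    have hK : r + 1 + d = r + (d + 1) := by omega
    have ihd := ih (d + 1)
    have hdesc : (r + 1 + d).descFactorial (r + 1)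
        = (d + 1) * (r + 1 + d).descFactorial r := by
      rw [Nat.descFactorial_succ]
      congr 1
      omega
    have hA := aux_one_add d
    have hD : (0:ℝ) ≤ (((r + 1 + d).descFactorial r : ℕ) : ℝ) := by positivity
    have hE : (0:ℝ) < Real.exp 1 ^ r := by positivity
    rw [hK] at *
    rw [hdesc]
    push_cast
    push_cast at ihd
    calc ((r:ℝ) + (d + 1)) ^ (r + (d + 1))
        ≤ Real.exp 1 ^ r * ((d:ℝ) + 1) ^ (d + 1) * (((r + (d + 1)).descFactorial r : ℕ) : ℝ) := by
          push_cast at ihd ⊢; convert ihd using 2 <;> push_cast <;> ring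
      _ = Real.exp 1 ^ r * (((d:ℝ) + 1) ^ d * ((d:ℝ) + 1)) * (((r + (d + 1)).descFactorial r : ℕ) : ℝ) := by
          ring
      _ ≤ Real.exp 1 ^ r * ((Real.exp 1 * (d:ℝ) ^ d) * ((d:ℝ) + 1)) * (((r + (d + 1)).descFactorial r : ℕ) : ℝ) := by
          gcongr
      _ = Real.exp 1 ^ (r + 1) * (d : ℝ) ^ d * (((d:ℝ) + 1) * (((r + (d + 1)).descFactorial r : ℕ) : ℝ)) := by
          rw [pow_succ]; ring

lemma aux_factorial_le (r : ℕ) (hr : 1 ≤ r) :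
    (r ! : ℝ) ≤ Real.exp 1 * Real.sqrt r * ((r : ℝ) ^ r / Real.exp 1 ^ r) := by
  have h1 : Stirling.stirlingSeq r ≤ Stirling.stirlingSeq 1 := by
    obtain ⟨s, rfl⟩ := Nat.exists_eq_add_of_le' hr
    exact Stirling.stirlingSeq'_antitone (Nat.zero_le s)
  rw [Stirling.stirlingSeq_one] at h1
  have hr0 : (0:ℝ) < r := by exact_mod_cast hr
  have hden : (0:ℝ) < Real.sqrt (2 * r) * ((r : ℝ) / Real.exp 1) ^ r := by positivity
  have h2 : (r ! : ℝ) ≤ Real.exp 1 / Real.sqrt 2 * (Real.sqrt (2 * r) * ((r : ℝ) / Real.exp 1) ^ r) := by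
    have := (div_le_iff₀ hden).mp (by simpa [Stirling.stirlingSeq] using h1)
    exact this
  calc (r ! : ℝ) ≤ Real.exp 1 / Real.sqrt 2 * (Real.sqrt (2 * r) * ((r : ℝ) / Real.exp 1) ^ r) := h2
    _ = Real.exp 1 * Real.sqrt r * ((r : ℝ) ^ r / Real.exp 1 ^ r) := by
        rw [Real.sqrt_mul (by norm_num : (0:ℝ) ≤ 2), div_pow]
        have hs2 : Real.sqrt 2 ≠ 0 := by positivity
        field_simp

lemma aux_binom (r d : ℕ) (hr : 1 ≤ r) (hd : 1 ≤ d) :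
    1 / (Real.exp 1 * Real.sqrt r) ≤
      (((r + d).choose r : ℕ) : ℝ) * ((r : ℝ) / (r + d)) ^ r * ((d : ℝ) / (r + d)) ^ d := by
  set k := r + d with hk
  have hr0 : (0:ℝ) < r := by exact_mod_cast hr
  have hd0 : (0:ℝ) < d := by exact_mod_cast hd
  have hk0 : (0:ℝ) < (k:ℝ) := by positivity
  have hfac : (0:ℝ) < (r ! : ℝ) := by exact_mod_cast r.factorial_pos
  have hchoose : ((k.descFactorial r : ℕ) : ℝ) = (r ! : ℝ) * (k.choose r : ℝ) := by
    exact_mod_cast congrArg (Nat.cast (R := ℝ)) (Nat.descFactorial_eq_factorial_mul_choose k r)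
  -- rewrite RHS as a single fraction
  have hRHS : ((k.choose r : ℕ) : ℝ) * ((r : ℝ) / k) ^ r * ((d : ℝ) / k) ^ d
      = ((k.descFactorial r : ℕ) : ℝ) * (r:ℝ) ^ r * (d:ℝ) ^ d / ((r ! : ℝ) * (k:ℝ) ^ k) := by
    rw [hchoose, div_pow, div_pow, hk, pow_add]
    field_simp
  have hck : ((r:ℝ) + (d:ℝ)) = (k:ℝ) := by rw [hk]; push_cast; ring
  rw [hck, hRHS, div_le_div_iff₀ (by positivity) (by positivity), one_mul]
  have hB := aux_desc r d
  have hC := aux_factorial_le r hr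
  have hsq : (0:ℝ) < Real.sqrt r := Real.sqrt_pos.mpr hr0
  have hexp : (0:ℝ) < Real.exp 1 ^ r := by positivity
  calc (r ! : ℝ) * (k:ℝ) ^ k
      ≤ (Real.exp 1 * Real.sqrt r * ((r : ℝ) ^ r / Real.exp 1 ^ r)) *
        (Real.exp 1 ^ r * (d : ℝ) ^ d * ((k.descFactorial r : ℕ) : ℝ)) := by
        apply mul_le_mul hC hB (by positivity) (by positivity)
    _ = ((k.descFactorial r : ℕ) : ℝ) * (r:ℝ) ^ r * (d:ℝ) ^ d * (Real.exp 1 * Real.sqrt r) := by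
        field_simp
end auxx

set_option maxHeartbeats 1000000

/-- with X_1,...,X_k i.i.d., P(X = i) = (m_{i+1}x^{i+1}/(i+1)!)/M(x),
m_1, m_2 > 0, ρ ≥ (m_i/i!)^{1/i} for i ≥ 3, x = 2m_1 r/(m_2(n-2r)), k = n-r,
0 < r < n/2, xρ ≤ 1/2 and 2kρ³x²/m_1 ≤ 1/2:
P(X_1 + ⋯ + X_k = r) ≥ 1/(2 c₀ √(2πr)) where c₀ = e/√(2π). -/
theorem stmt_10 (m : ℕ → ℝ) (hm : ∀ i, 0 ≤ m i) (h1 : 0 < m 1) (h2 : 0 < m 2)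
    (ρ : ℝ) (hρ0 : 0 ≤ ρ) (hρ : ∀ i, 3 ≤ i → m i / (i ! : ℝ) ≤ ρ ^ i)
    (n r k : ℕ) (hr : 0 < r) (hrn : 2 * r < n) (hk : k = n - r)
    (x : ℝ) (hx : x = 2 * m 1 * (r : ℝ) / (m 2 * ((n : ℝ) - 2 * r)))
    (hxρ : x * ρ ≤ 1 / 2)
    (hsmall : 2 * (k : ℝ) * ρ ^ 3 * x ^ 2 / m 1 ≤ 1 / 2)
    {Ω : Type} [MeasurableSpace Ω] (μ : Measure Ω) [IsProbabilityMeasure μ]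
    (X : Fin k → Ω → ℕ) (hmeas : ∀ j, Measurable (X j))
    (hindep : iIndepFun X μ)
    (hdist : ∀ j, ∀ i : ℕ, μ {ω | X j ω = i} = ENNReal.ofReal
      ((m (i + 1) * x ^ (i + 1) / ((i + 1)! : ℝ)) /
        (∑' l : ℕ, m (l + 1) * x ^ (l + 1) / ((l + 1)! : ℝ)))) :
    ENNReal.ofReal (1 / (2 * (Real.exp 1 / Real.sqrt (2 * Real.pi)) *
        Real.sqrt (2 * Real.pi * r))) ≤
      μ {ω | (∑ j, X j ω) = r} := by
  -- basic numerics
  set d : ℕ := k - r with hd_def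
  have hkd : k = r + d := by omega
  have hd1 : 1 ≤ d := by omega
  have hrk : r < k := by omega
  have hk1 : 1 ≤ k := by omega
  have hn2r : (0:ℝ) < (n : ℝ) - 2 * r := by
    have : (2 * r : ℕ) < n := hrn
    have := Nat.cast_lt (α := ℝ).mpr this
    push_cast at this ⊢; linarith
  have hdcast : (d : ℝ) = (n : ℝ) - 2 * r := by
    have : d = n - 2 * r := by omega
    rw [this]
    have h2rn : 2 * r ≤ n := le_of_lt hrn
    push_cast [Nat.cast_sub h2rn]
    ring
  have hx0 : 0 < x := by
    rw [hx]
    apply div_pos (by positivity) (by positivity)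
  have hxρ0 : 0 ≤ x * ρ := mul_nonneg hx0.le hρ0
  -- the weights
  set q : ℕ → ℝ := fun i => m (i + 1) * x ^ (i + 1) / ((i + 1)! : ℝ) with hq_def
  have hq0 : ∀ i, 0 ≤ q i := fun i => by
    have := hm (i + 1); positivity
  have hq00 : q 0 = m 1 * x := by simp [hq_def]
  have hq01 : q 1 = m 2 * x ^ 2 / 2 := by norm_num [hq_def]
  have hq0pos : 0 < q 0 := by rw [hq00]; positivity
  have hqle : ∀ i, 2 ≤ i → q i ≤ (x * ρ) ^ (i + 1) := by
    intro i hi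
    have h3 : 3 ≤ i + 1 := by omega
    have hfac : (0:ℝ) < ((i+1)! : ℝ) := by exact_mod_cast (i+1).factorial_pos
    have := hρ (i + 1) h3
    have hxp : (0:ℝ) ≤ x ^ (i+1) := by positivity
    calc q i = m (i+1) / ((i+1)! : ℝ) * x ^ (i+1) := by rw [hq_def]; ring
      _ ≤ ρ ^ (i+1) * x ^ (i+1) := by gcongr
      _ = (x * ρ) ^ (i+1) := by rw [mul_pow]; ring
  have hgeo : Summable (fun l : ℕ => (x * ρ) ^ l) :=
    summable_geometric_of_lt_one hxρ0 (by linarith)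
  have hsum : Summable q := by
    rw [← summable_nat_add_iff 2]
    apply Summable.of_nonneg_of_le (fun l => hq0 _) (fun l => hqle (l + 2) (by omega))
    have : Summable (fun l : ℕ => (x * ρ) ^ 3 * (x * ρ) ^ l) := hgeo.mul_left _
    apply this.congr
    intro l
    rw [← pow_add]
    congr 1
    omega
  set M : ℝ := ∑' l : ℕ, q l with hM_def
  have hsum1 : Summable (fun l => q (l + 1)) := by rw [summable_nat_add_iff 1]; exact hsum
  have hsum2 : Summable (fun l => q (l + 2)) := by rw [summable_nat_add_iff 2]; exact hsum
  set T : ℝ := ∑' l : ℕ, q (l + 2) with hT_def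
  have hMsplit : M = q 0 + q 1 + T := by
    rw [hM_def, Summable.tsum_eq_zero_add hsum, Summable.tsum_eq_zero_add hsum1]
    ring
  have hT0 : 0 ≤ T := tsum_nonneg (fun l => hq0 _)
  have hTle : T ≤ 2 * (x * ρ) ^ 3 := by
    have h1' : T ≤ ∑' l : ℕ, (x * ρ) ^ (l + 3) := by
      apply Summable.tsum_le_tsum (fun l => hqle (l + 2) (by omega)) hsum2
      apply ((hgeo.mul_left ((x*ρ)^3)).congr)
      intro l; rw [← pow_add]; congr 1; omega
    have h2' : ∑' l : ℕ, (x * ρ) ^ (l + 3) = (x * ρ) ^ 3 * (1 - x * ρ)⁻¹ := by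
      have : ∀ l : ℕ, (x * ρ) ^ (l + 3) = (x * ρ) ^ 3 * (x * ρ) ^ l := by
        intro l; rw [← pow_add]; congr 1; omega
      rw [tsum_congr this, tsum_mul_left, tsum_geometric_of_lt_one hxρ0 (by linarith)]
    have h3' : (1 - x * ρ)⁻¹ ≤ 2 := by
      rw [inv_le_comm₀ (by linarith) (by norm_num)]
      linarith
    calc T ≤ (x * ρ) ^ 3 * (1 - x * ρ)⁻¹ := by rw [← h2']; exact h1'
      _ ≤ (x * ρ) ^ 3 * 2 := by gcongr <;> positivity
      _ = 2 * (x * ρ) ^ 3 := by ring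
  have hMpos : 0 < M := by
    rw [hMsplit]
    have := hq0 1
    linarith
  have hMge : q 0 ≤ M := by
    rw [hMsplit]; have := hq0 1; linarith
  -- tail over q0 small
  have hTq0 : T / M ≤ 1 / (2 * k) := by
    have hk0 : (0:ℝ) < k := by exact_mod_cast hk1
    have step1 : T / M ≤ T / q 0 := by
      apply div_le_div_of_nonneg_left hT0 hq0pos hMge
    have step2 : T / q 0 ≤ 2 * ρ ^ 3 * x ^ 2 / m 1 := by
      rw [div_le_div_iff₀ hq0pos (by positivity), hq00]
      calc T * (m 1) ≤ 2 * (x * ρ) ^ 3 * m 1 := by gcongr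
        _ = 2 * ρ ^ 3 * x ^ 2 * (m 1 * x) := by ring
    have step3 : 2 * ρ ^ 3 * x ^ 2 / m 1 ≤ 1 / (2 * k) := by
      rw [div_le_div_iff₀ h1 (by positivity)]
      have := (div_le_iff₀ h1).mp hsmall
      nlinarith [h1, hk0]
    linarith
  -- probabilities
  set p : ℕ → ℝ := fun i => q i / M with hp_def
  have hp_nonneg : ∀ i, 0 ≤ p i := fun i => div_nonneg (hq0 i) hMpos.le
  set S : ℝ := p 0 + p 1 with hS_def
  have hS0 : 0 ≤ S := add_nonneg (hp_nonneg 0) (hp_nonneg 1)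
  have hSeq : S = (q 0 + q 1) / M := by rw [hS_def, hp_def]; ring
  have hS_lb : 1 - 1 / (2 * k) ≤ S := by
    have : S = 1 - T / M := by
      rw [hSeq, hMsplit]
      have hM' : q 0 + q 1 + T ≠ 0 := by rw [← hMsplit]; exact hMpos.ne'
      rw [eq_sub_iff_add_eq, ← add_div, div_self hM']
    rw [this]
    linarith
  -- the ratio identity q 1 * d = q 0 * r
  have hratio : q 1 * d = q 0 * r := by
    rw [hq00, hq01, hdcast, hx]
    have hne : (n:ℝ) - 2 * r ≠ 0 := ne_of_gt hn2r
    field_simp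
  have hkcast : (k : ℝ) = (r : ℝ) + d := by exact_mod_cast congrArg (Nat.cast (R := ℝ)) hkd
  have hk0' : (0:ℝ) < (k:ℝ) := by exact_mod_cast hk1
  have hq1k : q 1 * (k:ℝ) = (r:ℝ) * (q 0 + q 1) := by
    rw [hkcast]; linear_combination hratio
  have hq0k : q 0 * (k:ℝ) = (d:ℝ) * (q 0 + q 1) := by
    rw [hkcast]; linear_combination (-1 : ℝ) * hratio
  have hp1 : p 1 = (r : ℝ) * S / k := by
    rw [eq_div_iff (ne_of_gt hk0')]
    simp only [hS_def, hp_def]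
    rw [← add_div, div_mul_eq_mul_div, ← mul_div_assoc, hq1k]
  have hp0 : p 0 = (d : ℝ) * S / k := by
    rw [eq_div_iff (ne_of_gt hk0')]
    simp only [hS_def, hp_def]
    rw [← add_div, div_mul_eq_mul_div, ← mul_div_assoc, hq0k]
  -- power bound
  have hSpow : (1:ℝ)/2 ≤ S ^ k := by
    have hbase : (0:ℝ) ≤ 1 - 1 / (2 * k) := by
      have hk1' : (1:ℝ) ≤ (k:ℝ) := by exact_mod_cast hk1
      have : 1 / (2 * (k:ℝ)) ≤ 1 / 2 := by
        apply div_le_div_of_nonneg_left one_pos.le (by norm_num)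
        linarith
      linarith
    have h1' : 1 + (k:ℝ) * (-(1 / (2 * k))) ≤ (1 + (-(1 / (2 * (k:ℝ))))) ^ k := by
      apply one_add_mul_le_pow
      have : (0:ℝ) ≤ 1 / (2 * (k:ℝ)) := by positivity
      linarith
    have h2' : 1 + (k:ℝ) * (-(1 / (2 * k))) = 1/2 := by field_simp; ring
    calc (1:ℝ)/2 = 1 + (k:ℝ) * (-(1 / (2 * k))) := h2'.symm
      _ ≤ (1 - 1 / (2 * (k:ℝ))) ^ k := by rw [← sub_eq_add_neg] at h1'; exact h1'
      _ ≤ S ^ k := by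
        apply pow_le_pow_left₀ hbase hS_lb
  -- the product value
  have hprod_val : p 1 ^ r * p 0 ^ d = ((r:ℝ)/k) ^ r * ((d:ℝ)/k) ^ d * S ^ k := by
    have e1 : (r:ℝ) * S / k = (r:ℝ)/k * S := by ring
    have e0 : (d:ℝ) * S / k = (d:ℝ)/k * S := by ring
    rw [hp1, hp0, e1, e0, mul_pow, mul_pow, hkd, pow_add]
    ring
  -- the real lower bound
  have hreal : 1 / (2 * (Real.exp 1 / Real.sqrt (2 * Real.pi)) * Real.sqrt (2 * Real.pi * r))
      ≤ (k.choose r : ℝ) * (p 1 ^ r * p 0 ^ d) := by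
    have hsqrt2pi : (0:ℝ) < Real.sqrt (2 * Real.pi) := Real.sqrt_pos.mpr (by positivity)
    have hr0' : (0:ℝ) < r := by exact_mod_cast hr
    have hLHS : 1 / (2 * (Real.exp 1 / Real.sqrt (2 * Real.pi)) * Real.sqrt (2 * Real.pi * r))
        = 1 / (Real.exp 1 * Real.sqrt r) * (1/2) := by
      rw [show (2:ℝ) * Real.pi * r = (2 * Real.pi) * r by ring,
        Real.sqrt_mul (by positivity) (r:ℝ)]
      field_simp
    rw [hLHS]
    have hbinom := aux_binom r d (by omega) hd1
    rw [← hkd] at hbinom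
    have hcast2 : ((r:ℝ) + (d:ℝ)) = (k:ℝ) := hkcast.symm
    rw [hcast2] at hbinom
    calc 1 / (Real.exp 1 * Real.sqrt r) * (1/2)
        ≤ ((k.choose r : ℝ) * ((r:ℝ)/k) ^ r * ((d:ℝ)/k) ^ d) * S ^ k := by
          apply mul_le_mul hbinom hSpow (by norm_num) (by positivity)
      _ = (k.choose r : ℝ) * (p 1 ^ r * p 0 ^ d) := by rw [hprod_val]; ring
  -- the events
  classical
  have hdist' : ∀ (j : Fin k) (i : ℕ), μ {ω | X j ω = i} = ENNReal.ofReal (p i) :=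
    fun j i => hdist j i
  set A : Finset (Finset (Fin k)) := Finset.powersetCard r Finset.univ with hA_def
  set E : Finset (Fin k) → Set Ω :=
    fun s => ⋂ j, {ω | X j ω = (if j ∈ s then 1 else 0)} with hE_def
  have hcardA : ∀ s ∈ A, s.card = r := by
    intro s hs
    rw [hA_def] at hs
    exact (Finset.mem_powersetCard.mp hs).2
  have hEmeas : ∀ s, MeasurableSet (E s) := by
    intro s
    apply MeasurableSet.iInter
    intro j
    exact hmeas j (measurableSet_singleton _)
  have hEdisj : (↑A : Set (Finset (Fin k))).PairwiseDisjoint E := by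
    intro s _ t _ hst
    rw [Function.onFun, Set.disjoint_left]
    intro ω hs ht
    have hj : ∃ j, ¬ (j ∈ s ↔ j ∈ t) := by
      by_contra hcon
      push_neg at hcon
      exact hst (Finset.ext fun j => hcon j)
    obtain ⟨j, hj⟩ := hj
    rw [hE_def] at hs ht
    simp only [Set.mem_iInter, Set.mem_setOf_eq] at hs ht
    have h1 := hs j
    have h2 := ht j
    by_cases hjs : j ∈ s <;> by_cases hjt : j ∈ t
    · exact hj ⟨fun _ => hjt, fun _ => hjs⟩
    · rw [if_pos hjs] at h1; rw [if_neg hjt] at h2; omega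
    · rw [if_neg hjs] at h1; rw [if_pos hjt] at h2; omega
    · exact hj ⟨fun h => absurd h hjs, fun h => absurd h hjt⟩
  have hEsub : ∀ s ∈ A, E s ⊆ {ω | (∑ j, X j ω) = r} := by
    intro s hs ω hω
    have hcard : s.card = r := hcardA s hs
    rw [hE_def] at hω
    simp only [Set.mem_iInter, Set.mem_setOf_eq] at hω
    have hval : ∀ j, X j ω = (if j ∈ s then 1 else 0) := hω
    simp only [Set.mem_setOf_eq]
    calc ∑ j, X j ω = ∑ j, (if j ∈ s then 1 else 0) :=
          Finset.sum_congr rfl (fun j _ => hval j)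
      _ = s.card := by
          rw [Finset.sum_ite_mem, Finset.univ_inter, Finset.sum_const, smul_eq_mul, mul_one]
      _ = r := hcard
  have hprod_eq : ∀ s : Finset (Fin k), s ∈ A →
      (∏ j, p (if j ∈ s then 1 else 0)) = p 1 ^ r * p 0 ^ d := by
    intro s hs
    have hcard : s.card = r := hcardA s hs
    rw [← Finset.prod_sdiff (Finset.subset_univ s)]
    have e1 : ∀ j ∈ Finset.univ \ s, p (if j ∈ s then 1 else 0) = p 0 := by
      intro j hj
      rw [if_neg (Finset.mem_sdiff.mp hj).2]
    have e2 : ∀ j ∈ s, p (if j ∈ s then 1 else 0) = p 1 := by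
      intro j hj
      rw [if_pos hj]
    rw [Finset.prod_congr rfl e1, Finset.prod_congr rfl e2, Finset.prod_const,
      Finset.prod_const, Finset.card_sdiff_of_subset (Finset.subset_univ s), Finset.card_univ,
      Fintype.card_fin, hcard]
    rw [mul_comm]
  have hEval : ∀ s ∈ A, μ (E s) = ENNReal.ofReal (p 1 ^ r * p 0 ^ d) := by
    intro s hs
    have hmi : μ (E s) = ∏ j, μ {ω | X j ω = (if j ∈ s then 1 else 0)} := by
      rw [hE_def]
      apply hindep.meas_iInter
      intro j
      exact ⟨{(if j ∈ s then 1 else 0 : ℕ)}, measurableSet_singleton _, rfl⟩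
    rw [hmi]
    calc (∏ j, μ {ω | X j ω = (if j ∈ s then 1 else 0)})
        = ∏ j, ENNReal.ofReal (p (if j ∈ s then 1 else 0)) :=
          Finset.prod_congr rfl (fun j _ => hdist' j _)
      _ = ENNReal.ofReal (∏ j, p (if j ∈ s then 1 else 0)) :=
          (ENNReal.ofReal_prod_of_nonneg (fun j _ => hp_nonneg _)).symm
      _ = ENNReal.ofReal (p 1 ^ r * p 0 ^ d) := by rw [hprod_eq s hs]
  have hnn : (0:ℝ) ≤ p 1 ^ r * p 0 ^ d :=
    mul_nonneg (pow_nonneg (hp_nonneg 1) _) (pow_nonneg (hp_nonneg 0) _)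
  calc ENNReal.ofReal (1 / (2 * (Real.exp 1 / Real.sqrt (2 * Real.pi)) *
        Real.sqrt (2 * Real.pi * r)))
      ≤ ENNReal.ofReal ((k.choose r : ℝ) * (p 1 ^ r * p 0 ^ d)) :=
        ENNReal.ofReal_le_ofReal hreal
    _ = (k.choose r : ℝ≥0∞) * ENNReal.ofReal (p 1 ^ r * p 0 ^ d) := by
        rw [ENNReal.ofReal_mul (Nat.cast_nonneg _), ENNReal.ofReal_natCast]
    _ = ∑ s ∈ A, μ (E s) := by
        rw [Finset.sum_congr rfl hEval, Finset.sum_const, hA_def,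
          Finset.card_powersetCard, Finset.card_univ, Fintype.card_fin, nsmul_eq_mul]
    _ = μ (⋃ s ∈ A, E s) := (measure_biUnion_finset hEdisj (fun s _ => hEmeas s)).symm
    _ ≤ μ {ω | (∑ j, X j ω) = r} := measure_mono (Set.iUnion₂_subset hEsub)
end

section
/- For the binomial distribution, the point probability at the mean satisfies a uniform lower bound: for all k ≥ 1 and 0 < p < 1 with r := kp a positive integer, P(Binomial(k,p) = r) ≥ 1/(c_0 √(2π r)) where c_0 = e/√(2π). -/
open scoped Nat Real
open Stirling Real Filter

lemma sqrtpi_le_stirling {n : ℕ} (hn : 1 ≤ n) : Real.sqrt π ≤ stirlingSeq n := by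
  obtain ⟨m, rfl⟩ := Nat.exists_eq_add_of_le hn
  have h := stirlingSeq'_antitone.le_of_tendsto
    (tendsto_stirlingSeq_sqrt_pi.comp (tendsto_add_atTop_nat 1)) m
  simpa [Nat.succ_eq_add_one, Nat.add_comm] using h

lemma stirling_pos {n : ℕ} (hn : 1 ≤ n) : 0 < stirlingSeq n := by
  obtain ⟨m, rfl⟩ := Nat.exists_eq_add_of_le hn
  simpa [Nat.add_comm] using stirlingSeq'_pos m

lemma tail_bound (m : ℕ) (hm : 1 ≤ m) : ∀ j : ℕ,
    Real.log (stirlingSeq m) - 1 / (2 * (2 * (m : ℝ) - 1))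
      + 1 / (2 * (2 * ((m + j : ℕ) : ℝ) - 1)) ≤ Real.log (stirlingSeq (m + j)) := by
  intro j
  induction j with
  | zero => simp
  | succ j ih =>
    -- key step lemma at n := m + j ≥ 1
    obtain ⟨n, hn⟩ : ∃ n, m + j = n + 1 := ⟨m + j - 1, by omega⟩
    have key := Stirling.log_stirlingSeq_sub_log_stirlingSeq_succ (n + 1)
    have hcast : ((n : ℝ) + 1) = ((m + j : ℕ) : ℝ) := by push_cast [hn]; ring
    have hpos : (1 : ℝ) ≤ ((m + j : ℕ) : ℝ) := by exact_mod_cast Nat.le_add_right m j |>.trans' hm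
    have key' : Real.log (stirlingSeq (m + j)) - Real.log (stirlingSeq (m + j + 1)) ≤
        1 / (4 * ((m + j : ℕ) : ℝ) ^ 2) := by
      rw [hn]
      convert key using 3
      all_goals push_cast; ring
    have harith : 1 / (4 * ((m + j : ℕ) : ℝ) ^ 2) ≤
        1 / (2 * (2 * ((m + j : ℕ) : ℝ) - 1)) - 1 / (2 * (2 * ((m + j + 1 : ℕ) : ℝ) - 1)) := by
      have h3 : ((m + j + 1 : ℕ) : ℝ) = ((m + j : ℕ) : ℝ) + 1 := by push_cast; ring
      set x : ℝ := ((m + j : ℕ) : ℝ) with hxdef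
      have hx : (1:ℝ) ≤ x := hpos
      have h1 : (0:ℝ) < 2 * (2 * x - 1) := by nlinarith
      have h2 : (0:ℝ) < 2 * (2 * (x + 1) - 1) := by nlinarith
      rw [h3]
      rw [div_sub_div _ _ (ne_of_gt h1) (ne_of_gt h2), div_le_div_iff₀ (by nlinarith) (by positivity)]
      nlinarith
    have := ih.trans (by linarith [key', harith] : Real.log (stirlingSeq (m + j)) ≤
      Real.log (stirlingSeq (m + j + 1)) + 1 / (2 * (2 * ((m + j : ℕ) : ℝ) - 1))
        - 1 / (2 * (2 * ((m + j + 1 : ℕ) : ℝ) - 1)))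
    have hfin : m + (j + 1) = m + j + 1 := by omega
    rw [hfin]
    linarith

lemma log_stirling_le (m : ℕ) (hm : 1 ≤ m) :
    Real.log (stirlingSeq m) ≤ Real.log (Real.sqrt π) + 1 / (2 * (2 * (m : ℝ) - 1)) := by
  have hlim : Filter.Tendsto (fun j : ℕ => Real.log (stirlingSeq (m + j))) Filter.atTop
      (nhds (Real.log (Real.sqrt π))) := by
    have h1 : Filter.Tendsto (fun j : ℕ => stirlingSeq (m + j)) Filter.atTop
        (nhds (Real.sqrt π)) := by
      have := tendsto_stirlingSeq_sqrt_pi.comp (Filter.tendsto_add_atTop_nat m)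
      simpa [Function.comp_def, Nat.add_comm] using this
    exact (Real.continuousAt_log (by positivity)).tendsto.comp h1
  have hle : Real.log (stirlingSeq m) - 1 / (2 * (2 * (m : ℝ) - 1)) ≤ Real.log (Real.sqrt π) := by
    refine ge_of_tendsto hlim (Filter.Eventually.of_forall fun j => ?_)
    have ht := tail_bound m hm j
    have hpos : (0:ℝ) < 1 / (2 * (2 * ((m + j : ℕ) : ℝ) - 1)) := by
      have h1 : (1:ℝ) ≤ ((m + j : ℕ) : ℝ) := by exact_mod_cast Nat.le_add_right m j |>.trans' hm
      exact one_div_pos.mpr (by nlinarith)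
    linarith
  linarith

lemma stirling_sq_le (m : ℕ) (hm : 1 ≤ m) :
    (stirlingSeq m) ^ 2 ≤ π * ((m : ℝ) + 1) / m := by
  rcases eq_or_lt_of_le hm with h1 | h2
  · -- m = 1
    rw [← h1]
    simp only [Nat.cast_one, stirlingSeq_one]
    rw [div_pow, Real.sq_sqrt (by norm_num : (2:ℝ) ≥ 0)]
    have he := Real.exp_one_lt_d9
    have hpi := Real.pi_gt_three
    nlinarith [Real.exp_pos 1]
  · -- m ≥ 2
    have hm2 : (2 : ℝ) ≤ (m : ℝ) := by exact_mod_cast h2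
    have hs_pos : 0 < stirlingSeq m := by
      obtain ⟨n, rfl⟩ := Nat.exists_eq_add_of_le hm
      simpa [Nat.add_comm] using stirlingSeq'_pos n
    have hlog := log_stirling_le m hm
    have hsq : stirlingSeq m ≤ Real.sqrt π * Real.exp (1 / (2 * (2 * (m : ℝ) - 1))) := by
      have := Real.exp_le_exp.mpr hlog
      rwa [Real.exp_log hs_pos, Real.exp_add, Real.exp_log (by positivity)] at this
    have hexp : Real.exp (1 / (2 * (2 * (m : ℝ) - 1))) ^ 2 ≤ ((m : ℝ) + 1) / m := by
      rw [← Real.exp_nat_mul]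
      have : (2 : ℝ) * (1 / (2 * (2 * (m : ℝ) - 1))) = 1 / (2 * (m : ℝ) - 1) := by
        have hne1 : (2 * (2 * (m:ℝ) - 1)) ≠ 0 := by nlinarith
        have hne2 : (2 * (m:ℝ) - 1) ≠ 0 := by nlinarith
        field_simp
      rw [Nat.cast_ofNat, this]
      -- exp (1/(2m-1)) ≤ (m+1)/m  since exp t ≤ 1/(1-t)
      have ht : (0:ℝ) < 2 * (m : ℝ) - 1 := by nlinarith
      have h1 : 1 - 1 / (2 * (m : ℝ) - 1) ≤ Real.exp (-(1 / (2 * (m : ℝ) - 1))) := by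
        have := Real.add_one_le_exp (-(1 / (2 * (m : ℝ) - 1)))
        linarith
      have h2 : (0:ℝ) < 1 - 1 / (2 * (m : ℝ) - 1) := by
        rw [sub_pos, div_lt_one ht]; nlinarith
      have h3 : Real.exp (1 / (2 * (m : ℝ) - 1)) ≤ 1 / (1 - 1 / (2 * (m : ℝ) - 1)) := by
        rw [le_div_iff₀ h2]
        calc Real.exp (1 / (2 * (m : ℝ) - 1)) * (1 - 1 / (2 * (m : ℝ) - 1))
            ≤ Real.exp (1 / (2 * (m : ℝ) - 1)) * Real.exp (-(1 / (2 * (m : ℝ) - 1))) :=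
              mul_le_mul_of_nonneg_left h1 (Real.exp_pos _).le
          _ = 1 := by rw [← Real.exp_add]; simp
      have hu : (1 / (2 * (m : ℝ) - 1)) * (2 * (m : ℝ) - 1) = 1 := by
        field_simp
      have hm0 : (0:ℝ) < m := by linarith
      have h4 : 1 / (1 - 1 / (2 * (m : ℝ) - 1)) ≤ ((m : ℝ) + 1) / m := by
        rw [div_le_div_iff₀ h2 hm0]
        nlinarith [hu]
      exact h3.trans h4
    calc (stirlingSeq m) ^ 2
        ≤ (Real.sqrt π * Real.exp (1 / (2 * (2 * (m : ℝ) - 1)))) ^ 2 :=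
          pow_le_pow_left₀ hs_pos.le hsq 2
      _ = π * Real.exp (1 / (2 * (2 * (m : ℝ) - 1))) ^ 2 := by
          rw [mul_pow, Real.sq_sqrt Real.pi_pos.le]
      _ ≤ π * (((m : ℝ) + 1) / m) := mul_le_mul_of_nonneg_left hexp Real.pi_pos.le
      _ = π * ((m : ℝ) + 1) / m := by ring

lemma fact_eq (n : ℕ) (hn : 1 ≤ n) :
    (n ! : ℝ) = stirlingSeq n * (Real.sqrt (2 * n) * ((n : ℝ) / Real.exp 1) ^ n) := by
  have hn0 : (0:ℝ) < (n:ℝ) := by exact_mod_cast hn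
  rw [stirlingSeq, div_mul_cancel₀]
  positivity

lemma fact_lower (n : ℕ) (hn : 1 ≤ n) :
    Real.sqrt (2 * π * n) * ((n : ℝ) / Real.exp 1) ^ n ≤ (n ! : ℝ) := by
  have hn0 : (0:ℝ) < (n:ℝ) := by exact_mod_cast hn
  rw [fact_eq n hn]
  have h1 : Real.sqrt (2 * π * n) = Real.sqrt π * Real.sqrt (2 * n) := by
    rw [← Real.sqrt_mul Real.pi_pos.le]
    ring_nf
  rw [h1, mul_assoc]
  have := sqrtpi_le_stirling hn
  have hpos : (0:ℝ) ≤ Real.sqrt (2 * n) * ((n : ℝ) / Real.exp 1) ^ n := by positivity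
  exact mul_le_mul_of_nonneg_right this hpos

lemma fact_upper_one (n : ℕ) (hn : 1 ≤ n) :
    (n ! : ℝ) ≤ Real.exp 1 * Real.sqrt n * ((n : ℝ) / Real.exp 1) ^ n := by
  have hn0 : (0:ℝ) < (n:ℝ) := by exact_mod_cast hn
  rw [fact_eq n hn]
  have hs : stirlingSeq n ≤ Real.exp 1 / Real.sqrt 2 := by
    obtain ⟨j, rfl⟩ := Nat.exists_eq_add_of_le hn
    have := stirlingSeq'_antitone (Nat.zero_le j)
    simpa [Nat.succ_eq_add_one, Nat.add_comm] using this
  have h2 : Real.sqrt (2 * n) = Real.sqrt 2 * Real.sqrt n := by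
    rw [← Real.sqrt_mul (by norm_num : (0:ℝ) ≤ 2)]
  calc stirlingSeq n * (Real.sqrt (2 * n) * ((n : ℝ) / Real.exp 1) ^ n)
      ≤ (Real.exp 1 / Real.sqrt 2) * (Real.sqrt (2 * n) * ((n : ℝ) / Real.exp 1) ^ n) :=
        mul_le_mul_of_nonneg_right hs (by positivity)
    _ = Real.exp 1 * Real.sqrt n * ((n : ℝ) / Real.exp 1) ^ n := by
        rw [h2]
        have : Real.sqrt 2 ≠ 0 := by positivity
        field_simp

lemma fact_upper_two (n : ℕ) (hn : 1 ≤ n) :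
    (n ! : ℝ) ≤ Real.sqrt (2 * π * (n + 1)) * ((n : ℝ) / Real.exp 1) ^ n := by
  have hn0 : (0:ℝ) < (n:ℝ) := by exact_mod_cast hn
  rw [fact_eq n hn]
  have hs : stirlingSeq n ≤ Real.sqrt (π * ((n : ℝ) + 1) / n) := by
    rw [show Real.sqrt (π * ((n : ℝ) + 1) / n) = Real.sqrt (π * ((n:ℝ)+1)/n) from rfl]
    have := stirling_sq_le n hn
    nlinarith [Real.sq_sqrt (show (0:ℝ) ≤ π * ((n:ℝ)+1)/n by positivity),
      Real.sqrt_nonneg (π * ((n:ℝ)+1)/n), stirling_pos hn]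
  calc stirlingSeq n * (Real.sqrt (2 * n) * ((n : ℝ) / Real.exp 1) ^ n)
      ≤ Real.sqrt (π * ((n : ℝ) + 1) / n) * (Real.sqrt (2 * n) * ((n : ℝ) / Real.exp 1) ^ n) :=
        mul_le_mul_of_nonneg_right hs (by positivity)
    _ = Real.sqrt (2 * π * (n + 1)) * ((n : ℝ) / Real.exp 1) ^ n := by
        rw [← mul_assoc, ← Real.sqrt_mul (by positivity)]
        congr 2
        field_simp

/-- for all k ≥ 1 and 0 < p < 1 with r := kp a positive integer,
the binomial point probability at the mean satisfies
P(Binomial(k,p) = r) ≥ 1/(c₀ √(2πr)), with c₀ = e/√(2π). -/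
theorem stmt_11 (k r : ℕ) (p : ℝ) (hk : 1 ≤ k) (hp : 0 < p) (hp1 : p < 1)
    (hr : 0 < r) (hmean : (k : ℝ) * p = (r : ℝ)) :
    1 / ((Real.exp 1 / Real.sqrt (2 * Real.pi)) * Real.sqrt (2 * Real.pi * r)) ≤
      (k.choose r : ℝ) * p ^ r * (1 - p) ^ (k - r) := by
  have hk0 : (0:ℝ) < (k:ℝ) := by exact_mod_cast hk
  have hr0 : (0:ℝ) < (r:ℝ) := by exact_mod_cast hr
  have hpk : p = (r:ℝ) / k := by field_simp [hk0.ne'] at hmean ⊢; linarith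
  have hrk : r < k := by
    by_contra h
    push_neg at h
    have : (k:ℝ) ≤ (r:ℝ) := by exact_mod_cast h
    nlinarith
  set m := k - r with hm_def
  have hm1 : 1 ≤ m := by omega
  have hkm : k = r + m := by omega
  have hm0 : (0:ℝ) < (m:ℝ) := by exact_mod_cast hm1
  have hqk : 1 - p = (m:ℝ) / k := by
    rw [hpk]
    have : ((m:ℕ):ℝ) = (k:ℝ) - r := by
      rw [hm_def]; push_cast [Nat.cast_sub hrk.le]; ring
    rw [this]; field_simp
  -- rewrite choose
  have hchoose : (k.choose r : ℝ) = (k ! : ℝ) / ((r ! : ℝ) * (m ! : ℝ)) := by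
    have h := Nat.choose_mul_factorial_mul_factorial hrk.le
    have hcast : ((k.choose r : ℕ) : ℝ) * (r ! : ℝ) * ((k - r)! : ℝ) = (k ! : ℝ) := by
      exact_mod_cast h
    rw [eq_div_iff (by positivity)]
    rw [← hm_def] at hcast
    linarith [hcast]
  -- LHS simplification : (e/√(2π)) * √(2πr) = e * √r
  have hLHS : (Real.exp 1 / Real.sqrt (2 * Real.pi)) * Real.sqrt (2 * Real.pi * r) =
      Real.exp 1 * Real.sqrt r := by
    rw [Real.sqrt_mul (by positivity)]
    have : Real.sqrt (2 * π) ≠ 0 := by positivity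
    field_simp
    rw [Real.sqrt_mul (by positivity), Real.sqrt_mul (by positivity)]
  rw [hLHS]
  -- express the probability as a single fraction
  have hfrac : (k.choose r : ℝ) * p ^ r * (1 - p) ^ m =
      (k ! : ℝ) * (r:ℝ)^r * (m:ℝ)^m / ((r ! : ℝ) * (m ! : ℝ) * (k:ℝ)^k) := by
    rw [hchoose, hqk, hpk, div_pow, div_pow]
    rw [show ((k:ℝ))^k = (k:ℝ)^r * (k:ℝ)^m by rw [← pow_add, ← hkm]]
    field_simp
  rw [hfrac]
  rw [div_le_div_iff₀ (by positivity) (by positivity)]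
  -- key chain
  have h1 := fact_upper_one r hr
  have h2 := fact_upper_two m hm1
  have h3 := fact_lower k hk
  have hek : (0:ℝ) < Real.exp 1 := Real.exp_pos 1
  have hsq : Real.sqrt (2 * π * ((m:ℝ) + 1)) ≤ Real.sqrt (2 * π * (k:ℝ)) := by
    apply Real.sqrt_le_sqrt
    have h : ((m:ℝ) + 1) ≤ (k:ℝ) := by
      have : (m:ℕ) + 1 ≤ k := by omega
      exact_mod_cast this
    nlinarith [Real.pi_pos]
  calc 1 * ((r ! : ℝ) * (m ! : ℝ) * (k:ℝ)^k)
      ≤ (Real.exp 1 * Real.sqrt r * ((r : ℝ) / Real.exp 1) ^ r) *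
          (Real.sqrt (2 * π * ((m:ℝ) + 1)) * ((m : ℝ) / Real.exp 1) ^ m) * (k:ℝ)^k := by
        rw [one_mul]
        have := mul_le_mul h1 h2 (by positivity) (by positivity)
        exact mul_le_mul_of_nonneg_right this (by positivity)
    _ ≤ (Real.exp 1 * Real.sqrt r * ((r : ℝ) / Real.exp 1) ^ r) *
          (Real.sqrt (2 * π * (k:ℝ)) * ((m : ℝ) / Real.exp 1) ^ m) * (k:ℝ)^k := by
        refine mul_le_mul_of_nonneg_right (mul_le_mul_of_nonneg_left
          (mul_le_mul_of_nonneg_right hsq (by positivity)) (by positivity)) (by positivity)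
    _ = Real.sqrt (2 * π * (k:ℝ)) * ((k : ℝ) / Real.exp 1) ^ k *
          ((r:ℝ)^r * (m:ℝ)^m) * (Real.exp 1 * Real.sqrt r) := by
        rw [div_pow, div_pow, div_pow]
        rw [show (Real.exp 1)^k = (Real.exp 1)^r * (Real.exp 1)^m by rw [← pow_add, ← hkm]]
        field_simp
    _ ≤ (k ! : ℝ) * ((r:ℝ)^r * (m:ℝ)^m) * (Real.exp 1 * Real.sqrt r) := by
        refine mul_le_mul_of_nonneg_right
          (mul_le_mul_of_nonneg_right h3 (by positivity)) (by positivity)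
    _ = (k ! : ℝ) * (r:ℝ)^r * (m:ℝ)^m * (Real.exp 1 * Real.sqrt r) := by ring
end

section
/- Let 0 < p < 1, n ∈ ℕ, λ = np, b(k;n,p) = C(n,k) p^k (1-p)^{n-k}, and p(k;λ) = λ^k e^{-λ}/k!. Then for 0 ≤ k ≤ n: p(k;λ) · exp(-k²/(n-k) - λ²/(n-λ)) < b(k;n,p) < p(k;λ) · exp(kλ/n). -/
open scoped Nat
open Finset

private lemma aux_le (x : ℝ) (h0 : 0 ≤ x) (h1 : x < 1) :
    Real.exp (-(x / (1 - x))) ≤ 1 - x := by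
  have hx : 0 < 1 - x := by linarith
  have h2 : (1 - x)⁻¹ ≤ Real.exp (x / (1 - x)) := by
    have h3 := Real.add_one_le_exp (x / (1 - x))
    have h4 : x / (1 - x) + 1 = (1 - x)⁻¹ := by field_simp; ring
    linarith
  rw [Real.exp_neg, inv_le_comm₀ (Real.exp_pos _) hx]
  exact h2

private lemma aux_lt (x : ℝ) (h0 : 0 < x) (h1 : x < 1) :
    Real.exp (-(x / (1 - x))) < 1 - x := by
  have hx : 0 < 1 - x := by linarith
  have hne : x / (1 - x) ≠ 0 := ne_of_gt (div_pos h0 hx)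
  have h2 : (1 - x)⁻¹ < Real.exp (x / (1 - x)) := by
    have h3 := Real.add_one_lt_exp hne
    have h4 : x / (1 - x) + 1 = (1 - x)⁻¹ := by field_simp; ring
    linarith
  rw [Real.exp_neg, inv_lt_comm₀ (Real.exp_pos _) hx]
  exact h2

/-- Feller: for 0 < p < 1, λ = np, b(k;n,p) = C(n,k)p^k(1-p)^{n-k},
p(k;λ) = λ^k e^{-λ}/k!, and 0 ≤ k < n:
p(k;λ)·exp(-k²/(n-k) - λ²/(n-λ)) < b(k;n,p) < p(k;λ)·exp(kλ/n). -/
theorem stmt_12 (n k : ℕ) (p : ℝ) (hp : 0 < p) (hp1 : p < 1) (hk : k < n) :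
    ((n : ℝ) * p) ^ k * Real.exp (-((n : ℝ) * p)) / (k ! : ℝ) *
        Real.exp (-((k : ℝ) ^ 2 / ((n : ℝ) - k)) -
          ((n : ℝ) * p) ^ 2 / ((n : ℝ) - (n : ℝ) * p)) <
      (n.choose k : ℝ) * p ^ k * (1 - p) ^ (n - k) ∧
    (n.choose k : ℝ) * p ^ k * (1 - p) ^ (n - k) <
      ((n : ℝ) * p) ^ k * Real.exp (-((n : ℝ) * p)) / (k ! : ℝ) *
        Real.exp ((k : ℝ) * ((n : ℝ) * p) / (n : ℝ)) := by
  have hn : 0 < n := lt_of_le_of_lt (Nat.zero_le k) hk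
  have hN0 : (0 : ℝ) < n := by exact_mod_cast hn
  have hkN : (k : ℝ) < n := by exact_mod_cast hk
  have hq : (0 : ℝ) < 1 - p := by linarith
  have hNk : (0 : ℝ) < (n : ℝ) - k := by linarith
  have hfk : (0 : ℝ) < (k ! : ℝ) := by exact_mod_cast k.factorial_pos
  have hnk0 : n - k ≠ 0 := Nat.sub_ne_zero_of_lt hk
  have hnkc : ((n - k : ℕ) : ℝ) = (n : ℝ) - k := by
    rw [Nat.cast_sub hk.le]
  -- factorization of the binomial coefficient
  have hfac : (n.choose k : ℝ) = (∏ i ∈ range k, ((n : ℝ) - i)) / (k ! : ℝ) := by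
    have h1 : (n.descFactorial k : ℝ) = ∏ i ∈ range k, ((n : ℝ) - i) := by
      rw [Nat.descFactorial_eq_prod_range, Nat.cast_prod]
      refine Finset.prod_congr rfl fun i hi => ?_
      have hi' : i ≤ n := le_of_lt (lt_trans (mem_range.mp hi) hk)
      rw [Nat.cast_sub hi']
    have h2 : (n.descFactorial k : ℝ) = (k ! : ℝ) * (n.choose k : ℝ) := by
      exact_mod_cast congrArg (Nat.cast (R := ℝ)) (Nat.descFactorial_eq_factorial_mul_choose n k)
    rw [← h1, h2]
    field_simp
  have hprod_nonneg : ∀ i ∈ range k, (0 : ℝ) ≤ (n : ℝ) - i := fun i hi => by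
    have : (i : ℝ) < k := by exact_mod_cast mem_range.mp hi
    linarith
  constructor
  · -- LOWER BOUND
    -- product lower bound: ∏ (n - i) ≥ n^k * exp(-(k^2/(n-k)))
    have hP : (n : ℝ) ^ k * Real.exp (-((k : ℝ) ^ 2 / ((n : ℝ) - k))) ≤
        ∏ i ∈ range k, ((n : ℝ) - i) := by
      have key : ∀ i ∈ range k, (n : ℝ) * Real.exp (-((k : ℝ) / ((n : ℝ) - k))) ≤ (n : ℝ) - i := by
        intro i hi
        have hik : (i : ℝ) < k := by exact_mod_cast mem_range.mp hi
        have hi0 : (0 : ℝ) ≤ i := Nat.cast_nonneg i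
        have hiN : (i : ℝ) / n < 1 := (div_lt_one hN0).mpr (by linarith)
        have h1 : Real.exp (-((i : ℝ) / n / (1 - (i : ℝ) / n))) ≤ 1 - (i : ℝ) / n :=
          aux_le _ (div_nonneg hi0 hN0.le) hiN
        have h2 : (i : ℝ) / n / (1 - (i : ℝ) / n) = (i : ℝ) / ((n : ℝ) - i) := by
          rw [div_div]
          congr 1
          field_simp
        have h3 : (i : ℝ) / ((n : ℝ) - i) ≤ (k : ℝ) / ((n : ℝ) - k) := by
          rw [div_le_div_iff₀ (by linarith) hNk]
          nlinarith
        have h4 : Real.exp (-((k : ℝ) / ((n : ℝ) - k))) ≤ Real.exp (-((i : ℝ) / ((n : ℝ) - i))) :=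
          Real.exp_le_exp.mpr (by linarith)
        have h5 : Real.exp (-((i : ℝ) / ((n : ℝ) - i))) ≤ 1 - (i : ℝ) / n := by
          rw [← h2]; exact h1
        calc (n : ℝ) * Real.exp (-((k : ℝ) / ((n : ℝ) - k)))
            ≤ (n : ℝ) * (1 - (i : ℝ) / n) := by
              exact mul_le_mul_of_nonneg_left (le_trans h4 h5) hN0.le
          _ = (n : ℝ) - i := by field_simp
      calc (n : ℝ) ^ k * Real.exp (-((k : ℝ) ^ 2 / ((n : ℝ) - k)))
          = ∏ _i ∈ range k, ((n : ℝ) * Real.exp (-((k : ℝ) / ((n : ℝ) - k)))) := by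
            rw [prod_const, card_range, mul_pow, ← Real.exp_nat_mul]
            congr 2
            ring
        _ ≤ ∏ i ∈ range k, ((n : ℝ) - i) := by
            refine Finset.prod_le_prod (fun i _ => by positivity) key
    -- (1-p)^(n-k) > exp(-(p/(1-p)))^(n-k)
    have hQ : Real.exp (-(p / (1 - p))) ^ (n - k) < (1 - p) ^ (n - k) := by
      exact pow_lt_pow_left₀ (aux_lt p hp hp1) (Real.exp_pos _).le hnk0
    -- exponent comparison
    have hE : Real.exp (-((n : ℝ) * p)) * Real.exp (-(((n : ℝ) * p) ^ 2 / ((n : ℝ) - (n : ℝ) * p)))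
        ≤ Real.exp (-(p / (1 - p))) ^ (n - k) := by
      rw [← Real.exp_nat_mul, ← Real.exp_add, Real.exp_le_exp, hnkc]
      have hNq : (n : ℝ) - (n : ℝ) * p = (n : ℝ) * (1 - p) := by ring
      rw [hNq]
      rw [← sub_nonneg]
      have h1 : ((n : ℝ) - ↑k) * (-(p / (1 - p))) - (-(↑n * p) + -((↑n * p) ^ 2 / (↑n * (1 - p))))
          = (k : ℝ) * p / (1 - p) := by
        field_simp
        ring
      rw [h1]
      positivity
    have hpos : (0 : ℝ) < (n : ℝ) ^ k * p ^ k / (k ! : ℝ) := by positivity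
    rw [hfac]
    calc ((n : ℝ) * p) ^ k * Real.exp (-((n : ℝ) * p)) / (k ! : ℝ) *
          Real.exp (-((k : ℝ) ^ 2 / ((n : ℝ) - k)) - ((n : ℝ) * p) ^ 2 / ((n : ℝ) - (n : ℝ) * p))
        = ((n : ℝ) ^ k * Real.exp (-((k : ℝ) ^ 2 / ((n : ℝ) - k)))) * p ^ k / (k ! : ℝ) *
          (Real.exp (-((n : ℝ) * p)) * Real.exp (-(((n : ℝ) * p) ^ 2 / ((n : ℝ) - (n : ℝ) * p)))) := by
          rw [show (-((k : ℝ) ^ 2 / ((n : ℝ) - k)) - ((n : ℝ) * p) ^ 2 / ((n : ℝ) - (n : ℝ) * p))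
              = (-((k : ℝ) ^ 2 / ((n : ℝ) - k))) + (-(((n : ℝ) * p) ^ 2 / ((n : ℝ) - (n : ℝ) * p)))
            from by ring, Real.exp_add, mul_pow]
          ring
      _ ≤ ((n : ℝ) ^ k * Real.exp (-((k : ℝ) ^ 2 / ((n : ℝ) - k)))) * p ^ k / (k ! : ℝ) *
          (Real.exp (-(p / (1 - p))) ^ (n - k)) := by
          exact mul_le_mul_of_nonneg_left hE (by positivity)
      _ < ((n : ℝ) ^ k * Real.exp (-((k : ℝ) ^ 2 / ((n : ℝ) - k)))) * p ^ k / (k ! : ℝ) *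
          ((1 - p) ^ (n - k)) := by
          exact mul_lt_mul_of_pos_left hQ (by positivity)
      _ ≤ (∏ i ∈ range k, ((n : ℝ) - i)) * p ^ k / (k ! : ℝ) * ((1 - p) ^ (n - k)) := by
          have := mul_le_mul_of_nonneg_right hP (by positivity :
            (0 : ℝ) ≤ p ^ k / (k ! : ℝ) * ((1 - p) ^ (n - k)))
          calc ((n : ℝ) ^ k * Real.exp (-((k : ℝ) ^ 2 / ((n : ℝ) - k)))) * p ^ k / (k ! : ℝ) *
                ((1 - p) ^ (n - k))
              = ((n : ℝ) ^ k * Real.exp (-((k : ℝ) ^ 2 / ((n : ℝ) - k)))) *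
                (p ^ k / (k ! : ℝ) * ((1 - p) ^ (n - k))) := by ring
            _ ≤ (∏ i ∈ range k, ((n : ℝ) - i)) * (p ^ k / (k ! : ℝ) * ((1 - p) ^ (n - k))) := this
            _ = (∏ i ∈ range k, ((n : ℝ) - i)) * p ^ k / (k ! : ℝ) * ((1 - p) ^ (n - k)) := by ring
      _ = (∏ i ∈ range k, ((n : ℝ) - i)) / (k ! : ℝ) * p ^ k * (1 - p) ^ (n - k) := by ring
  · -- UPPER BOUND
    have hP : (∏ i ∈ range k, ((n : ℝ) - i)) ≤ (n : ℝ) ^ k := by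
      calc (∏ i ∈ range k, ((n : ℝ) - i)) ≤ ∏ _i ∈ range k, (n : ℝ) := by
            refine Finset.prod_le_prod hprod_nonneg fun i hi => by
              have : (0 : ℝ) ≤ i := Nat.cast_nonneg i
              linarith
        _ = (n : ℝ) ^ k := by rw [prod_const, card_range]
    have hQ : (1 - p) ^ (n - k) < Real.exp (-p) ^ (n - k) := by
      refine pow_lt_pow_left₀ ?_ hq.le hnk0
      have := Real.add_one_lt_exp (show -p ≠ 0 by linarith)
      linarith
    have hE : Real.exp (-p) ^ (n - k) =
        Real.exp (-((n : ℝ) * p)) * Real.exp ((k : ℝ) * ((n : ℝ) * p) / (n : ℝ)) := by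
      rw [← Real.exp_nat_mul, ← Real.exp_add, hnkc]
      congr 1
      field_simp
      ring
    rw [hfac]
    calc (∏ i ∈ range k, ((n : ℝ) - i)) / (k ! : ℝ) * p ^ k * (1 - p) ^ (n - k)
        ≤ (n : ℝ) ^ k / (k ! : ℝ) * p ^ k * (1 - p) ^ (n - k) := by
          have h := mul_le_mul_of_nonneg_right hP (show (0 : ℝ) ≤
            p ^ k / (k ! : ℝ) * (1 - p) ^ (n - k) by positivity)
          calc (∏ i ∈ range k, ((n : ℝ) - i)) / (k ! : ℝ) * p ^ k * (1 - p) ^ (n - k)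
              = (∏ i ∈ range k, ((n : ℝ) - i)) * (p ^ k / (k ! : ℝ) * (1 - p) ^ (n - k)) := by ring
            _ ≤ (n : ℝ) ^ k * (p ^ k / (k ! : ℝ) * (1 - p) ^ (n - k)) := h
            _ = (n : ℝ) ^ k / (k ! : ℝ) * p ^ k * (1 - p) ^ (n - k) := by ring
      _ < (n : ℝ) ^ k / (k ! : ℝ) * p ^ k * Real.exp (-p) ^ (n - k) := by
          exact mul_lt_mul_of_pos_left hQ (by positivity)
      _ = ((n : ℝ) * p) ^ k * Real.exp (-((n : ℝ) * p)) / (k ! : ℝ) *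
          Real.exp ((k : ℝ) * ((n : ℝ) * p) / (n : ℝ)) := by
          rw [hE, mul_pow]
          ring
end

section
/- Under the hypotheses m_1, m_2 > 0, ρ := sup_{i≥3}(m_i/i!)^{1/i} < ∞, 0 < r < n/2, k = n - r, x = 2m_1 r/(m_2(n-2r)), xρ ≤ 1/2, and 2kρ³x²/m_1 ≤ 1/2: picking an M-assembly uniformly from the p(n,k) assemblies of size n with k components, P(L_1 ≥ 4) ≤ (2kρ⁴x³/m_1) · 2 c_0 √(2π r), where c_0 = e/√(2π) and L_1 is the size of the largest component. -/
open Finset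
open scoped Nat

/-- The number of M-assemblies of size n with exactly k components whose largest
component has size at least 4. -/
noncomputable def assemblyCountL1ge4 (m : ℕ → ℝ) (n k : ℕ) : ℝ :=
  ∑ a ∈ Finset.univ.filter (fun a : Fin (n + 1) → Fin (n + 1) =>
      (∑ i : Fin (n + 1), i.1 * (a i).1) = n ∧ (∑ i : Fin (n + 1), (a i).1) = k ∧
        (a 0).1 = 0 ∧ (∃ i : Fin (n + 1), 4 ≤ i.1 ∧ (a i).1 ≠ 0)),
    (n ! : ℝ) * ∏ i : Fin (n + 1),
      m i.1 ^ (a i).1 / (((a i).1 ! : ℝ) * ((i.1 ! : ℝ)) ^ (a i).1)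


lemma stirling_lower (m : ℕ) (hm : 1 ≤ m) :
    Real.sqrt (2 * Real.pi * m) * ((m : ℝ) / Real.exp 1) ^ m ≤ (m ! : ℝ) := by
  obtain ⟨j, rfl⟩ := Nat.exists_eq_add_of_le hm
  have h1 : Real.sqrt Real.pi ≤ Stirling.stirlingSeq (1 + j) := by
    have ha : Antitone (Stirling.stirlingSeq ∘ Nat.succ) := Stirling.stirlingSeq'_antitone
    have ht : Filter.Tendsto (Stirling.stirlingSeq ∘ Nat.succ) Filter.atTop
        (nhds (Real.sqrt Real.pi)) :=
      Stirling.tendsto_stirlingSeq_sqrt_pi.comp (Filter.tendsto_add_atTop_nat 1)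
    simpa [Nat.succ_eq_add_one, Nat.add_comm] using ha.le_of_tendsto ht j
  have hpos : (0:ℝ) < Real.sqrt (2 * (1 + j : ℕ)) * (((1 + j : ℕ) : ℝ) / Real.exp 1) ^ (1 + j) := by
    positivity
  have h2 : Stirling.stirlingSeq (1 + j) =
      ((1 + j)! : ℝ) / (Real.sqrt (2 * (1 + j : ℕ)) * (((1 + j : ℕ):ℝ) / Real.exp 1) ^ (1 + j)) := rfl
  rw [h2, le_div_iff₀ hpos] at h1
  calc Real.sqrt (2 * Real.pi * (1 + j : ℕ)) * (((1 + j : ℕ):ℝ) / Real.exp 1) ^ (1 + j)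
      = Real.sqrt Real.pi * (Real.sqrt (2 * (1 + j : ℕ)) *
        (((1 + j : ℕ):ℝ) / Real.exp 1) ^ (1 + j)) := by
        rw [← mul_assoc, ← Real.sqrt_mul (by positivity)]
        ring_nf
    _ ≤ ((1 + j)! : ℝ) := h1

lemma stirling_upper (m : ℕ) (hm : 1 ≤ m) :
    (m ! : ℝ) ≤ Real.exp 1 * Real.sqrt m * ((m : ℝ) / Real.exp 1) ^ m := by
  obtain ⟨j, rfl⟩ := Nat.exists_eq_add_of_le hm
  have h1 : Stirling.stirlingSeq (1 + j) ≤ Real.exp 1 / Real.sqrt 2 := by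
    have ha : Antitone (Stirling.stirlingSeq ∘ Nat.succ) := Stirling.stirlingSeq'_antitone
    have := ha (Nat.zero_le j)
    simpa [Nat.succ_eq_add_one, Nat.add_comm, Stirling.stirlingSeq_one] using this
  have hpos : (0:ℝ) < Real.sqrt (2 * (1 + j : ℕ)) * (((1 + j : ℕ) : ℝ) / Real.exp 1) ^ (1 + j) := by
    positivity
  have h2 : Stirling.stirlingSeq (1 + j) =
      ((1 + j)! : ℝ) / (Real.sqrt (2 * (1 + j : ℕ)) * (((1 + j : ℕ):ℝ) / Real.exp 1) ^ (1 + j)) := rfl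
  rw [h2, div_le_div_iff₀ hpos (by positivity)] at h1
  calc ((1 + j)! : ℝ)
      ≤ Real.exp 1 / Real.sqrt 2 * (Real.sqrt (2 * (1 + j : ℕ)) *
          (((1 + j : ℕ):ℝ) / Real.exp 1) ^ (1 + j)) := by
        rw [div_mul_eq_mul_div, le_div_iff₀ (by positivity)]
        linarith [h1]
    _ = Real.exp 1 * Real.sqrt ((1 + j : ℕ)) * (((1 + j : ℕ):ℝ) / Real.exp 1) ^ (1 + j) := by
        rw [Real.sqrt_mul (by norm_num)]
        field_simp

lemma exp3_le : Real.exp (3/2 : ℝ) ≤ 2 * Real.sqrt (2 * Real.pi) := by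
  have h3 : Real.exp 3 ≤ 8 * Real.pi := by
    have he : Real.exp 1 < 2.7182818286 := Real.exp_one_lt_d9
    have hp : 3.141592 < Real.pi := Real.pi_gt_d6
    have h : Real.exp 3 = (Real.exp 1) ^ 3 := by
      rw [← Real.exp_nat_mul]; norm_num
    rw [h]
    have h2 : (Real.exp 1)^3 < 2.7182818286^3 :=
      pow_lt_pow_left₀ he (Real.exp_pos 1).le (by norm_num)
    nlinarith
  have : Real.exp (3/2:ℝ) = Real.sqrt (Real.exp 3) := by
    rw [show (3:ℝ) = (3/2) + (3/2) by norm_num, Real.exp_add,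
      Real.sqrt_mul_self (Real.exp_pos _).le]
    norm_num
  have h4 : Real.sqrt ((2:ℝ)^2) = 2 := Real.sqrt_sq (by norm_num)
  have h6 := Real.sqrt_mul (by positivity : (0:ℝ) ≤ (2:ℝ)^2) (2*Real.pi)
  have h5 : (2:ℝ) * Real.sqrt (2*Real.pi) = Real.sqrt (8 * Real.pi) := by
    rw [show (8:ℝ)*Real.pi = 2^2 * (2*Real.pi) by ring, h6, h4]
  rw [this, h5]
  exact Real.sqrt_le_sqrt h3

/-- Key Stirling consequence:
exp(1/2) * k^k ≤ 2 e √r * C(k,r) * r^r * (k-r)^(k-r), with k = r + q. -/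
lemma binom_stirling (r q : ℕ) (hr : 1 ≤ r) (hq : 1 ≤ q) :
    Real.exp (1/2 : ℝ) * ((r + q : ℕ) : ℝ) ^ (r + q) ≤
      2 * Real.exp 1 * Real.sqrt r * ((r + q).choose r : ℝ) * (r : ℝ) ^ r * (q : ℝ) ^ q := by
  set K := r + q with hK
  have hrK : r ≤ K := Nat.le_add_right r q
  have hfact : (K.choose r : ℝ) * (r ! : ℝ) * (q ! : ℝ) = (K ! : ℝ) := by
    have := Nat.choose_mul_factorial_mul_factorial hrK
    rw [show K - r = q by omega] at this
    exact_mod_cast congrArg (Nat.cast : ℕ → ℝ) this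
  have hlow := stirling_lower K (by omega)
  have hupr := stirling_upper r hr
  have hupq := stirling_upper q hq
  -- replace factorials
  have hKf : Real.sqrt (2*Real.pi*K) * ((K:ℝ)/Real.exp 1)^K ≤
      (K.choose r : ℝ) * ((Real.exp 1 * Real.sqrt r * ((r:ℝ)/Real.exp 1)^r) *
        (Real.exp 1 * Real.sqrt q * ((q:ℝ)/Real.exp 1)^q)) := by
    calc Real.sqrt (2*Real.pi*K) * ((K:ℝ)/Real.exp 1)^K ≤ (K ! : ℝ) := hlow
      _ = (K.choose r : ℝ) * (r ! : ℝ) * (q ! : ℝ) := hfact.symm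
      _ ≤ (K.choose r : ℝ) * ((Real.exp 1 * Real.sqrt r * ((r:ℝ)/Real.exp 1)^r) *
          (Real.exp 1 * Real.sqrt q * ((q:ℝ)/Real.exp 1)^q)) := by
          have hc : (0:ℝ) ≤ (K.choose r : ℝ) := Nat.cast_nonneg _
          have h1 : (0:ℝ) ≤ (r ! : ℝ) := Nat.cast_nonneg _
          rw [mul_assoc]
          refine mul_le_mul_of_nonneg_left ?_ hc
          exact mul_le_mul hupr hupq (Nat.cast_nonneg _) (by positivity)
  -- clear exp powers: (a/e)^m = a^m / e^m, e^K = e^r * e^q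
  have hE : (0:ℝ) < Real.exp 1 := Real.exp_pos 1
  have hEK : (Real.exp 1)^K = (Real.exp 1)^r * (Real.exp 1)^q := by rw [← pow_add]
  rw [div_pow, div_pow, div_pow] at hKf
  -- multiply through by e^K
  have hKf2 : Real.sqrt (2*Real.pi*K) * (K:ℝ)^K ≤
      (K.choose r : ℝ) * Real.exp 1 ^ 2 * Real.sqrt r * Real.sqrt q * (r:ℝ)^r * (q:ℝ)^q := by
    have h := mul_le_mul_of_nonneg_right hKf (le_of_lt (pow_pos hE K))
    calc Real.sqrt (2*Real.pi*K) * (K:ℝ)^K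
        = Real.sqrt (2*Real.pi*K) * ((K:ℝ)^K / Real.exp 1 ^ K) * Real.exp 1 ^ K := by
          field_simp
      _ ≤ (K.choose r : ℝ) * ((Real.exp 1 * Real.sqrt r * ((r:ℝ)^r/Real.exp 1^r)) *
            (Real.exp 1 * Real.sqrt q * ((q:ℝ)^q/Real.exp 1^q))) * Real.exp 1 ^ K := h
      _ = (K.choose r : ℝ) * Real.exp 1 ^ 2 * Real.sqrt r * Real.sqrt q * (r:ℝ)^r * (q:ℝ)^q := by
          rw [hEK]
          have hr0 : (Real.exp 1)^r ≠ 0 := by positivity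
          have hq0 : (Real.exp 1)^q ≠ 0 := by positivity
          field_simp
  -- now: exp(1/2) * K^K ≤ 2 e √r * C * r^r * q^q
  -- since  C * r^r * q^q ≥ √(2πK) K^K / (e² √r √q) ≥ √(2π) K^K/(e² √r)
  have hsq : Real.exp 1 * Real.sqrt q * (Real.exp (1/2:ℝ) * ((K:ℝ))^K) ≤
      2 * Real.sqrt (2 * Real.pi * K) * ((K:ℝ))^K := by
    have h1 : Real.sqrt q ≤ Real.sqrt K := by
      apply Real.sqrt_le_sqrt
      have : q ≤ K := by omega
      exact_mod_cast this
    have h2 : Real.exp 1 * Real.exp (1/2:ℝ) = Real.exp (3/2:ℝ) := by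
      rw [← Real.exp_add]; norm_num
    have h3 : Real.sqrt (2*Real.pi*K) = Real.sqrt (2*Real.pi) * Real.sqrt K := by
      rw [Real.sqrt_mul (by positivity)]
    have hKpow : (0:ℝ) ≤ ((K:ℝ))^K := by positivity
    have : Real.exp 1 * Real.sqrt q * Real.exp (1/2:ℝ) ≤ 2 * Real.sqrt (2*Real.pi*K) := by
      calc Real.exp 1 * Real.sqrt q * Real.exp (1/2:ℝ)
          = Real.exp (3/2:ℝ) * Real.sqrt q := by rw [← h2]; ring
        _ ≤ (2 * Real.sqrt (2*Real.pi)) * Real.sqrt K :=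
            mul_le_mul exp3_le h1 (Real.sqrt_nonneg _) (by positivity)
        _ = 2 * Real.sqrt (2*Real.pi*K) := by rw [h3]; ring
    calc Real.exp 1 * Real.sqrt q * (Real.exp (1/2:ℝ) * ((K:ℝ))^K)
        = (Real.exp 1 * Real.sqrt q * Real.exp (1/2:ℝ)) * ((K:ℝ))^K := by ring
      _ ≤ (2 * Real.sqrt (2*Real.pi*K)) * ((K:ℝ))^K :=
          mul_le_mul_of_nonneg_right this hKpow
  -- combine hKf2 and hsq
  have hrpos : (0:ℝ) < Real.sqrt r := Real.sqrt_pos.mpr (by exact_mod_cast hr)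
  have hqpos : (0:ℝ) < Real.sqrt q := Real.sqrt_pos.mpr (by exact_mod_cast hq)
  -- goal * (e * √q) both sides:
  have key : (Real.exp 1 * Real.sqrt q) * (Real.exp (1/2:ℝ) * ((K:ℝ))^K) ≤
      (Real.exp 1 * Real.sqrt q) *
        (2 * Real.exp 1 * Real.sqrt r * (K.choose r : ℝ) * (r:ℝ)^r * (q:ℝ)^q) := by
    calc (Real.exp 1 * Real.sqrt q) * (Real.exp (1/2:ℝ) * ((K:ℝ))^K)
        ≤ 2 * Real.sqrt (2*Real.pi*K) * ((K:ℝ))^K := hsq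
      _ ≤ 2 * ((K.choose r : ℝ) * Real.exp 1 ^ 2 * Real.sqrt r * Real.sqrt q * (r:ℝ)^r * (q:ℝ)^q) := by
          have := mul_le_mul_of_nonneg_left hKf2 (by norm_num : (0:ℝ) ≤ 2)
          calc 2 * Real.sqrt (2*Real.pi*K) * ((K:ℝ))^K
              = 2 * (Real.sqrt (2*Real.pi*K) * ((K:ℝ))^K) := by ring
            _ ≤ _ := this
      _ = (Real.exp 1 * Real.sqrt q) *
          (2 * Real.exp 1 * Real.sqrt r * (K.choose r : ℝ) * (r:ℝ)^r * (q:ℝ)^q) := by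
          ring
  have hpos : (0:ℝ) < Real.exp 1 * Real.sqrt q := by positivity
  exact le_of_mul_le_mul_left key hpos

lemma geom_tail (t : ℝ) (h0 : 0 ≤ t) (h : t ≤ 1/2) (a b : ℕ) :
    ∑ i ∈ Ico a b, t ^ i ≤ 2 * t ^ a := by
  rw [Finset.sum_Ico_eq_sum_range]
  have h1 : ∀ j, t ^ (a + j) = t ^ a * t ^ j := fun j => pow_add t a j
  calc ∑ j ∈ range (b - a), t ^ (a + j)
      = t ^ a * ∑ j ∈ range (b - a), t ^ j := by
        rw [Finset.mul_sum]; exact Finset.sum_congr rfl fun j _ => h1 j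
    _ ≤ t ^ a * 2 := by
        refine mul_le_mul_of_nonneg_left ?_ (pow_nonneg h0 a)
        calc ∑ j ∈ range (b - a), t ^ j
            ≤ ∑ j ∈ range (b - a), (1/2 : ℝ) ^ j :=
              Finset.sum_le_sum fun j _ => pow_le_pow_left₀ h0 h j
          _ = ((1/2:ℝ) ^ (b-a) - 1) / ((1/2:ℝ) - 1) := geom_sum_eq (by norm_num) _
          _ ≤ 2 := by
              have : (0:ℝ) ≤ (1/2:ℝ)^(b-a) := by positivity
              have h2 : ((1/2:ℝ) ^ (b-a) - 1) / ((1/2:ℝ) - 1) = 2 - 2*(1/2:ℝ)^(b-a) := by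
                field_simp; ring
              rw [h2]; linarith
    _ = 2 * t ^ a := by ring

/-- decode a `Fin`-indexed assembly vector into a plain function -/
def dmap (n : ℕ) (a : Fin (n+1) → Fin (n+1)) : ℕ → ℕ :=
  fun i => if h : i < n+1 then ((a ⟨i, h⟩ : Fin (n+1)) : ℕ) else 0

lemma dmap_val {n : ℕ} (a : Fin (n+1) → Fin (n+1)) (i : Fin (n+1)) :
    dmap n a (i : ℕ) = ((a i : Fin (n+1)) : ℕ) := by
  simp [dmap, i.isLt]

lemma dmap_injOn {n : ℕ} (a b : Fin (n+1) → Fin (n+1)) (h : dmap n a = dmap n b) : a = b := by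
  funext i
  have h1 := congrFun h (i : ℕ)
  rw [dmap_val, dmap_val] at h1
  exact Fin.ext h1

set_option maxHeartbeats 1000000 in
/-- under m1, m2 > 0, ρ ≥ (m_i/i!)^{1/i} for i ≥ 3, 0 < r < n/2,
k = n - r, x = 2m1 r/(m2(n-2r)), xρ ≤ 1/2 and 2kρ³x²/m1 ≤ 1/2, picking an
M-assembly uniformly among the p(n,k) assemblies of size n with k components:
P(L₁ ≥ 4) ≤ (2kρ⁴x³/m1)·2c₀√(2πr), c₀ = e/√(2π); equivalently (multiplying
through by p(n,k)): #(assemblies with L₁ ≥ 4) ≤ u₄(n,r)·p(n,k). -/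
theorem stmt_17 (m : ℕ → ℝ) (hm : ∀ i, 0 ≤ m i) (h1 : 0 < m 1) (h2 : 0 < m 2)
    (ρ : ℝ) (hρ0 : 0 ≤ ρ) (hρ : ∀ i, 3 ≤ i → m i / (i ! : ℝ) ≤ ρ ^ i)
    (n r k : ℕ) (hr : 0 < r) (hrn : 2 * r < n) (hk : k = n - r)
    (x : ℝ) (hx : x = 2 * m 1 * (r : ℝ) / (m 2 * ((n : ℝ) - 2 * r)))
    (hxρ : x * ρ ≤ 1 / 2)
    (hsmall : 2 * (k : ℝ) * ρ ^ 3 * x ^ 2 / m 1 ≤ 1 / 2) :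
    assemblyCountL1ge4 m n k ≤
      (2 * (k : ℝ) * ρ ^ 4 * x ^ 3 / m 1) *
        (2 * (Real.exp 1 / Real.sqrt (2 * Real.pi)) * Real.sqrt (2 * Real.pi * r)) *
        assemblyCount m n k := by
  classical
  have hn3 : 3 ≤ n := by omega
  set q : ℕ := n - 2*r with hqdef
  have hq1 : 1 ≤ q := by omega
  have hr1 : 1 ≤ r := hr
  have hkrq : k = r + q := by omega
  have hrk : r ≤ k := by omega
  have hk1 : 1 ≤ k := by omega
  have h2rn : 2*r ≤ n := by omega
  have hrpos : (0:ℝ) < r := by exact_mod_cast hr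
  have hqcast : (q:ℝ) = (n:ℝ) - 2*(r:ℝ) := by
    rw [hqdef, Nat.cast_sub h2rn]; push_cast; ring
  have hnr2 : (0:ℝ) < (n:ℝ) - 2*(r:ℝ) := by
    have h := (Nat.cast_lt (α := ℝ)).mpr hrn
    push_cast at h; linarith
  have hxpos : 0 < x := by
    rw [hx]
    exact div_pos (by positivity) (mul_pos h2 hnr2)
  have hxeq : x * (m 2 * ((n:ℝ) - 2*(r:ℝ))) = 2 * m 1 * (r:ℝ) := by
    rw [hx]; field_simp
  -- the tilted weights
  set f : ℕ → ℝ := fun i => m i * x ^ i / (i ! : ℝ) with hfdef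
  have hf0 : ∀ i, 0 ≤ f i := fun i => by
    rw [hfdef]
    exact div_nonneg (mul_nonneg (hm i) (pow_nonneg hxpos.le i)) (Nat.cast_nonneg _)
  set N1 : Finset ℕ := Ico 1 (n+1) with hN1
  set N3 : Finset ℕ := Ico 1 4 with hN3
  have hN31 : N3 ⊆ N1 := by rw [hN1, hN3]; exact Ico_subset_Ico le_rfl (by omega)
  set S : ℝ := ∑ i ∈ N1, f i with hSdef
  set G : ℝ := ∑ i ∈ N3, f i with hGdef
  set T : (ℕ → ℕ) → ℝ := fun e => (Nat.multinomial N1 e : ℝ) * ∏ i ∈ N1, f i ^ e i with hTdef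
  have hT0 : ∀ e, 0 ≤ T e := fun e => mul_nonneg (Nat.cast_nonneg _)
    (prod_nonneg fun i _ => pow_nonneg (hf0 i) _)
  set c : ℝ := (n ! : ℝ) / (x ^ n * (k ! : ℝ)) with hcdef
  have hcpos : 0 < c := by
    rw [hcdef]
    exact div_pos (by exact_mod_cast Nat.factorial_pos n)
      (mul_pos (pow_pos hxpos n) (by exact_mod_cast Nat.factorial_pos k))
  have hins : range (n+1) = insert 0 N1 := by
    ext j; simp only [hN1, Finset.mem_Ico, Finset.mem_range, Finset.mem_insert]; omega
  have h0N1 : (0:ℕ) ∉ N1 := by simp [hN1]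
  have hd0 : ∀ a : Fin (n+1) → Fin (n+1), dmap n a 0 = ((a 0 : Fin (n+1)) : ℕ) := by
    intro a
    have := dmap_val a 0
    simpa using this
  -- conversion of the Fin-indexed sums
  have hconvmul : ∀ a : Fin (n+1) → Fin (n+1),
      (∑ i : Fin (n+1), (i:ℕ) * ((a i : Fin (n+1)) : ℕ)) =
        ∑ j ∈ N1, j * dmap n a j := by
    intro a
    have h1 : (∑ i : Fin (n+1), (i:ℕ) * ((a i : Fin (n+1)) : ℕ)) =
        ∑ j ∈ range (n+1), j * dmap n a j := by
      rw [← Fin.sum_univ_eq_sum_range (fun j => j * dmap n a j) (n+1)]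
      exact Finset.sum_congr rfl fun i _ => by rw [dmap_val]
    rw [h1, hins, Finset.sum_insert h0N1, Nat.zero_mul, Nat.zero_add]
  have hconvsum : ∀ a : Fin (n+1) → Fin (n+1), ((a 0 : Fin (n+1)) : ℕ) = 0 →
      (∑ i : Fin (n+1), ((a i : Fin (n+1)) : ℕ)) = ∑ j ∈ N1, dmap n a j := by
    intro a ha0
    have h1 : (∑ i : Fin (n+1), ((a i : Fin (n+1)) : ℕ)) =
        ∑ j ∈ range (n+1), dmap n a j := by
      rw [← Fin.sum_univ_eq_sum_range (fun j => dmap n a j) (n+1)]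
      exact Finset.sum_congr rfl fun i _ => by rw [dmap_val]
    rw [h1, hins, Finset.sum_insert h0N1, hd0 a, ha0, Nat.zero_add]
  have hprodconv : ∀ a : Fin (n+1) → Fin (n+1), ((a 0 : Fin (n+1)) : ℕ) = 0 →
      (∏ i : Fin (n+1), (m (i:ℕ) ^ ((a i : Fin (n+1)):ℕ) /
          (((((a i : Fin (n+1)):ℕ)) ! : ℝ) * (((i:ℕ) ! : ℝ)) ^ ((a i : Fin (n+1)):ℕ)))) =
      ∏ j ∈ N1, (m j ^ (dmap n a j) / (((dmap n a j) ! : ℝ) * ((j ! : ℝ)) ^ (dmap n a j))) := by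
    intro a ha0
    have h1 : (∏ i : Fin (n+1), (m (i:ℕ) ^ ((a i : Fin (n+1)):ℕ) /
          (((((a i : Fin (n+1)):ℕ)) ! : ℝ) * (((i:ℕ) ! : ℝ)) ^ ((a i : Fin (n+1)):ℕ)))) =
        ∏ j ∈ range (n+1),
          (m j ^ (dmap n a j) / (((dmap n a j) ! : ℝ) * ((j ! : ℝ)) ^ (dmap n a j))) := by
      rw [← Fin.prod_univ_eq_prod_range
        (fun j => m j ^ (dmap n a j) / (((dmap n a j) ! : ℝ) * ((j ! : ℝ)) ^ (dmap n a j))) (n+1)]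
      exact Finset.prod_congr rfl fun i _ => by rw [dmap_val]
    rw [h1, hins, Finset.prod_insert h0N1, hd0 a, ha0]
    simp
  -- the per-term identity
  have hterm : ∀ a : Fin (n+1) → Fin (n+1),
      (∑ i : Fin (n+1), (i:ℕ) * ((a i : Fin (n+1)):ℕ)) = n →
      (∑ i : Fin (n+1), ((a i : Fin (n+1)):ℕ)) = k →
      ((a 0 : Fin (n+1)):ℕ) = 0 →
      ((n ! : ℝ) * ∏ i : Fin (n + 1), m (i:ℕ) ^ ((a i : Fin (n+1)):ℕ) /
          (((((a i : Fin (n+1)):ℕ)) ! : ℝ) * (((i:ℕ) ! : ℝ)) ^ ((a i : Fin (n+1)):ℕ)))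
        = c * T (dmap n a) := by
    intro a ha1 ha2 ha3
    set d : ℕ → ℕ := dmap n a with hddef
    have hs1 : ∑ j ∈ N1, j * d j = n := by rw [← hconvmul a]; exact ha1
    have hs2 : ∑ j ∈ N1, d j = k := by rw [← hconvsum a ha3]; exact ha2
    rw [hprodconv a ha3]
    set P : ℝ := ∏ j ∈ N1, (m j ^ d j / ((j ! : ℝ)) ^ d j) with hPdef
    set D : ℝ := ∏ j ∈ N1, ((d j) ! : ℝ) with hDdef
    have hPD : ∏ j ∈ N1, (m j ^ d j / (((d j) ! : ℝ) * ((j ! : ℝ)) ^ d j)) = P / D := by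
      rw [hPdef, hDdef, ← Finset.prod_div_distrib]
      exact Finset.prod_congr rfl fun j _ => by
        rw [div_mul_eq_div_div_swap]
    have hfd : ∏ j ∈ N1, f j ^ d j = x ^ n * P := by
      have hstep : ∀ j ∈ N1, f j ^ d j =
          (m j ^ d j / ((j ! : ℝ)) ^ d j) * x ^ (j * d j) := by
        intro j _
        rw [hfdef]
        simp only []
        rw [div_pow, mul_pow, pow_mul]
        ring
      rw [Finset.prod_congr rfl hstep, Finset.prod_mul_distrib,
        Finset.prod_pow_eq_pow_sum, hs1, hPdef]
      ring
    have hDmult : D * (Nat.multinomial N1 d : ℝ) = (k ! : ℝ) := by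
      have hspec := Nat.multinomial_spec N1 d
      rw [hs2] at hspec
      rw [hDdef]
      exact_mod_cast congrArg (Nat.cast : ℕ → ℝ) hspec
    have hD0 : D ≠ 0 := by
      rw [hDdef]
      exact ne_of_gt (Finset.prod_pos fun j _ => by exact_mod_cast Nat.factorial_pos _)
    have hmul0 : (Nat.multinomial N1 d : ℝ) ≠ 0 := by
      exact_mod_cast (Nat.multinomial_pos N1 d).ne'
    have hxn : x ^ n ≠ 0 := (pow_pos hxpos n).ne'
    rw [hPD, hTdef]
    simp only []
    rw [hfd, hcdef, ← hDmult]
    field_simp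
  -- Part I: bound the bad sum by c * (S^k - G^k)
  have hPsub : Finset.piAntidiag N3 k ⊆ Finset.piAntidiag N1 k := by
    intro e he
    rw [Finset.mem_piAntidiag] at he ⊢
    refine ⟨?_, fun i hi => hN31 (he.2 i hi)⟩
    rw [← he.1]
    exact (Finset.sum_subset hN31 fun i _ hni => by
      by_contra h
      exact hni (he.2 i h)).symm
  have hsupp3 : ∀ e ∈ Finset.piAntidiag N3 k, ∀ i ∈ N1, i ∉ N3 → e i = 0 := by
    intro e he i _ hi3
    rw [Finset.mem_piAntidiag] at he
    by_contra h
    exact hi3 (he.2 i h)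
  have hGk : ∑ e ∈ Finset.piAntidiag N3 k, T e = G ^ k := by
    rw [hGdef, Finset.sum_pow_eq_sum_piAntidiag N3 f k]
    refine Finset.sum_congr rfl fun e he => ?_
    have hprod : ∏ i ∈ N3, f i ^ e i = ∏ i ∈ N1, f i ^ e i :=
      Finset.prod_subset hN31 fun i hi1 hi3 => by rw [hsupp3 e he i hi1 hi3, pow_zero]
    have hmult : Nat.multinomial N1 e = Nat.multinomial N3 e := by
      have hfac : ∏ i ∈ N3, (e i)! = ∏ i ∈ N1, (e i)! :=
        Finset.prod_subset hN31 fun i hi1 hi3 => by rw [hsupp3 e he i hi1 hi3]; rfl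
      have hsum : ∑ i ∈ N3, e i = ∑ i ∈ N1, e i :=
        Finset.sum_subset hN31 fun i hi1 hi3 => hsupp3 e he i hi1 hi3
      have hpos : 0 < ∏ i ∈ N3, (e i)! := Finset.prod_pos fun i _ => Nat.factorial_pos _
      apply Nat.eq_of_mul_eq_mul_left hpos
      calc (∏ i ∈ N3, (e i)!) * Nat.multinomial N1 e
          = (∏ i ∈ N1, (e i)!) * Nat.multinomial N1 e := by rw [hfac]
        _ = (∑ i ∈ N1, e i)! := Nat.multinomial_spec N1 e
        _ = (∑ i ∈ N3, e i)! := by rw [hsum]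
        _ = (∏ i ∈ N3, (e i)!) * Nat.multinomial N3 e := (Nat.multinomial_spec N3 e).symm
    rw [hTdef]
    simp only []
    rw [hmult, hprod]
  have hSk' : ∑ e ∈ Finset.piAntidiag N1 k, T e = S ^ k := by
    rw [hSdef, Finset.sum_pow_eq_sum_piAntidiag N1 f k]
  have hdiffsum : ∑ e ∈ Finset.piAntidiag N1 k \ Finset.piAntidiag N3 k, T e
      = S ^ k - G ^ k := by
    have h := Finset.sum_sdiff (f := T) hPsub
    rw [hGk, hSk'] at h
    linarith
  have hpart1 : assemblyCountL1ge4 m n k ≤ c * (S ^ k - G ^ k) := by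
    rw [assemblyCountL1ge4]
    have hrw : ∀ a ∈ Finset.univ.filter (fun a : Fin (n + 1) → Fin (n + 1) =>
        (∑ i : Fin (n + 1), i.1 * (a i).1) = n ∧ (∑ i : Fin (n + 1), (a i).1) = k ∧
          (a 0).1 = 0 ∧ (∃ i : Fin (n + 1), 4 ≤ i.1 ∧ (a i).1 ≠ 0)),
        ((n ! : ℝ) * ∏ i : Fin (n + 1), m i.1 ^ (a i).1 /
          (((a i).1 ! : ℝ) * ((i.1 ! : ℝ)) ^ (a i).1)) = c * T (dmap n a) := by
      intro a ha
      rw [Finset.mem_filter] at ha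
      exact hterm a ha.2.1 ha.2.2.1 ha.2.2.2.1
    rw [Finset.sum_congr rfl hrw, ← Finset.mul_sum]
    set A := Finset.univ.filter (fun a : Fin (n + 1) → Fin (n + 1) =>
        (∑ i : Fin (n + 1), i.1 * (a i).1) = n ∧ (∑ i : Fin (n + 1), (a i).1) = k ∧
          (a 0).1 = 0 ∧ (∃ i : Fin (n + 1), 4 ≤ i.1 ∧ (a i).1 ≠ 0)) with hA
    have hinj : ∀ a ∈ A, ∀ b ∈ A, dmap n a = dmap n b → a = b :=
      fun a _ b _ h => dmap_injOn a b h
    have himg : A.image (dmap n) ⊆ Finset.piAntidiag N1 k \ Finset.piAntidiag N3 k := by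
      intro e he
      rw [Finset.mem_image] at he
      obtain ⟨a, haA, rfl⟩ := he
      rw [hA, Finset.mem_filter] at haA
      obtain ⟨-, ha1, ha2, ha3, ha4⟩ := haA
      rw [Finset.mem_sdiff]
      constructor
      · rw [Finset.mem_piAntidiag]
        refine ⟨by rw [← hconvsum a ha3]; exact ha2, ?_⟩
        intro i hi
        rw [hN1, Finset.mem_Ico]
        constructor
        · rcases Nat.eq_zero_or_pos i with h0 | h0
          · exfalso; rw [h0] at hi; rw [hd0 a, ha3] at hi; exact hi rfl
          · exact h0
        · by_contra h
          push_neg at h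
          rw [dmap, dif_neg (by omega)] at hi
          exact hi rfl
      · intro hmem
        rw [Finset.mem_piAntidiag] at hmem
        obtain ⟨i0, hi4, hi0⟩ := ha4
        have h5 : dmap n a (i0 : ℕ) ≠ 0 := by rw [dmap_val]; exact hi0
        have := hmem.2 _ h5
        rw [hN3, Finset.mem_Ico] at this
        omega
    calc c * ∑ a ∈ A, T (dmap n a)
        = c * ∑ e ∈ A.image (dmap n), T e := by rw [Finset.sum_image hinj]
      _ ≤ c * ∑ e ∈ Finset.piAntidiag N1 k \ Finset.piAntidiag N3 k, T e := by
          exact mul_le_mul_of_nonneg_left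
            (Finset.sum_le_sum_of_subset_of_nonneg himg fun e _ _ => hT0 e) hcpos.le
      _ = c * (S ^ k - G ^ k) := by rw [hdiffsum]

  -- Part II: S^k - G^k ≤ k (S-G) S^(k-1)
  have hGS : G ≤ S := by
    rw [hSdef, hGdef]
    exact Finset.sum_le_sum_of_subset_of_nonneg hN31 fun i _ _ => hf0 i
  have hG0 : 0 ≤ G := Finset.sum_nonneg fun i _ => hf0 i
  have hS0 : 0 ≤ S := le_trans hG0 hGS
  have hpart2 : S ^ k - G ^ k ≤ (k:ℝ) * (S - G) * S ^ (k-1) := by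
    have hgeo := geom_sum₂_mul S G k
    rw [← hgeo]
    have hbound : (∑ i ∈ range k, S ^ i * G ^ (k - 1 - i)) ≤ (k:ℝ) * S ^ (k-1) := by
      calc ∑ i ∈ range k, S ^ i * G ^ (k - 1 - i)
          ≤ ∑ _i ∈ range k, S ^ (k-1) := by
            refine Finset.sum_le_sum fun i hi => ?_
            rw [Finset.mem_range] at hi
            calc S ^ i * G ^ (k - 1 - i) ≤ S ^ i * S ^ (k - 1 - i) :=
                  mul_le_mul_of_nonneg_left (pow_le_pow_left₀ hG0 hGS _) (pow_nonneg hS0 i)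
              _ = S ^ (k-1) := by rw [← pow_add]; congr 1; omega
        _ = (k:ℝ) * S ^ (k-1) := by
            rw [Finset.sum_const, Finset.card_range, nsmul_eq_mul]
    calc (∑ i ∈ range k, S ^ i * G ^ (k - 1 - i)) * (S - G)
        ≤ ((k:ℝ) * S ^ (k-1)) * (S - G) :=
          mul_le_mul_of_nonneg_right hbound (by linarith)
      _ = (k:ℝ) * (S - G) * S ^ (k-1) := by ring
  -- Part III: geometric bounds
  have hfle : ∀ i, 3 ≤ i → f i ≤ (x*ρ) ^ i := by
    intro i hi
    have h := hρ i hi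
    have he : f i = (m i / (i ! : ℝ)) * x ^ i := by rw [hfdef]; ring
    rw [he]
    calc (m i / (i ! : ℝ)) * x ^ i ≤ ρ ^ i * x ^ i :=
          mul_le_mul_of_nonneg_right h (pow_nonneg hxpos.le i)
      _ = (x*ρ) ^ i := by rw [mul_pow]; ring
  have htnn : 0 ≤ x * ρ := mul_nonneg hxpos.le hρ0
  have hSGF : S - G ≤ 2 * (x*ρ)^4 := by
    have hsplit := Finset.sum_Ico_consecutive f
      (show 1 ≤ 4 by norm_num) (show 4 ≤ n+1 by omega)
    have hFle : (∑ i ∈ Ico 4 (n+1), f i) ≤ 2*(x*ρ)^4 := by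
      calc (∑ i ∈ Ico 4 (n+1), f i) ≤ ∑ i ∈ Ico 4 (n+1), (x*ρ)^i := by
            refine Finset.sum_le_sum fun i hi => ?_
            rw [Finset.mem_Ico] at hi
            exact hfle i (by omega)
        _ ≤ 2*(x*ρ)^4 := geom_tail (x*ρ) htnn hxρ 4 (n+1)
    have : S - G = ∑ i ∈ Ico 4 (n+1), f i := by
      rw [hSdef, hGdef, hN1, hN3]; linarith
    linarith
  -- Part IV: S^(k-1) bound
  have hf1 : f 1 = m 1 * x := by rw [hfdef]; norm_num
  have hf2 : f 2 = m 2 * x^2 / 2 := by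
    rw [hfdef]; norm_num [Nat.factorial]
  set B : ℝ := f 1 + f 2 with hBdef
  have hf2pos : 0 < f 2 := by rw [hf2]; positivity
  have hf1pos : 0 < f 1 := by rw [hf1]; exact mul_pos h1 hxpos
  have hBpos : 0 < B := by rw [hBdef]; linarith
  set E3 : ℝ := ∑ i ∈ Ico 3 (n+1), f i with hE3def
  have hE30 : 0 ≤ E3 := Finset.sum_nonneg fun i _ => hf0 i
  have hE3le : E3 ≤ 2*(x*ρ)^3 := by
    calc E3 ≤ ∑ i ∈ Ico 3 (n+1), (x*ρ)^i := by
          refine Finset.sum_le_sum fun i hi => ?_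
          rw [Finset.mem_Ico] at hi
          exact hfle i hi.1
      _ ≤ 2*(x*ρ)^3 := geom_tail (x*ρ) htnn hxρ 3 (n+1)
  have hSB : S = B + E3 := by
    have h13 := Finset.sum_Ico_consecutive f
      (show 1 ≤ 3 by norm_num) (show 3 ≤ n+1 by omega)
    have h12 : ∑ i ∈ Ico 1 3, f i = f 1 + f 2 := by
      rw [Finset.sum_Ico_eq_sum_range]
      norm_num [Finset.sum_range_succ]
    rw [hSdef, hN1, hBdef, hE3def, ← h13, h12]
  have hkE3 : (k:ℝ) * (E3 / B) ≤ 1/2 := by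
    have hBf1 : m 1 * x ≤ B := by rw [hBdef, hf1]; linarith
    have hstep : E3 / B ≤ 2*(x*ρ)^3 / (m 1 * x) :=
      div_le_div₀ (by positivity) hE3le (mul_pos h1 hxpos) hBf1
    calc (k:ℝ) * (E3/B) ≤ (k:ℝ) * (2*(x*ρ)^3/(m 1 * x)) :=
          mul_le_mul_of_nonneg_left hstep (Nat.cast_nonneg k)
      _ = 2*(k:ℝ)*ρ^3*x^2 / m 1 := by
          rw [mul_pow]
          field_simp
      _ ≤ 1/2 := hsmall
  have hSk : S ^ k ≤ Real.exp (1/2 : ℝ) * B ^ k := by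
    have h1e : B + E3 ≤ B * Real.exp (E3/B) := by
      have hh := Real.add_one_le_exp (E3/B)
      have h := mul_le_mul_of_nonneg_left hh hBpos.le
      calc B + E3 = B * (E3/B + 1) := by field_simp; ring
        _ ≤ B * Real.exp (E3/B) := h
    calc S^k = (B+E3)^k := by rw [hSB]
      _ ≤ (B * Real.exp (E3/B))^k := pow_le_pow_left₀ (by linarith) h1e k
      _ = B^k * Real.exp (E3/B) ^ k := mul_pow _ _ _
      _ = B^k * Real.exp ((k:ℝ)*(E3/B)) := by rw [← Real.exp_nat_mul]
      _ ≤ B^k * Real.exp (1/2 : ℝ) :=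
          mul_le_mul_of_nonneg_left (Real.exp_le_exp.mpr hkE3) (pow_nonneg hBpos.le k)
      _ = Real.exp (1/2 : ℝ) * B^k := mul_comm _ _
  have hSk1 : S ^ (k-1) ≤ Real.exp (1/2 : ℝ) * B ^ k / (m 1 * x) := by
    have hf1S : m 1 * x ≤ S := by
      rw [← hf1, hSdef]
      exact Finset.single_le_sum (fun i _ => hf0 i) (by rw [hN1]; simp; omega)
    rw [le_div_iff₀ (mul_pos h1 hxpos)]
    calc S^(k-1) * (m 1 * x) ≤ S^(k-1) * S :=
          mul_le_mul_of_nonneg_left hf1S (pow_nonneg hS0 _)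
      _ = S^k := by rw [← pow_succ]; congr 1; omega
      _ ≤ Real.exp (1/2 : ℝ) * B^k := hSk
  -- Part V: lower bound on assemblyCount
  have hchoosef : c * ((k.choose r : ℝ) * f 1 ^ q * f 2 ^ r) ≤ assemblyCount m n k := by
    set astar : Fin (n+1) → Fin (n+1) := fun i =>
      if (i:ℕ) = 1 then (⟨q, by omega⟩ : Fin (n+1))
      else if (i:ℕ) = 2 then (⟨r, by omega⟩ : Fin (n+1))
      else (⟨0, by omega⟩ : Fin (n+1)) with hastar
    have hdstar : ∀ j, j < n+1 → dmap n astar j =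
        (if j = 1 then q else if j = 2 then r else 0) := by
      intro j hj
      rw [dmap, dif_pos hj, hastar]
      simp only []
      split_ifs <;> rfl
    have ha3s : ((astar 0 : Fin (n+1)) : ℕ) = 0 := by
      rw [hastar]; simp
    have h12N1 : ({1, 2} : Finset ℕ) ⊆ N1 := by
      intro j hj
      rw [hN1, Finset.mem_Ico]
      rw [Finset.mem_insert, Finset.mem_singleton] at hj
      omega
    have hsum12 : ∀ w : ℕ → ℕ → ℕ, (∀ j, w j 0 = 0) →
        ∑ j ∈ N1, w j (dmap n astar j) = w 1 q + w 2 r := by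
      intro w hw
      rw [← Finset.sum_subset h12N1 (fun j hj hj2 => by
        rw [hN1, Finset.mem_Ico] at hj
        rw [Finset.mem_insert, Finset.mem_singleton] at hj2
        push_neg at hj2
        rw [hdstar j hj.2, if_neg hj2.1, if_neg hj2.2, hw])]
      rw [Finset.sum_pair (by norm_num : (1:ℕ) ≠ 2),
        hdstar 1 (by omega), hdstar 2 (by omega)]
      norm_num
    have ha1s : (∑ i : Fin (n+1), (i:ℕ) * ((astar i : Fin (n+1)) : ℕ)) = n := by
      rw [hconvmul astar, hsum12 (fun j cnt => j * cnt) (fun j => Nat.mul_zero j)]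
      omega
    have ha2s : (∑ i : Fin (n+1), ((astar i : Fin (n+1)) : ℕ)) = k := by
      rw [hconvsum astar ha3s, hsum12 (fun _ cnt => cnt) (fun _ => rfl)]
      omega
    have hmem : astar ∈ Finset.univ.filter (fun a : Fin (n + 1) → Fin (n + 1) =>
        (∑ i : Fin (n + 1), i.1 * (a i).1) = n ∧ (∑ i : Fin (n + 1), (a i).1) = k ∧
          (a 0).1 = 0) := by
      rw [Finset.mem_filter]
      exact ⟨Finset.mem_univ _, ha1s, ha2s, ha3s⟩
    have hwas : ((n ! : ℝ) * ∏ i : Fin (n + 1), m (i:ℕ) ^ ((astar i : Fin (n+1)):ℕ) /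
          (((((astar i : Fin (n+1)):ℕ)) ! : ℝ) * (((i:ℕ) ! : ℝ)) ^ ((astar i : Fin (n+1)):ℕ)))
        = c * T (dmap n astar) := hterm astar ha1s ha2s ha3s
    have hTval : T (dmap n astar) = (k.choose r : ℝ) * f 1 ^ q * f 2 ^ r := by
      have hprodstar : ∏ j ∈ N1, f j ^ (dmap n astar j) = f 1 ^ q * f 2 ^ r := by
        rw [← Finset.prod_subset h12N1 (fun j hj hj2 => by
          rw [hN1, Finset.mem_Ico] at hj
          rw [Finset.mem_insert, Finset.mem_singleton] at hj2
          push_neg at hj2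
          rw [hdstar j hj.2, if_neg hj2.1, if_neg hj2.2, pow_zero])]
        rw [Finset.prod_pair (by norm_num : (1:ℕ) ≠ 2),
          hdstar 1 (by omega), hdstar 2 (by omega)]
        norm_num
      have hmultstar : Nat.multinomial N1 (dmap n astar) = k.choose r := by
        have hfacstar : ∏ j ∈ N1, (dmap n astar j)! = q ! * r ! := by
          rw [← Finset.prod_subset h12N1 (fun j hj hj2 => by
            rw [hN1, Finset.mem_Ico] at hj
            rw [Finset.mem_insert, Finset.mem_singleton] at hj2
            push_neg at hj2
            rw [hdstar j hj.2, if_neg hj2.1, if_neg hj2.2]; rfl)]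
          rw [Finset.prod_pair (by norm_num : (1:ℕ) ≠ 2),
            hdstar 1 (by omega), hdstar 2 (by omega)]
          norm_num
        have hsumstar : ∑ j ∈ N1, dmap n astar j = k := by
          rw [hsum12 (fun _ cnt => cnt) (fun _ => rfl)]; omega
        have hspec := Nat.multinomial_spec N1 (dmap n astar)
        rw [hsumstar, hfacstar] at hspec
        -- hspec : q! * r! * multinomial = k!
        have hcs := Nat.choose_mul_factorial_mul_factorial hrk
        rw [show k - r = q by omega] at hcs
        -- hcs : k.choose r * r! * q! = k!
        have hpos : 0 < q ! * r ! := Nat.mul_pos (Nat.factorial_pos q) (Nat.factorial_pos r)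
        apply Nat.eq_of_mul_eq_mul_left hpos
        rw [hspec, ← hcs]
        ring
      rw [hTdef]
      simp only []
      rw [hmultstar, hprodstar]
      ring
    rw [assemblyCount, ← hTval, ← hwas]
    refine Finset.single_le_sum (f := fun a : Fin (n+1) → Fin (n+1) =>
      (n ! : ℝ) * ∏ i : Fin (n + 1), m i.1 ^ (a i).1 /
        (((a i).1 ! : ℝ) * ((i.1 ! : ℝ)) ^ (a i).1)) (fun a _ => ?_) hmem
    refine mul_nonneg (Nat.cast_nonneg _) (Finset.prod_nonneg fun i _ => ?_)
    refine div_nonneg (pow_nonneg (hm _) _) ?_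
    exact mul_nonneg (Nat.cast_nonneg _) (pow_nonneg (Nat.cast_nonneg _) _)
  -- Part VI: Stirling comparison
  have hkpos : (0:ℝ) < (k:ℝ) := by exact_mod_cast hk1
  have hqpos : (0:ℝ) < (q:ℝ) := by exact_mod_cast hq1
  have hstir : Real.exp (1/2:ℝ) * B ^ k ≤
      2 * Real.exp 1 * Real.sqrt r * ((k.choose r : ℝ) * f 1 ^ q * f 2 ^ r) := by
    have hb := binom_stirling r q hr1 hq1
    rw [← hkrq] at hb
    have hfq : f 2 * (q:ℝ) = f 1 * (r:ℝ) := by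
      rw [hf1, hf2, hqcast]
      linear_combination (x/2) * hxeq
    have hkcast : (k:ℝ) = (r:ℝ) + (q:ℝ) := by rw [hkrq]; push_cast; ring
    have hf1k : f 1 * (k:ℝ) = B * (q:ℝ) := by
      rw [hkcast, hBdef]; linear_combination -hfq
    have hf2k : f 2 * (k:ℝ) = B * (r:ℝ) := by
      rw [hkcast, hBdef]; linear_combination hfq
    have hf1e : f 1 = B * (q:ℝ) / (k:ℝ) := by
      rw [eq_div_iff hkpos.ne']; exact hf1k
    have hf2e : f 2 = B * (r:ℝ) / (k:ℝ) := by
      rw [eq_div_iff hkpos.ne']; exact hf2k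
    have hBsplit : B ^ k = B ^ q * B ^ r := by rw [hkrq, pow_add]; ring
    have hksplit : (k:ℝ) ^ k = (k:ℝ) ^ q * (k:ℝ) ^ r := by rw [hkrq, pow_add]; ring
    have hgoal : (2 * Real.exp 1 * Real.sqrt r * ((k.choose r : ℝ)) * (r:ℝ)^r * (q:ℝ)^q)
        * ((B / (k:ℝ))^k)
        = 2 * Real.exp 1 * Real.sqrt r * ((k.choose r:ℝ) * f 1 ^ q * f 2 ^ r) := by
      rw [hf1e, hf2e, div_pow, div_pow, div_pow, mul_pow, mul_pow, hBsplit, hksplit]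
      field_simp
    calc Real.exp (1/2:ℝ) * B^k
        = (Real.exp (1/2:ℝ) * (k:ℝ)^k) * ((B/(k:ℝ))^k) := by
          rw [div_pow]
          field_simp
      _ ≤ (2 * Real.exp 1 * Real.sqrt r * ((k.choose r:ℝ)) * (r:ℝ)^r * (q:ℝ)^q)
            * ((B/(k:ℝ))^k) := by
          refine mul_le_mul_of_nonneg_right ?_ (by positivity)
          exact hb
      _ = 2 * Real.exp 1 * Real.sqrt r * ((k.choose r:ℝ) * f 1 ^ q * f 2 ^ r) := hgoal
  -- final combination
  have hC2nn : (0:ℝ) ≤ 2 * (k : ℝ) * ρ ^ 4 * x ^ 3 / m 1 := by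
    apply div_nonneg _ h1.le
    have := pow_nonneg hxpos.le 3
    positivity
  have h2er : (0:ℝ) ≤ 2 * Real.exp 1 * Real.sqrt r := by positivity
  have hkF : (k:ℝ) * (S - G) * S^(k-1) ≤
      (2 * (k : ℝ) * ρ ^ 4 * x ^ 3 / m 1) * (Real.exp (1/2:ℝ) * B^k) := by
    have hSG0 : 0 ≤ S - G := by linarith
    have hA1 : (k:ℝ)*(S-G) ≤ (k:ℝ)*(2*(x*ρ)^4) :=
      mul_le_mul_of_nonneg_left hSGF (Nat.cast_nonneg k)
    have hA2 : (0:ℝ) ≤ (k:ℝ)*(2*(x*ρ)^4) := by positivity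
    calc (k:ℝ) * (S - G) * S^(k-1)
        ≤ ((k:ℝ) * (2*(x*ρ)^4)) * (Real.exp (1/2:ℝ) * B^k / (m 1 * x)) :=
          mul_le_mul hA1 hSk1 (pow_nonneg hS0 _) hA2
      _ = (2 * (k : ℝ) * ρ ^ 4 * x ^ 3 / m 1) * (Real.exp (1/2:ℝ) * B^k) := by
          rw [mul_pow]
          field_simp
  have hconst : 2 * (Real.exp 1 / Real.sqrt (2*Real.pi)) * Real.sqrt (2*Real.pi*(r:ℝ))
      = 2 * Real.exp 1 * Real.sqrt r := by
    rw [Real.sqrt_mul (by positivity : (0:ℝ) ≤ 2*Real.pi) (r:ℝ)]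
    have h0 : Real.sqrt (2*Real.pi) ≠ 0 := ne_of_gt (Real.sqrt_pos.mpr (by positivity))
    field_simp
  calc assemblyCountL1ge4 m n k ≤ c * (S^k - G^k) := hpart1
    _ ≤ c * ((k:ℝ)*(S-G)*S^(k-1)) := mul_le_mul_of_nonneg_left hpart2 hcpos.le
    _ ≤ c * ((2 * (k : ℝ) * ρ ^ 4 * x ^ 3 / m 1) * (Real.exp (1/2:ℝ) * B^k)) :=
        mul_le_mul_of_nonneg_left hkF hcpos.le
    _ ≤ c * ((2 * (k : ℝ) * ρ ^ 4 * x ^ 3 / m 1) *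
          (2 * Real.exp 1 * Real.sqrt r * ((k.choose r:ℝ) * f 1 ^ q * f 2 ^ r))) :=
        mul_le_mul_of_nonneg_left (mul_le_mul_of_nonneg_left hstir hC2nn) hcpos.le
    _ = (2 * (k : ℝ) * ρ ^ 4 * x ^ 3 / m 1) * (2 * Real.exp 1 * Real.sqrt r) *
          (c * ((k.choose r:ℝ) * f 1 ^ q * f 2 ^ r)) := by ring
    _ ≤ (2 * (k : ℝ) * ρ ^ 4 * x ^ 3 / m 1) * (2 * Real.exp 1 * Real.sqrt r) *
          assemblyCount m n k :=
        mul_le_mul_of_nonneg_left hchoosef (mul_nonneg hC2nn h2er)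
    _ = (2 * (k : ℝ) * ρ ^ 4 * x ^ 3 / m 1) *
          (2 * (Real.exp 1 / Real.sqrt (2 * Real.pi)) * Real.sqrt (2 * Real.pi * r)) *
          assemblyCount m n k := by rw [hconst]
end

section
/- Consider an assembly with m_1, m_2, m_3 > 0 and M of positive radius of convergence, with hypotheses as in the quantitative low-rank setup (0 < r < n/2, x = 2m_1 r/(m_2(n-2r)), xρ ≤ 1/2, 2kρ³x²/m_1 ≤ 1/2 where k = n-r, y = (2m_1m_3/(3m_2²)) r²/(n-2r), u_4 = (2kρ⁴x³/m_1)·2c_0√(2πr), z = (e^y - 1) + u_4 < 1). Then (n)_{2r} m_1^{n-2r} m_2^r / (r! 2^r) ≤ p(n, n-r) ≤ (n)_{2r} m_1^{n-2r} m_2^r / (r! 2^r) · (1 + z/(1-z)). -/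
open Finset
open scoped Nat

lemma fac_mul_pow_le (b d : ℕ) : b ! * b ^ d ≤ (b + d)! := by
  induction d with
  | zero => simp
  | succ d ih =>
    rw [pow_succ, ← mul_assoc]
    calc b ! * b ^ d * b ≤ (b + d)! * (b + d + 1) := Nat.mul_le_mul ih (by omega)
      _ = (b + (d + 1))! := by
          rw [show b + (d+1) = (b+d) + 1 by omega, Nat.factorial_succ]; ring

lemma fac_le_fac_mul_pow (r t : ℕ) (h : t ≤ r) : r ! ≤ (r - t)! * r ^ t := by
  induction t with
  | zero => simp
  | succ t ih =>
    have h' : t ≤ r := by omega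
    have e : r - t = (r - (t+1)) + 1 := by omega
    calc r ! ≤ (r - t)! * r ^ t := ih h'
      _ = (r - (t+1))! * (r - t) * r ^ t := by rw [e, Nat.factorial_succ, ← e]; ring
      _ ≤ (r - (t+1))! * r * r ^ t := by
          have : r - t ≤ r := by omega
          exact Nat.mul_le_mul (Nat.mul_le_mul_left _ this) le_rfl
      _ = (r - (t+1))! * r ^ (t+1) := by rw [pow_succ]; ring

lemma sum_split_three {M : Type*} [AddCommMonoid M] {n : ℕ} (hn : 3 ≤ n) (f : Fin (n+1) → M) :
    ∑ i, f i = f ⟨0, by omega⟩ + f ⟨1, by omega⟩ + f ⟨2, by omega⟩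
      + ∑ i ∈ Finset.univ.filter (fun i : Fin (n+1) => 3 ≤ i.1), f i := by
  classical
  rw [← Finset.sum_filter_add_sum_filter_not Finset.univ (fun i : Fin (n+1) => 3 ≤ i.1) f]
  have hset : Finset.univ.filter (fun i : Fin (n+1) => ¬ 3 ≤ i.1)
      = {(⟨0, by omega⟩ : Fin (n+1)), ⟨1, by omega⟩, ⟨2, by omega⟩} := by
    ext i
    simp only [Finset.mem_filter, Finset.mem_univ, true_and, Finset.mem_insert,
      Finset.mem_singleton, Fin.ext_iff]
    omega
  rw [hset]
  rw [Finset.sum_insert (by simp [Fin.ext_iff]), Finset.sum_insert (by simp [Fin.ext_iff]),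
    Finset.sum_singleton]
  abel

lemma prod_split_three {M : Type*} [CommMonoid M] {n : ℕ} (hn : 3 ≤ n) (f : Fin (n+1) → M) :
    ∏ i, f i = f ⟨0, by omega⟩ * f ⟨1, by omega⟩ * f ⟨2, by omega⟩
      * ∏ i ∈ Finset.univ.filter (fun i : Fin (n+1) => 3 ≤ i.1), f i := by
  classical
  rw [← Finset.prod_filter_mul_prod_filter_not Finset.univ (fun i : Fin (n+1) => 3 ≤ i.1) f]
  have hset : Finset.univ.filter (fun i : Fin (n+1) => ¬ 3 ≤ i.1)
      = {(⟨0, by omega⟩ : Fin (n+1)), ⟨1, by omega⟩, ⟨2, by omega⟩} := by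
    ext i
    simp only [Finset.mem_filter, Finset.mem_univ, true_and, Finset.mem_insert,
      Finset.mem_singleton, Fin.ext_iff]
    omega
  rw [hset]
  rw [Finset.prod_insert (by simp [Fin.ext_iff]), Finset.prod_insert (by simp [Fin.ext_iff]),
    Finset.prod_singleton]
  rw [mul_comm, ← mul_assoc]

lemma geom_sum_le_two {q : ℝ} (h0 : 0 ≤ q) (h : q ≤ 1/2) (N : ℕ) :
    ∑ i ∈ Finset.range N, q ^ i ≤ 2 := by
  induction N with
  | zero => norm_num
  | succ N ih =>
    rw [geom_sum_succ]
    have hS : 0 ≤ ∑ i ∈ Finset.range N, q ^ i :=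
      Finset.sum_nonneg fun i _ => pow_nonneg h0 i
    nlinarith

set_option maxHeartbeats 2000000 in
lemma perTerm (m : ℕ → ℝ) (hm : ∀ i, 0 ≤ m i) (h1 : 0 < m 1) (h2 : 0 < m 2)
    (n r : ℕ) (hr : 0 < r) (hrn : 2 * r < n)
    (v : ℕ → ℝ)
    (hv : ∀ j, v j = (m j / (j ! : ℝ)) * (2 * (r:ℝ) / m 2) ^ (j - 1)
      * (m 1 / ((n:ℝ) - 2*r)) ^ (j - 2))
    (a : Fin (n+1) → Fin (n+1))
    (c1 : (∑ i : Fin (n + 1), i.1 * (a i).1) = n)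
    (c2 : (∑ i : Fin (n + 1), (a i).1) = n - r)
    (c3 : ((a 0).1) = 0) :
    (n ! : ℝ) * (∏ i : Fin (n + 1),
      m i.1 ^ (a i).1 / (((a i).1 ! : ℝ) * ((i.1 ! : ℝ)) ^ (a i).1))
    ≤ ((n ! : ℝ) * m 1 ^ (n - 2*r) * m 2 ^ r / (((n - 2*r)! : ℝ) * (r ! : ℝ) * 2 ^ r)) *
      ∏ i ∈ Finset.univ.filter (fun i : Fin (n+1) => 3 ≤ i.1),
        v i.1 ^ (a i).1 / ((a i).1 ! : ℝ) := by
  classical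
  have hn3 : 3 ≤ n := by omega
  set S := Finset.univ.filter (fun i : Fin (n+1) => 3 ≤ i.1) with hS
  set t := ∑ i ∈ S, (i.1 - 1) * (a i).1 with ht
  set u := ∑ i ∈ S, (a i).1 with hu
  set d := ∑ i ∈ S, (i.1 - 2) * (a i).1 with hd
  have hmem3 : ∀ i ∈ S, 3 ≤ i.1 := fun i hi => (Finset.mem_filter.mp hi).2
  have htud : t = u + d := by
    rw [ht, hu, hd, ← Finset.sum_add_distrib]
    refine Finset.sum_congr rfl fun i hi => ?_
    have h3 := hmem3 i hi
    rw [show i.1 - 1 = 1 + (i.1 - 2) by omega, add_mul, one_mul]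
  have hA0 : (a ⟨0, by omega⟩).1 = 0 := by
    have e : (⟨0, by omega⟩ : Fin (n+1)) = 0 := by ext; simp
    rw [e]; exact c3
  have hsum3 : ∑ i ∈ S, i.1 * (a i).1 = t + u := by
    rw [ht, hu, ← Finset.sum_add_distrib]
    refine Finset.sum_congr rfl fun i hi => ?_
    have h3 := hmem3 i hi
    rw [show i.1 = (i.1 - 1) + 1 by omega]
    simp [Nat.add_sub_cancel, add_mul]
  rw [sum_split_three hn3 (fun i : Fin (n+1) => i.1 * (a i).1)] at c1
  rw [sum_split_three hn3 (fun i : Fin (n+1) => (a i).1)] at c2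
  rw [← hS] at c1 c2
  simp only [] at c1 c2
  rw [hsum3] at c1
  set b := n - 2*r with hb
  have hbpos : 0 < b := by omega
  have htr : t ≤ r := by omega
  have hA2 : (a ⟨2, by omega⟩).1 = r - t := by omega
  have hA1 : (a ⟨1, by omega⟩).1 = b + d := by omega
  have hbR : (0:ℝ) < (b:ℝ) := by exact_mod_cast hbpos
  have hNb : ((n:ℝ) - 2*(r:ℝ)) = (b:ℝ) := by
    rw [hb]; push_cast [Nat.cast_sub (show 2*r ≤ n by omega)]; ring
  -- abbreviations for the two common products
  set P := ∏ i ∈ S, (m i.1 / (i.1 ! : ℝ)) ^ (a i).1 with hP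
  set Q := ∏ i ∈ S, (1:ℝ) / ((a i).1 ! : ℝ) with hQ
  have hP0 : 0 ≤ P := Finset.prod_nonneg fun i _ => pow_nonneg (div_nonneg (hm _) (by positivity)) _
  have hQ0 : 0 ≤ Q := Finset.prod_nonneg fun i _ => by positivity
  have hPQ : ∏ i ∈ S, (m i.1 ^ (a i).1 / (((a i).1 ! : ℝ) * ((i.1 ! : ℝ)) ^ (a i).1))
      = P * Q := by
    rw [hP, hQ, ← Finset.prod_mul_distrib]
    refine Finset.prod_congr rfl fun i hi => ?_
    rw [div_pow]; ring
  have hRv : ∏ i ∈ S, (v i.1 ^ (a i).1 / ((a i).1 ! : ℝ))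
      = P * ((2*(r:ℝ)/m 2) ^ t * (m 1/((n:ℝ) - 2*r)) ^ d) * Q := by
    have step : ∀ i ∈ S, v i.1 ^ (a i).1 / ((a i).1 ! : ℝ)
        = ((m i.1/(i.1 ! : ℝ)) ^ (a i).1
            * ((2*(r:ℝ)/m 2) ^ ((i.1-1)*(a i).1) * (m 1/((n:ℝ)-2*r)) ^ ((i.1-2)*(a i).1)))
          * ((1:ℝ)/((a i).1 ! : ℝ)) := by
      intro i hi
      rw [hv i.1, mul_pow, mul_pow, ← pow_mul, ← pow_mul]
      ring
    rw [Finset.prod_congr rfl step, Finset.prod_mul_distrib, Finset.prod_mul_distrib,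
      Finset.prod_mul_distrib, Finset.prod_pow_eq_pow_sum, Finset.prod_pow_eq_pow_sum,
      ← ht, ← hd, ← hP, ← hQ]
  -- the core numeric inequality
  have key : b ! * r ! * b ^ d ≤ r ^ t * ((b + d)! * (r - t)!) := by
    calc b ! * r ! * b ^ d = (b ! * b ^ d) * r ! := by ring
      _ ≤ (b + d)! * ((r - t)! * r ^ t) :=
          Nat.mul_le_mul (fac_mul_pow_le b d) (fac_le_fac_mul_pow r t htr)
      _ = r ^ t * ((b + d)! * (r - t)!) := by ring
  have hden : (0:ℝ) < (b ! : ℝ) * (r ! : ℝ) * (b:ℝ)^d := by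
    apply mul_pos (mul_pos _ _) (pow_pos hbR d) <;>
      exact_mod_cast Nat.factorial_pos _
  have rkey : (1:ℝ)/(((b+d)! : ℝ) * ((r-t)! : ℝ))
      ≤ (r:ℝ)^t/((b ! : ℝ) * (r ! : ℝ) * (b:ℝ)^d) := by
    rw [div_le_div_iff₀ (by positivity) hden, one_mul]
    exact_mod_cast key
  have C0 : (0:ℝ) ≤ m 1 ^ (b+d) * m 2 ^ (r-t) / 2 ^ (r-t) := by positivity
  have core : m 1 ^ (b+d) / ((b+d)! : ℝ) * (m 2 ^ (r-t) / (((r-t)! : ℝ) * 2 ^ (r-t)))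
      ≤ (m 1 ^ b * m 2 ^ r / ((b ! : ℝ) * (r ! : ℝ) * 2 ^ r))
        * ((2*(r:ℝ)/m 2) ^ t * (m 1/((n:ℝ) - 2*r)) ^ d) := by
    have e1 : m 1 ^ (b+d) = m 1 ^ b * m 1 ^ d := pow_add _ _ _
    have e2 : m 2 ^ r = m 2 ^ (r-t) * m 2 ^ t := by rw [← pow_add]; congr 1; omega
    have e3 : (2:ℝ) ^ r = 2 ^ (r-t) * 2 ^ t := by rw [← pow_add]; congr 1; omega
    calc m 1 ^ (b+d) / ((b+d)! : ℝ) * (m 2 ^ (r-t) / (((r-t)! : ℝ) * 2 ^ (r-t)))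
        = (m 1 ^ (b+d) * m 2 ^ (r-t) / 2 ^ (r-t))
            * ((1:ℝ)/(((b+d)! : ℝ) * ((r-t)! : ℝ))) := by ring
      _ ≤ (m 1 ^ (b+d) * m 2 ^ (r-t) / 2 ^ (r-t))
            * ((r:ℝ)^t/((b ! : ℝ) * (r ! : ℝ) * (b:ℝ)^d)) :=
          mul_le_mul_of_nonneg_left rkey C0
      _ = (m 1 ^ b * m 2 ^ r / ((b ! : ℝ) * (r ! : ℝ) * 2 ^ r))
            * ((2*(r:ℝ)/m 2) ^ t * (m 1/((n:ℝ) - 2*r)) ^ d) := by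
          rw [hNb, e1, e2, e3, div_pow, div_pow, mul_pow]
          field_simp
  -- assemble
  have hfac1 : ((1:ℕ)! : ℝ) = 1 := by norm_num
  have hfac2 : ((2:ℕ)! : ℝ) = 2 := by norm_num [Nat.factorial]
  calc (n ! : ℝ) * (∏ i : Fin (n + 1),
        m i.1 ^ (a i).1 / (((a i).1 ! : ℝ) * ((i.1 ! : ℝ)) ^ (a i).1))
      = ((n ! : ℝ) * (P * Q))
          * (m 1 ^ (b+d) / ((b+d)! : ℝ) * (m 2 ^ (r-t) / (((r-t)! : ℝ) * 2 ^ (r-t)))) := by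
        rw [prod_split_three hn3 (fun i : Fin (n+1) =>
          m i.1 ^ (a i).1 / (((a i).1 ! : ℝ) * ((i.1 ! : ℝ)) ^ (a i).1)), ← hS, hPQ]
        simp only [hA0, hA1, hA2]
        norm_num [Nat.factorial]
        ring
    _ ≤ ((n ! : ℝ) * (P * Q))
          * ((m 1 ^ b * m 2 ^ r / ((b ! : ℝ) * (r ! : ℝ) * 2 ^ r))
            * ((2*(r:ℝ)/m 2) ^ t * (m 1/((n:ℝ) - 2*r)) ^ d)) := by
        refine mul_le_mul_of_nonneg_left core ?_
        have : (0:ℝ) ≤ (n ! : ℝ) := by positivity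
        exact mul_nonneg this (mul_nonneg hP0 hQ0)
    _ = ((n ! : ℝ) * m 1 ^ b * m 2 ^ r / ((b ! : ℝ) * (r ! : ℝ) * 2 ^ r)) *
        ∏ i ∈ S, (v i.1 ^ (a i).1 / ((a i).1 ! : ℝ)) := by
          rw [hRv]; ring

set_option maxHeartbeats 4000000 in
/-- quantitative two-sided bound for p(n, n-r) in the quantitative
low-rank setup: (n)_{2r} m1^{n-2r} m2^r/(r! 2^r) ≤ p(n,n-r) ≤
(n)_{2r} m1^{n-2r} m2^r/(r! 2^r)·(1 + z/(1-z)), where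
y = (2m1m3/(3m2²))·r²/(n-2r), u₄ = (2kρ⁴x³/m1)·2c₀√(2πr), z = (e^y-1)+u₄ < 1. -/
theorem stmt_18 (m : ℕ → ℝ) (hm : ∀ i, 0 ≤ m i)
    (h1 : 0 < m 1) (h2 : 0 < m 2) (h3 : 0 < m 3)
    (ρ : ℝ) (hρ0 : 0 ≤ ρ) (hρ : ∀ i, 3 ≤ i → m i / (i ! : ℝ) ≤ ρ ^ i)
    (n r k : ℕ) (hr : 0 < r) (hrn : 2 * r < n) (hk : k = n - r)
    (x : ℝ) (hx : x = 2 * m 1 * (r : ℝ) / (m 2 * ((n : ℝ) - 2 * r)))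
    (hxρ : x * ρ ≤ 1 / 2)
    (hsmall : 2 * (k : ℝ) * ρ ^ 3 * x ^ 2 / m 1 ≤ 1 / 2)
    (y u₄ z : ℝ)
    (hy : y = 2 * m 1 * m 3 / (3 * (m 2) ^ 2) * (r : ℝ) ^ 2 / ((n : ℝ) - 2 * r))
    (hu : u₄ = (2 * (k : ℝ) * ρ ^ 4 * x ^ 3 / m 1) *
        (2 * (Real.exp 1 / Real.sqrt (2 * Real.pi)) * Real.sqrt (2 * Real.pi * r)))
    (hz : z = (Real.exp y - 1) + u₄) (hz1 : z < 1) :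
    (n.descFactorial (2 * r) : ℝ) * m 1 ^ (n - 2 * r) * m 2 ^ r / ((r ! : ℝ) * 2 ^ r) ≤
        assemblyCount m n (n - r) ∧
      assemblyCount m n (n - r) ≤
        (n.descFactorial (2 * r) : ℝ) * m 1 ^ (n - 2 * r) * m 2 ^ r / ((r ! : ℝ) * 2 ^ r) *
          (1 + z / (1 - z)) := by
    classical
  have hn3 : 3 ≤ n := by omega
  have hrR : (1:ℝ) ≤ (r:ℝ) := by exact_mod_cast hr
  have hNpos : (0:ℝ) < (n:ℝ) - 2*r := by
    have : (2*r:ℝ) < (n:ℝ) := by exact_mod_cast hrn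
    linarith
  have hkR : ((k:ℕ):ℝ) = (n:ℝ) - (r:ℝ) := by
    rw [hk]; push_cast [Nat.cast_sub (show r ≤ n by omega)]; ring
  have hx0 : 0 ≤ x := by
    rw [hx]; positivity
  have hm2ne : m 2 ≠ 0 := ne_of_gt h2
  have hm1ne : m 1 ≠ 0 := ne_of_gt h1
  have hNne : ((n:ℝ) - 2*r) ≠ 0 := ne_of_gt hNpos
  -- the weight function
  set v : ℕ → ℝ := fun j => (m j / (j ! : ℝ)) * (2 * (r:ℝ) / m 2) ^ (j - 1)
      * (m 1 / ((n:ℝ) - 2*r)) ^ (j - 2) with hvdef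
  have hv : ∀ j, v j = (m j / (j ! : ℝ)) * (2 * (r:ℝ) / m 2) ^ (j - 1)
      * (m 1 / ((n:ℝ) - 2*r)) ^ (j - 2) := fun j => rfl
  have hv0 : ∀ j, 0 ≤ v j := by
    intro j
    apply mul_nonneg (mul_nonneg (div_nonneg (hm j) (by positivity)) _) _ <;> positivity
  -- T0 forms
  have hdesc : ((n - 2*r)! : ℝ) * (n.descFactorial (2*r) : ℝ) = (n ! : ℝ) := by
    exact_mod_cast Nat.factorial_mul_descFactorial (show 2*r ≤ n by omega)
  have hT0 : (n.descFactorial (2 * r) : ℝ) * m 1 ^ (n - 2 * r) * m 2 ^ r / ((r ! : ℝ) * 2 ^ r)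
      = (n ! : ℝ) * m 1 ^ (n - 2*r) * m 2 ^ r / (((n - 2*r)! : ℝ) * (r ! : ℝ) * 2 ^ r) := by
    rw [← hdesc]
    have : ((n-2*r)! : ℝ) ≠ 0 := by positivity
    field_simp
  have hT0nonneg : (0:ℝ) ≤ (n ! : ℝ) * m 1 ^ (n - 2*r) * m 2 ^ r
      / (((n - 2*r)! : ℝ) * (r ! : ℝ) * 2 ^ r) := by
    have := hm 1; have := hm 2; positivity
  set F := Finset.univ.filter (fun a : Fin (n + 1) → Fin (n + 1) =>
      (∑ i : Fin (n + 1), i.1 * (a i).1) = n ∧ (∑ i : Fin (n + 1), (a i).1) = n - r ∧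
        (a 0).1 = 0) with hF
  have hAC : assemblyCount m n (n - r) = ∑ a ∈ F,
      (n ! : ℝ) * ∏ i : Fin (n + 1),
        m i.1 ^ (a i).1 / (((a i).1 ! : ℝ) * ((i.1 ! : ℝ)) ^ (a i).1) := rfl
  have hterm0 : ∀ a : Fin (n+1) → Fin (n+1), 0 ≤ (n ! : ℝ) * ∏ i : Fin (n + 1),
        m i.1 ^ (a i).1 / (((a i).1 ! : ℝ) * ((i.1 ! : ℝ)) ^ (a i).1) := by
    intro a
    apply mul_nonneg (by positivity)
    exact Finset.prod_nonneg fun i _ =>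
      div_nonneg (pow_nonneg (hm _) _) (by positivity)
  -- the base configuration
  set a0 : Fin (n+1) → Fin (n+1) := fun i =>
    if i.1 = 1 then ⟨n - 2*r, by omega⟩ else if i.1 = 2 then ⟨r, by omega⟩
      else ⟨0, n.succ_pos⟩ with ha0
  have ha00 : ∀ i : Fin (n+1), i.1 ≠ 1 → i.1 ≠ 2 → (a0 i).1 = 0 := by
    intro i hi1 hi2; simp [ha0, hi1, hi2]
  have ha01 : ∀ (h : 1 < n+1), (a0 ⟨1, h⟩).1 = n - 2*r := by intro h; simp [ha0]
  have ha02 : ∀ (h : 2 < n+1), (a0 ⟨2, h⟩).1 = r := by intro h; simp [ha0]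
  have hSz : ∀ i ∈ Finset.univ.filter (fun i : Fin (n+1) => 3 ≤ i.1), (a0 i).1 = 0 := by
    intro i hi
    have h3 : 3 ≤ i.1 := (Finset.mem_filter.mp hi).2
    exact ha00 i (by omega) (by omega)
  have hmem : a0 ∈ F := by
    rw [hF, Finset.mem_filter]
    refine ⟨Finset.mem_univ _, ?_, ?_, ?_⟩
    · rw [sum_split_three hn3 (fun i : Fin (n+1) => i.1 * (a0 i).1)]
      have e0 : ∑ i ∈ Finset.univ.filter (fun i : Fin (n+1) => 3 ≤ i.1),
          i.1 * (a0 i).1 = 0 := Finset.sum_eq_zero fun i hi => by rw [hSz i hi, mul_zero]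
      rw [e0]
      simp only [ha01, ha02]
      rw [ha00 ⟨0, by omega⟩ (by simp) (by simp)]
      simp; omega
    · rw [sum_split_three hn3 (fun i : Fin (n+1) => (a0 i).1)]
      have e0 : ∑ i ∈ Finset.univ.filter (fun i : Fin (n+1) => 3 ≤ i.1),
          (a0 i).1 = 0 := Finset.sum_eq_zero fun i hi => hSz i hi
      rw [e0, ha01, ha02, ha00 ⟨0, by omega⟩ (by simp) (by simp)]
      omega
    · exact ha00 0 (by simp [Fin.val_zero]) (by simp [Fin.val_zero])
  have hval : (n ! : ℝ) * (∏ i : Fin (n + 1),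
        m i.1 ^ (a0 i).1 / (((a0 i).1 ! : ℝ) * ((i.1 ! : ℝ)) ^ (a0 i).1))
      = (n ! : ℝ) * m 1 ^ (n - 2*r) * m 2 ^ r
        / (((n - 2*r)! : ℝ) * (r ! : ℝ) * 2 ^ r) := by
    rw [prod_split_three hn3 (fun i : Fin (n+1) =>
      m i.1 ^ (a0 i).1 / (((a0 i).1 ! : ℝ) * ((i.1 ! : ℝ)) ^ (a0 i).1))]
    have e0 : ∏ i ∈ Finset.univ.filter (fun i : Fin (n+1) => 3 ≤ i.1),
        (m i.1 ^ (a0 i).1 / (((a0 i).1 ! : ℝ) * ((i.1 ! : ℝ)) ^ (a0 i).1)) = 1 :=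
      Finset.prod_eq_one fun i hi => by rw [hSz i hi]; simp
    rw [e0]
    simp only [ha01, ha02]
    rw [ha00 ⟨0, by omega⟩ (by simp) (by simp)]
    norm_num [Nat.factorial]
    ring
  have hlow : (n ! : ℝ) * m 1 ^ (n - 2*r) * m 2 ^ r
        / (((n - 2*r)! : ℝ) * (r ! : ℝ) * 2 ^ r) ≤ assemblyCount m n (n - r) := by
    rw [hAC, ← hval]
    exact Finset.single_le_sum (fun a _ => hterm0 a) hmem
  -- upper bound
  set S3 := Finset.univ.filter (fun i : Fin (n+1) => 3 ≤ i.1) with hS3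
  set Psi : (Fin (n+1) → Fin (n+1)) → ℝ :=
    fun a => ∏ i ∈ S3, v i.1 ^ (a i).1 / ((a i).1 ! : ℝ) with hPsi
  have hper : ∀ a ∈ F, (n ! : ℝ) * (∏ i : Fin (n + 1),
        m i.1 ^ (a i).1 / (((a i).1 ! : ℝ) * ((i.1 ! : ℝ)) ^ (a i).1))
      ≤ ((n ! : ℝ) * m 1 ^ (n - 2*r) * m 2 ^ r
          / (((n - 2*r)! : ℝ) * (r ! : ℝ) * 2 ^ r)) * Psi a := by
    intro a ha
    rw [hF, Finset.mem_filter] at ha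
    exact perTerm m hm h1 h2 n r hr hrn v hv a ha.2.1 ha.2.2.1 ha.2.2.2
  -- zero-out map and product structure
  set zo : (Fin (n+1) → Fin (n+1)) → (Fin (n+1) → Fin (n+1)) :=
    fun a i => if 3 ≤ i.1 then a i else ⟨0, n.succ_pos⟩ with hzo
  set f' : Fin (n+1) → Fin (n+1) → ℝ := fun i c =>
    if 3 ≤ i.1 then v i.1 ^ c.1 / (c.1 ! : ℝ) else (if c = ⟨0, n.succ_pos⟩ then 1 else 0)
    with hf'
  have hf'0 : ∀ i c, 0 ≤ f' i c := by
    intro i c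
    rw [hf']
    dsimp only
    split
    · have := hv0 i.1; positivity
    · split <;> norm_num
  have hPsi_eq : ∀ a : Fin (n+1) → Fin (n+1), Psi a = ∏ i, f' i (zo a i) := by
    intro a
    rw [prod_split_three hn3 (fun i : Fin (n+1) => f' i (zo a i))]
    have z0 : ∀ (j : ℕ) (h : j < n+1), j < 3 → f' ⟨j,h⟩ (zo a ⟨j,h⟩) = 1 := by
      intro j h hj
      have hns : ¬ 3 ≤ j := by omega
      simp [hzo, hf', hns]
    rw [z0 0 (by omega) (by norm_num), z0 1 (by omega) (by norm_num),
      z0 2 (by omega) (by norm_num)]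
    rw [hPsi]
    simp only [one_mul]
    refine Finset.prod_congr rfl fun i hi => ?_
    have h3 : 3 ≤ i.1 := (Finset.mem_filter.mp hi).2
    rw [hf', hzo]
    simp only
    rw [if_pos h3, if_pos h3]
  -- injectivity of zo on F
  have hinj : ∀ a ∈ F, ∀ a' ∈ F, zo a = zo a' → a = a' := by
    intro a ha a' ha' he
    rw [hF, Finset.mem_filter] at ha ha'
    obtain ⟨-, c1, c2, c3⟩ := ha
    obtain ⟨-, c1', c2', c3'⟩ := ha'
    have hag : ∀ i : Fin (n+1), 3 ≤ i.1 → a i = a' i := by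
      intro i h3
      have := congrFun he i
      rw [hzo] at this
      simpa [if_pos h3] using this
    have hsame : ∀ (g : Fin (n+1) → ℕ), ∑ i ∈ S3, g i * (a i).1
        = ∑ i ∈ S3, g i * (a' i).1 := by
      intro g
      refine Finset.sum_congr rfl fun i hi => ?_
      rw [hag i (Finset.mem_filter.mp hi).2]
    rw [sum_split_three hn3 (fun i : Fin (n+1) => i.1 * (a i).1)] at c1
    rw [sum_split_three hn3 (fun i : Fin (n+1) => i.1 * (a' i).1)] at c1'
    rw [sum_split_three hn3 (fun i : Fin (n+1) => (a i).1)] at c2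
    rw [sum_split_three hn3 (fun i : Fin (n+1) => (a' i).1)] at c2'
    rw [← hS3] at c1 c1' c2 c2'
    have hJ1 : ∑ i ∈ S3, i.1 * (a i).1 = ∑ i ∈ S3, i.1 * (a' i).1 :=
      hsame (fun i => i.1)
    have hJ2 : ∑ i ∈ S3, (a i).1 = ∑ i ∈ S3, (a' i).1 := by
      have := hsame (fun _ => 1)
      simpa using this
    have h0 : (a ⟨0, by omega⟩).1 = 0 := by
      rw [show (⟨0, by omega⟩ : Fin (n+1)) = 0 from by ext; simp]; exact c3
    have h0' : (a' ⟨0, by omega⟩).1 = 0 := by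
      rw [show (⟨0, by omega⟩ : Fin (n+1)) = 0 from by ext; simp]; exact c3'
    simp only [] at c1 c1' c2 c2'
    have hv1 : (a ⟨1, by omega⟩).1 = (a' ⟨1, by omega⟩).1 := by omega
    have hv2 : (a ⟨2, by omega⟩).1 = (a' ⟨2, by omega⟩).1 := by omega
    funext i
    by_cases h3 : 3 ≤ i.1
    · exact hag i h3
    · have hi3 : i.1 = 0 ∨ i.1 = 1 ∨ i.1 = 2 := by omega
      apply Fin.ext
      rcases hi3 with h | h | h
      · have e : i = (⟨0, by omega⟩ : Fin (n+1)) := Fin.ext h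
        rw [e]; exact h0.trans h0'.symm
      · have e : i = (⟨1, by omega⟩ : Fin (n+1)) := Fin.ext h
        rw [e]; exact hv1
      · have e : i = (⟨2, by omega⟩ : Fin (n+1)) := Fin.ext h
        rw [e]; exact hv2
  -- the tail quantity
  set V : ℝ := 2 * (k:ℝ) * ρ ^ 4 * x ^ 3 / m 1 with hV
  have hV0 : 0 ≤ V := by
    rw [hV]
    exact div_nonneg (mul_nonneg (mul_nonneg (by positivity) (pow_nonneg hρ0 4))
      (pow_nonneg hx0 3)) h1.le
  -- row sums of f'
  have hrow : ∀ i : Fin (n+1), ∑ c, f' i c ≤ Real.exp (if 3 ≤ i.1 then v i.1 else 0) := by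
    intro i
    by_cases hc3 : 3 ≤ i.1
    · rw [if_pos hc3]
      have e : ∑ c : Fin (n+1), f' i c = ∑ j ∈ Finset.range (n+1), v i.1 ^ j / (j ! : ℝ) := by
        rw [← Fin.sum_univ_eq_sum_range (fun j => v i.1 ^ j / (j ! : ℝ)) (n+1)]
        refine Finset.sum_congr rfl fun c _ => ?_
        rw [hf']
        simp only
        rw [if_pos hc3]
      rw [e]
      exact Real.sum_le_exp_of_nonneg (hv0 _) _
    · rw [if_neg hc3]
      have e : ∑ c : Fin (n+1), f' i c = 1 := by
        rw [hf']
        simp only [hc3, if_false]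
        rw [Finset.sum_eq_single (⟨0, n.succ_pos⟩ : Fin (n+1)) (fun b _ hb => if_neg hb) (fun h => absurd (Finset.mem_univ _) h),
          if_pos rfl]
      rw [e, Real.exp_zero]
  have hrow0 : ∀ i : Fin (n+1), 0 ≤ ∑ c, f' i c :=
    fun i => Finset.sum_nonneg fun c _ => hf'0 i c
  -- geometric tail bound
  have hpt : ∀ i : ℕ, v (4+i) ≤ ((k:ℝ)/m 1 * (ρ^4 * x^3)) * (ρ*x)^i := by
    intro i
    have e1 : (2*(r:ℝ)/m 2) = x * (((n:ℝ)-2*r)/m 1) := by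
      rw [hx]; field_simp
    have eNk : ((n:ℝ)-2*r) ≤ (k:ℝ) := by rw [hkR]; linarith
    have hABnn : 0 ≤ (2*(r:ℝ)/m 2) ^ (3+i) * (m 1/((n:ℝ)-2*r)) ^ (2+i) :=
      mul_nonneg (pow_nonneg (div_nonneg (by positivity) h2.le) _)
        (pow_nonneg (div_nonneg h1.le hNpos.le) _)
    have hvj : v (4+i) = (m (4+i)/(((4+i)! : ℕ) : ℝ))
        * ((2*(r:ℝ)/m 2) ^ (3+i) * (m 1/((n:ℝ)-2*r)) ^ (2+i)) := by
      rw [hv, show 4+i-1 = 3+i by omega, show 4+i-2 = 2+i by omega]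
      ring
    have hAB : (2*(r:ℝ)/m 2) ^ (3+i) * (m 1/((n:ℝ)-2*r)) ^ (2+i)
        = x ^ (3+i) * (((n:ℝ)-2*r)/m 1) := by
      have hq : ((n:ℝ)-2*r)/m 1 * (m 1/((n:ℝ)-2*r)) = 1 := by field_simp
      have key : ∀ (X A B : ℝ) (j : ℕ), A*B = 1 → (X*A)^(j+1) * B^j = X^(j+1)*A := by
        intro X A B j h
        rw [mul_pow, pow_succ A, show X^(j+1)*(A^j*A)*B^j = X^(j+1)*A*(A*B)^j by
          rw [mul_pow]; ring, h, one_pow, mul_one]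
      rw [e1, show 3+i = (2+i)+1 by omega]
      exact key _ _ _ _ hq
    calc v (4+i) = (m (4+i)/(((4+i)! : ℕ) : ℝ))
          * ((2*(r:ℝ)/m 2) ^ (3+i) * (m 1/((n:ℝ)-2*r)) ^ (2+i)) := hvj
      _ ≤ ρ^(4+i) * ((2*(r:ℝ)/m 2) ^ (3+i) * (m 1/((n:ℝ)-2*r)) ^ (2+i)) :=
          mul_le_mul_of_nonneg_right (hρ (4+i) (by omega)) hABnn
      _ = ρ^(4+i) * (x ^ (3+i) * (((n:ℝ)-2*r)/m 1)) := by rw [hAB]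
      _ ≤ ρ^(4+i) * (x ^ (3+i) * ((k:ℝ)/m 1)) := by
          refine mul_le_mul_of_nonneg_left (mul_le_mul_of_nonneg_left ?_
            (pow_nonneg hx0 _)) (pow_nonneg hρ0 _)
          exact (div_le_div_iff_of_pos_right h1).mpr eNk
      _ = ((k:ℝ)/m 1 * (ρ^4 * x^3)) * (ρ*x)^i := by
          rw [pow_add, pow_add, mul_pow]; ring
  have hIcoeq : (Finset.range (n+1)).filter (fun j => 3 ≤ j) = Finset.Ico 3 (n+1) := by
    ext j
    simp only [Finset.mem_filter, Finset.mem_range, Finset.mem_Ico]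
    omega
  have hv3 : v 3 = y := by
    rw [hv 3, hy]
    norm_num [Nat.factorial]
    field_simp
    ring
  have hCnn : 0 ≤ (k:ℝ)/m 1 * (ρ^4 * x^3) :=
    mul_nonneg (div_nonneg (Nat.cast_nonneg k) h1.le)
      (mul_nonneg (pow_nonneg hρ0 4) (pow_nonneg hx0 3))
  have htail : ∑ j ∈ Finset.Ico 4 (n+1), v j ≤ V := by
    rw [Finset.sum_Ico_eq_sum_range]
    calc ∑ i ∈ Finset.range (n+1-4), v (4+i)
        ≤ ∑ i ∈ Finset.range (n+1-4), ((k:ℝ)/m 1 * (ρ^4 * x^3)) * (ρ*x)^i :=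
          Finset.sum_le_sum fun i _ => hpt i
      _ = ((k:ℝ)/m 1 * (ρ^4 * x^3)) * ∑ i ∈ Finset.range (n+1-4), (ρ*x)^i := by
          rw [Finset.mul_sum]
      _ ≤ ((k:ℝ)/m 1 * (ρ^4 * x^3)) * 2 :=
          mul_le_mul_of_nonneg_left
            (geom_sum_le_two (mul_nonneg hρ0 hx0) (by rw [mul_comm]; exact hxρ) _) hCnn
      _ = V := by rw [hV]; ring
  have hwsum : (∑ i : Fin (n+1), if 3 ≤ i.1 then v i.1 else 0) ≤ y + V := by
    rw [Fin.sum_univ_eq_sum_range (fun j => if 3 ≤ j then v j else 0) (n+1)]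
    rw [← Finset.sum_filter, hIcoeq]
    rw [Finset.sum_eq_sum_Ico_succ_bot (by omega : 3 < n+1)]
    rw [hv3]
    linarith [htail]
  -- summing Psi over F
  have hsumPsi : ∑ a ∈ F, Psi a ≤ Real.exp (y + V) := by
    calc ∑ a ∈ F, Psi a = ∑ a ∈ F, ∏ i, f' i (zo a i) :=
          Finset.sum_congr rfl fun a _ => hPsi_eq a
      _ = ∑ b ∈ F.image zo, ∏ i, f' i (b i) :=
          (Finset.sum_image (f := fun b : Fin (n+1) → Fin (n+1) => ∏ i, f' i (b i)) hinj).symm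
      _ ≤ ∑ b ∈ (Finset.univ : Finset (Fin (n+1) → Fin (n+1))), ∏ i, f' i (b i) :=
          Finset.sum_le_sum_of_subset_of_nonneg (Finset.subset_univ _)
            (fun b _ _ => Finset.prod_nonneg fun i _ => hf'0 i (b i))
      _ = ∏ i, ∑ c, f' i c := (Fintype.prod_sum f').symm
      _ ≤ ∏ i : Fin (n+1), Real.exp (if 3 ≤ i.1 then v i.1 else 0) :=
          Finset.prod_le_prod (fun i _ => hrow0 i) (fun i _ => hrow i)
      _ = Real.exp (∑ i : Fin (n+1), if 3 ≤ i.1 then v i.1 else 0) :=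
          (Real.exp_sum _ _).symm
      _ ≤ Real.exp (y + V) := Real.exp_le_exp.mpr hwsum
  -- analytic comparison with z
  have hy0 : 0 ≤ y := by
    rw [hy]
    have hnum : (0:ℝ) ≤ 2 * m 1 * m 3 := by
      have := h1.le; have := h3.le; nlinarith
    exact div_nonneg (mul_nonneg (div_nonneg hnum (by positivity)) (by positivity)) hNpos.le
  have hey1 : 0 ≤ Real.exp y - 1 := by nlinarith [Real.add_one_le_exp y]
  have hu40 : 0 ≤ u₄ := by
    rw [hu]
    exact mul_nonneg hV0 (by positivity)
  have hu41 : u₄ < 1 := by rw [hz] at hz1; linarith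
  have hVu : V * (2 * Real.exp 1) ≤ u₄ := by
    rw [hu]
    have hsq : Real.sqrt (2*Real.pi*(r:ℝ)) = Real.sqrt (2*Real.pi) * Real.sqrt (r:ℝ) :=
      Real.sqrt_mul (by positivity) _
    have hsπ : 0 < Real.sqrt (2*Real.pi) := Real.sqrt_pos.mpr (by positivity)
    have h1r : 1 ≤ Real.sqrt (r:ℝ) := Real.one_le_sqrt.mpr hrR
    have e : 2 * (Real.exp 1 / Real.sqrt (2*Real.pi)) * Real.sqrt (2*Real.pi*(r:ℝ))
        = 2 * Real.exp 1 * Real.sqrt (r:ℝ) := by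
      rw [hsq]
      field_simp
    rw [e]
    nlinarith [mul_le_mul_of_nonneg_left h1r
      (mul_nonneg hV0 (by positivity : (0:ℝ) ≤ 2*Real.exp 1)), hV0,
      Real.exp_pos 1, h1r]
  have he2 : (2:ℝ) ≤ Real.exp 1 := by nlinarith [Real.add_one_le_exp 1]
  have hV1 : V ≤ 1 := by nlinarith [hVu, hu41, hV0, he2, mul_le_mul_of_nonneg_left he2 hV0]
  have hexpV : Real.exp V - 1 ≤ V * Real.exp V := by
    have h := Real.add_one_le_exp (-V)
    rw [Real.exp_neg] at h
    have hEV := Real.exp_pos V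
    nlinarith [mul_le_mul_of_nonneg_right h hEV.le, inv_mul_cancel₀ (ne_of_gt hEV)]
  have heV1 : Real.exp V ≤ Real.exp 1 := Real.exp_le_exp.mpr hV1
  have hey2 : Real.exp y ≤ 2 := by rw [hz] at hz1; linarith
  have hkey : Real.exp y * (Real.exp V - 1) ≤ u₄ := by
    have e0 : 0 ≤ Real.exp V - 1 := by nlinarith [Real.add_one_le_exp V, hV0]
    calc Real.exp y * (Real.exp V - 1) ≤ 2 * (Real.exp V - 1) :=
          mul_le_mul_of_nonneg_right hey2 e0
      _ ≤ 2 * (V * Real.exp V) := by nlinarith [hexpV]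
      _ ≤ 2 * (V * Real.exp 1) := by nlinarith [hV0, heV1]
      _ = V * (2 * Real.exp 1) := by ring
      _ ≤ u₄ := hVu
  have hfin : Real.exp (y + V) ≤ 1 + z := by
    rw [Real.exp_add, hz]
    have expand : Real.exp y * Real.exp V
        = Real.exp y * (Real.exp V - 1) + Real.exp y := by ring
    rw [expand]
    linarith [hkey]
  have hz0 : 0 ≤ z := by rw [hz]; linarith [hey1, hu40]
  have hzz : z ≤ z/(1-z) := by
    rw [le_div_iff₀ (by linarith : (0:ℝ) < 1 - z)]
    nlinarith
  -- final assembly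
  have hup : assemblyCount m n (n - r) ≤ ((n ! : ℝ) * m 1 ^ (n - 2*r) * m 2 ^ r
      / (((n - 2*r)! : ℝ) * (r ! : ℝ) * 2 ^ r)) * (1 + z) := by
    rw [hAC]
    calc ∑ a ∈ F, (n ! : ℝ) * ∏ i : Fin (n + 1),
          m i.1 ^ (a i).1 / (((a i).1 ! : ℝ) * ((i.1 ! : ℝ)) ^ (a i).1)
        ≤ ∑ a ∈ F, ((n ! : ℝ) * m 1 ^ (n - 2*r) * m 2 ^ r
            / (((n - 2*r)! : ℝ) * (r ! : ℝ) * 2 ^ r)) * Psi a := Finset.sum_le_sum hper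
      _ = ((n ! : ℝ) * m 1 ^ (n - 2*r) * m 2 ^ r
            / (((n - 2*r)! : ℝ) * (r ! : ℝ) * 2 ^ r)) * ∑ a ∈ F, Psi a := by
          rw [Finset.mul_sum]
      _ ≤ ((n ! : ℝ) * m 1 ^ (n - 2*r) * m 2 ^ r
            / (((n - 2*r)! : ℝ) * (r ! : ℝ) * 2 ^ r)) * Real.exp (y + V) :=
          mul_le_mul_of_nonneg_left hsumPsi hT0nonneg
      _ ≤ ((n ! : ℝ) * m 1 ^ (n - 2*r) * m 2 ^ r
            / (((n - 2*r)! : ℝ) * (r ! : ℝ) * 2 ^ r)) * (1 + z) :=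
          mul_le_mul_of_nonneg_left hfin hT0nonneg
  constructor
  · rw [hT0]; exact hlow
  · rw [hT0]
    calc assemblyCount m n (n - r)
        ≤ ((n ! : ℝ) * m 1 ^ (n - 2*r) * m 2 ^ r
            / (((n - 2*r)! : ℝ) * (r ! : ℝ) * 2 ^ r)) * (1 + z) := hup
      _ ≤ ((n ! : ℝ) * m 1 ^ (n - 2*r) * m 2 ^ r
            / (((n - 2*r)! : ℝ) * (r ! : ℝ) * 2 ^ r)) * (1 + z/(1-z)) :=
          mul_le_mul_of_nonneg_left (by linarith [hzz]) hT0nonneg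
end
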